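/- arXiv:1208.5298 — 7 statements merged into one kernel-verified Lean document; each statement's English description precedes it below -/
import Mathlib

section
/- Let R ⊆ T be commutative rings. Suppose T has a maximal subring V (a proper subring maximal among proper subrings of T) such that V is integrally closed in T and some unit of R does not lie in V. Then R has a maximal subring. -/
/-- A ring is submaximal if it has a maximal subring. -/
def Submaximal (R : Type*) [CommRing R] : Prop :=
  ∃ S : Subring R, S ≠ ⊤ ∧ ∀ T : Subring R, S < T → T = ⊤

section Aux

variable {T : Type*} [CommRing T]

lemma exists_aeval_of_mem_closure (A : Subring T) (t z : T)
    (hz : z ∈ Subring.closure ((A : Set T) ∪ {t})) :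
    ∃ p : Polynomial ↥A, Polynomial.aeval t p = z := by
  have h1 : Set.range (algebraMap ↥A T) = (A : Set T) := by
    ext w
    constructor
    · rintro ⟨a, rfl⟩; exact a.2
    · intro hw; exact ⟨⟨w, hw⟩, rfl⟩
  have h2 : z ∈ (Algebra.adjoin ↥A ({t} : Set T)).toSubring := by
    rw [Algebra.adjoin_eq_ring_closure, h1]; exact hz
  have h3 : z ∈ Algebra.adjoin ↥A ({t} : Set T) := h2
  rw [Algebra.adjoin_singleton_eq_range_aeval] at h3
  obtain ⟨p, hp⟩ := h3
  exact ⟨p, hp⟩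

lemma pow_cancel {x y : T} (hxy : x * y = 1) {i n : ℕ} (hin : i ≤ n) :
    y ^ i * x ^ n = x ^ (n - i) := by
  have hxn : x ^ n = x ^ i * x ^ (n - i) := by
    rw [← pow_add, Nat.add_sub_cancel' hin]
  calc y ^ i * x ^ n = (x * y) ^ i * x ^ (n - i) := by rw [hxn, mul_pow]; ring
    _ = x ^ (n - i) := by rw [hxy, one_pow, one_mul]

lemma key_integral (V : Subring T) {x y : T} (hxy : x * y = 1)
    (hx : x ∈ Subring.closure ((V : Set T) ∪ {y})) :
    ∃ q : Polynomial T, q.Monic ∧ (∀ i, q.coeff i ∈ V) ∧ q.eval x = 0 := by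
  obtain ⟨p, hp⟩ := exists_aeval_of_mem_closure V y x hx
  set n := p.natDegree with hn
  set s : Polynomial T := ∑ i ∈ Finset.range (n + 1),
      Polynomial.C ((p.coeff i : T)) * Polynomial.X ^ (n - i) with hs
  refine ⟨Polynomial.X ^ (n + 1) - s, ?_, ?_, ?_⟩
  · apply Polynomial.monic_X_pow_sub
    refine lt_of_le_of_lt (Polynomial.degree_sum_le _ _) ?_
    rw [Finset.sup_lt_iff (by exact_mod_cast WithBot.bot_lt_coe (n + 1))]
    intro i _
    refine (Polynomial.degree_C_mul_X_pow_le _ _).trans_lt ?_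
    exact_mod_cast Nat.lt_succ_of_le (Nat.sub_le n i)
  · intro i
    rw [Polynomial.coeff_sub, Polynomial.coeff_X_pow]
    refine Subring.sub_mem _ ?_ ?_
    · split
      · exact V.one_mem
      · exact V.zero_mem
    · rw [Polynomial.finset_sum_coeff]
      refine Subring.sum_mem _ fun j _ => ?_
      rw [Polynomial.coeff_C_mul, Polynomial.coeff_X_pow]
      split
      · rw [mul_one]; exact (p.coeff j).2
      · rw [mul_zero]; exact V.zero_mem
  · have hx' : x = ∑ i ∈ Finset.range (n + 1), (p.coeff i : T) * y ^ i := by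
      rw [← hp, Polynomial.aeval_eq_sum_range]
      exact Finset.sum_congr rfl fun i _ => by rw [Algebra.smul_def]; rfl
    have hevs : Polynomial.eval x s =
        ∑ i ∈ Finset.range (n + 1), (p.coeff i : T) * x ^ (n - i) := by
      rw [hs, Polynomial.eval_finset_sum]
      exact Finset.sum_congr rfl fun i _ => by
        rw [Polynomial.eval_mul, Polynomial.eval_C, Polynomial.eval_pow, Polynomial.eval_X]
    rw [Polynomial.eval_sub, Polynomial.eval_pow, Polynomial.eval_X, hevs, sub_eq_zero]
    calc x ^ (n + 1) = (∑ i ∈ Finset.range (n + 1), (p.coeff i : T) * y ^ i) * x ^ n := by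
          rw [← hx', pow_succ]; ring
      _ = ∑ i ∈ Finset.range (n + 1), (p.coeff i : T) * x ^ (n - i) := by
          rw [Finset.sum_mul]
          refine Finset.sum_congr rfl fun i hi => ?_
          have hin : i ≤ n := Nat.lt_succ_iff.mp (Finset.mem_range.mp hi)
          rw [mul_assoc, pow_cancel hxy hin]

lemma key_decomp (V : Subring T) {x y r : T} (hxy : x * y = 1) (hy : y ∈ V)
    (hr : r ∈ Subring.closure ((V : Set T) ∪ {x})) :
    ∃ n : ℕ, r * y ^ n ∈ V ∧ (r * y ^ n) * x ^ n = r := by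
  obtain ⟨p, hp⟩ := exists_aeval_of_mem_closure V x r hr
  set n := p.natDegree with hn
  have hr' : r = ∑ i ∈ Finset.range (n + 1), (p.coeff i : T) * x ^ i := by
    rw [← hp, Polynomial.aeval_eq_sum_range]
    exact Finset.sum_congr rfl fun i _ => by rw [Algebra.smul_def]; rfl
  refine ⟨n, ?_, ?_⟩
  · rw [hr', Finset.sum_mul]
    refine Subring.sum_mem _ fun i hi => ?_
    have hin : i ≤ n := Nat.lt_succ_iff.mp (Finset.mem_range.mp hi)
    rw [mul_assoc, pow_cancel (show y * x = 1 by rw [mul_comm]; exact hxy) hin]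
    exact V.mul_mem (p.coeff i).2 (V.pow_mem hy _)
  · calc r * y ^ n * x ^ n = r * ((x * y) ^ n) := by rw [mul_pow]; ring
      _ = r := by rw [hxy, one_pow, mul_one]

lemma step3 {T : Type*} [CommRing T] (R V : Subring T) {x y : T} (hxR : x ∈ R) (hyR : y ∈ R)
    (hxy : x * y = 1) (hyV : y ∈ V)
    (htop : Subring.closure ((V : Set T) ∪ {x}) = ⊤) :
    Subring.closure ((V.comap R.subtype : Set ↥R) ∪ {⟨x, hxR⟩}) = ⊤ := by
  rw [eq_top_iff]
  intro r _
  have hrT : (r : T) ∈ Subring.closure ((V : Set T) ∪ {x}) := by rw [htop]; trivial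
  obtain ⟨n, hw, heq⟩ := key_decomp V hxy hyV hrT
  have hwR : (r : T) * y ^ n ∈ R := R.mul_mem r.2 (R.pow_mem hyR n)
  have hrw : r = (⟨(r : T) * y ^ n, hwR⟩ : ↥R) * (⟨x, hxR⟩ : ↥R) ^ n := by
    apply Subtype.ext
    push_cast
    exact heq.symm
  have hwW : (⟨(r : T) * y ^ n, hwR⟩ : ↥R) ∈ V.comap R.subtype := hw
  rw [hrw]
  have hb : (⟨x, hxR⟩ : ↥R) ∈ Subring.closure ((V.comap R.subtype : Set ↥R) ∪ {⟨x, hxR⟩}) :=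
    Subring.subset_closure (Set.mem_union_right _ rfl)
  exact mul_mem (Subring.subset_closure (Set.mem_union_left _ hwW)) (pow_mem hb n)

end Aux

set_option maxHeartbeats 1000000 in
theorem stmt0 {T : Type*} [CommRing T] [Nontrivial T] (R V : Subring T)
    (hVmax : V ≠ ⊤ ∧ ∀ W : Subring T, V < W → W = ⊤)
    (hVic : ∀ x : T, (∃ p : Polynomial T, p.Monic ∧ (∀ i, p.coeff i ∈ V) ∧ p.eval x = 0) → x ∈ V)
    (hunit : ∃ x : T, x ∈ R ∧ (∃ y ∈ R, x * y = 1) ∧ x ∉ V) :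
    Submaximal R := by
  obtain ⟨x, hxR, ⟨y, hyR, hxy⟩, hxV⟩ := hunit
  -- helper : for t ∉ V, closure (V ∪ {t}) = ⊤
  have hcl_top : ∀ t : T, t ∉ V → Subring.closure ((V : Set T) ∪ {t}) = ⊤ := by
    intro t ht
    apply hVmax.2
    refine lt_of_le_of_ne (fun v hv => Subring.subset_closure (Or.inl hv)) ?_
    intro h
    exact ht (h ▸ Subring.subset_closure (Or.inr rfl) : t ∈ V)
  -- Step 1 : y ∈ V
  have hyV : y ∈ V := by
    by_contra hyV
    have hx' : x ∈ Subring.closure ((V : Set T) ∪ {y}) := by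
      rw [hcl_top y hyV]; trivial
    exact hxV (hVic x (key_integral V hxy hx'))
  -- Step 2 : closure (V ∪ {x}) = ⊤
  have htop : Subring.closure ((V : Set T) ∪ {x}) = ⊤ := hcl_top x hxV
  have hcl : Subring.closure ((V.comap R.subtype : Set ↥R) ∪ {⟨x, hxR⟩}) = ⊤ :=
    step3 R V hxR hyR hxy hyV htop
  have hx'W : (⟨x, hxR⟩ : ↥R) ∉ V.comap R.subtype := hxV
  -- Step 4 : Zorn
  obtain ⟨M, hWM, hMmax⟩ := zorn_le_nonempty₀ {M : Subring ↥R | (⟨x, hxR⟩ : ↥R) ∉ M}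
    (fun c hcS hchain y0 hy0 => by
      refine ⟨sSup c, ?_, fun z hz => le_sSup hz⟩
      intro hmem
      rw [Subring.mem_sSup_of_directedOn ⟨y0, hy0⟩ hchain.directedOn] at hmem
      obtain ⟨M0, hM0c, hx'M0⟩ := hmem
      exact hcS hM0c hx'M0) (V.comap R.subtype) hx'W
  refine ⟨M, ?_, ?_⟩
  · intro h
    exact hMmax.1 (h ▸ trivial)
  · intro N hMN
    have hx'N : (⟨x, hxR⟩ : ↥R) ∈ N := by
      by_contra h
      exact hMN.not_ge (hMmax.2 h hMN.le)
    rw [eq_top_iff, ← hcl, Subring.closure_le]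
    rintro z (hz | hz)
    · exact hMN.le (hWM hz)
    · exact (Set.mem_singleton_iff.mp hz) ▸ hx'N
end

section
/- A commutative ring R is submaximal if and only if there exist a proper subring S of R and an element x ∈ R \ S such that S[x] = R. -/
theorem stmt1 {R : Type*} [CommRing R] [Nontrivial R] :
    Submaximal R ↔
      ∃ S : Subring R, S ≠ ⊤ ∧ ∃ x : R, x ∉ S ∧ Subring.closure (↑S ∪ {x}) = ⊤ := by
  constructor
  · rintro ⟨S, hS, hmax⟩
    obtain ⟨x, hx⟩ : ∃ x : R, x ∉ S := by
      by_contra h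
      push_neg at h
      exact hS ((Subring.eq_top_iff' S).2 h)
    refine ⟨S, hS, x, hx, hmax _ ?_⟩
    refine lt_of_le_of_ne ?_ ?_
    · intro y hy
      exact Subring.subset_closure (Set.mem_union_left _ hy)
    · intro h
      exact hx (h ▸ Subring.subset_closure (Set.mem_union_right _ rfl))
  · rintro ⟨S, hS, x, hx, hgen⟩
    -- Zorn: maximal subring containing S and not containing x
    set P : Set (Subring R) := {T | S ≤ T ∧ x ∉ T} with hP
    have hSP : S ∈ P := ⟨le_rfl, hx⟩
    have hub : ∀ c ⊆ P, IsChain (· ≤ ·) c → ∀ y ∈ c,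
        ∃ ub ∈ P, ∀ z ∈ c, z ≤ ub := by
      intro c hc hchain y hy
      refine ⟨sSup c, ⟨?_, ?_⟩, fun z hz => le_sSup hz⟩
      · exact (hc hy).1.trans (le_sSup hy)
      · intro hxc
        rw [Subring.mem_sSup_of_directedOn ⟨y, hy⟩ hchain.directedOn] at hxc
        obtain ⟨T, hT, hxT⟩ := hxc
        exact (hc hT).2 hxT
    obtain ⟨M, hSM, hMP, hMmax⟩ := zorn_le_nonempty₀ P hub S hSP
    · refine ⟨M, ?_, ?_⟩
      · intro h
        exact hMP.2 (h ▸ Subring.mem_top x)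
      · intro T hMT
        have hxT : x ∈ T := by
          by_contra hxT
          exact hMT.not_ge (hMmax ⟨hMP.1.trans hMT.le, hxT⟩ hMT.le)
        have : Subring.closure (↑S ∪ {x}) ≤ T := by
          rw [Subring.closure_le]
          rintro y (hy | rfl)
          · exact (hMP.1.trans hMT.le) hy
          · exact hxT
        rw [hgen] at this
        exact top_le_iff.1 this
end

section
/- Let R be a commutative ring of characteristic zero. If there exists a natural number n > 1 such that n is invertible in R, then R has a maximal subring. -/
open Polynomial

section Zorn

variable {R : Type*} [CommRing R]

lemma submaximal_of_absorbing {n : ℕ} (x : R) (hx : x * n = 1)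
    (A : Subring R) (hxA : x ∉ A) (habs : ∀ r : R, ∃ k : ℕ, (n : R) ^ k * r ∈ A) :
    Submaximal R := by
  obtain ⟨V, hAV, hVmax⟩ := zorn_le_nonempty₀ {V : Subring R | x ∉ V} (fun c hcs hchain y hy => by
      refine ⟨sSup c, ?_, fun z hz => le_sSup hz⟩
      intro hmem
      rw [Subring.mem_sSup_of_directedOn ⟨y, hy⟩ hchain.directedOn] at hmem
      obtain ⟨S, hSc, hxS⟩ := hmem
      exact hcs hSc hxS) A hxA
  refine ⟨V, ?_, ?_⟩
  · intro h
    exact hVmax.1 (h ▸ Subring.mem_top x)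
  · intro T hVT
    have hxT : x ∈ T := by
      by_contra hxT
      exact hVT.not_ge (hVmax.2 hxT hVT.le)
    rw [eq_top_iff]
    intro r _
    obtain ⟨k, hk⟩ := habs r
    have hr : r = x ^ k * ((n : R) ^ k * r) := by
      rw [← mul_assoc, ← mul_pow, hx, one_pow, one_mul]
    rw [hr]
    exact mul_mem (pow_mem hxT k) (hVT.le (hAV hk))

lemma absorbing_comap {D : Type*} [CommRing D] (τ : R →+* D) {n : ℕ} (x : R)
    (A : Subring D) (hxA : τ x ∉ A) (habs : ∀ d : D, ∃ k : ℕ, (n : D) ^ k * d ∈ A) :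
    ∃ B : Subring R, x ∉ B ∧ ∀ r : R, ∃ k : ℕ, (n : R) ^ k * r ∈ B := by
  refine ⟨A.comap τ, fun h => hxA h, fun r => ?_⟩
  obtain ⟨k, hk⟩ := habs (τ r)
  refine ⟨k, ?_⟩
  simp only [Subring.mem_comap, map_mul, map_pow, map_natCast]
  exact hk

end Zorn


/-- Pull out powers of a prime-ish integer `p ≥ 2` from a nonzero integer. -/
lemma int_pull_pow {p : ℕ} (hp : 2 ≤ p) (d : ℤ) (hd : d ≠ 0) :
    ∃ (e : ℕ) (d₀ : ℤ), ¬ (p : ℤ) ∣ d₀ ∧ d = (p : ℤ) ^ e * d₀ := by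
  suffices H : ∀ N : ℕ, ∀ d : ℤ, d ≠ 0 → d.natAbs ≤ N →
      ∃ (e : ℕ) (d₀ : ℤ), ¬ (p : ℤ) ∣ d₀ ∧ d = (p : ℤ) ^ e * d₀ from H d.natAbs d hd le_rfl
  intro N
  induction N with
  | zero =>
    intro d hd h0
    exact absurd (Int.natAbs_eq_zero.1 (by omega)) hd
  | succ N ih =>
    intro d hd hN
    by_cases hdvd : (p : ℤ) ∣ d
    · obtain ⟨d', rfl⟩ := hdvd
      have hd' : d' ≠ 0 := by rintro rfl; simp at hd
      have hlt : d'.natAbs ≤ N := by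
        have h1 : ((p : ℤ) * d').natAbs = p * d'.natAbs := by
          rw [Int.natAbs_mul]; simp
        have h2 : 1 ≤ d'.natAbs := Nat.one_le_iff_ne_zero.2 (Int.natAbs_ne_zero.2 hd')
        nlinarith [hN, h1]
      obtain ⟨e, d₀, h₀, hEq⟩ := ih d' hd' hlt
      exact ⟨e + 1, d₀, h₀, by rw [hEq]; ring⟩
    · exact ⟨0, d, hdvd, by ring⟩

/-- Pull out powers of `C p` from a nonzero multivariate integer polynomial. -/
lemma mv_pull_pow {σ : Type*} {p : ℕ} (hp : 2 ≤ p) (a : MvPolynomial σ ℤ) (ha : a ≠ 0) :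
    ∃ (e : ℕ) (a₀ : MvPolynomial σ ℤ),
      ¬ (MvPolynomial.C (p : ℤ) ∣ a₀) ∧ a = (MvPolynomial.C (p : ℤ)) ^ e * a₀ := by
  obtain ⟨m, hm⟩ := MvPolynomial.ne_zero_iff.1 ha
  suffices H : ∀ N : ℕ, ∀ b : MvPolynomial σ ℤ, MvPolynomial.coeff m b ≠ 0 →
      (MvPolynomial.coeff m b).natAbs ≤ N →
      ∃ (e : ℕ) (b₀ : MvPolynomial σ ℤ),
        ¬ (MvPolynomial.C (p : ℤ) ∣ b₀) ∧ b = (MvPolynomial.C (p : ℤ)) ^ e * b₀ from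
    H _ a hm le_rfl
  intro N
  induction N with
  | zero =>
    intro b hb h0
    exact absurd (Int.natAbs_eq_zero.1 (by omega)) hb
  | succ N ih =>
    intro b hb hN
    by_cases hdvd : MvPolynomial.C ((p : ℕ) : ℤ) ∣ b
    · obtain ⟨b', rfl⟩ := hdvd
      have hco : MvPolynomial.coeff m (MvPolynomial.C ((p : ℕ) : ℤ) * b')
          = (p : ℤ) * MvPolynomial.coeff m b' := MvPolynomial.coeff_C_mul m _ b'
      have hb' : MvPolynomial.coeff m b' ≠ 0 := by
        intro h0
        rw [hco, h0, mul_zero] at hb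
        exact hb rfl
      have hlt : (MvPolynomial.coeff m b').natAbs ≤ N := by
        have h1 : (MvPolynomial.coeff m (MvPolynomial.C ((p:ℕ):ℤ) * b')).natAbs
            = p * (MvPolynomial.coeff m b').natAbs := by
          rw [hco, Int.natAbs_mul]; simp
        have h2 : 1 ≤ (MvPolynomial.coeff m b').natAbs :=
          Nat.one_le_iff_ne_zero.2 (Int.natAbs_ne_zero.2 hb')
        nlinarith [hN, h1]
      obtain ⟨e, b₀, h₀, hEq⟩ := ih b' hb' hlt
      exact ⟨e + 1, b₀, h₀, by rw [hEq]; ring⟩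
    · exact ⟨0, b, hdvd, by ring⟩

lemma good_field (F : Type*) [Field F] [CharZero F] {n : ℕ} (hn : 1 < n) (x : F)
    (hx : x * n = 1) :
    ∃ A : Subring F, x ∉ A ∧ ∀ z : F, ∃ k : ℕ, (n : F) ^ k * z ∈ A := by
  have hnF : (n : F) ≠ 0 := Nat.cast_ne_zero.2 (by omega)
  set p := n.minFac with hpdef
  have hpprime : p.Prime := Nat.minFac_prime (by omega)
  have hpn : p ∣ n := n.minFac_dvd
  set m₁ := n / p with hm₁
  have hnm : n = p * m₁ := (Nat.mul_div_cancel' hpn).symm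
  have hp2 : 2 ≤ p := hpprime.two_le
  -- transcendence basis of F over ℚ
  obtain ⟨s, hs⟩ := exists_isTranscendenceBasis ℚ F
  set φ : MvPolynomial s ℤ →+* F := (MvPolynomial.aeval (Subtype.val : s → F)).toRingHom
    with hφdef
  have hφC : ∀ k : ℤ, φ (MvPolynomial.C k) = (k : F) := by
    intro k; simp [hφdef]
  have hφX : ∀ i : s, φ (MvPolynomial.X i) = (i : F) := by
    intro i; simp [hφdef]
  have hφ : Function.Injective φ := by
    have hcomp : ∀ q, φ q = (MvPolynomial.aeval (Subtype.val : s → F))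
        (MvPolynomial.map (Int.castRingHom ℚ) q) := by
      intro q
      induction q using MvPolynomial.induction_on with
      | C k => simp [hφdef]
      | add f g hf hg => simp only [map_add, hf, hg]
      | mul_X f i hf =>
        rw [map_mul, map_mul, map_mul, hf]
        congr 1
        rw [hφX, MvPolynomial.map_X, MvPolynomial.aeval_X]
    intro q₁ q₂ h
    rw [hcomp, hcomp] at h
    exact MvPolynomial.map_injective _ Int.cast_injective
      (algebraicIndependent_iff_injective_aeval.1 hs.1 h)
  set Cp : MvPolynomial s ℤ := MvPolynomial.C (p : ℤ) with hCpdef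
  have hCpPrime : Prime Cp := by
    rw [hCpdef, MvPolynomial.prime_C_iff]
    rw [Int.prime_iff_natAbs_prime]
    simpa using hpprime
  set 𝔭 : Ideal (MvPolynomial s ℤ) := Ideal.span {Cp} with h𝔭
  haveI h𝔭p : 𝔭.IsPrime := (Ideal.span_singleton_prime hCpPrime.ne_zero).2 hCpPrime
  set W := Localization.AtPrime 𝔭 with hW
  have hunits : ∀ y : 𝔭.primeCompl, IsUnit (φ y) := by
    rintro ⟨y, hy⟩
    refine isUnit_iff_ne_zero.2 (fun h0 => hy ?_)
    have hy0 : y = 0 := hφ (by simpa using h0)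
    rw [hy0]; exact zero_mem _
  set ψ : W →+* F := IsLocalization.lift (S := W) hunits with hψdef
  have hψa : ∀ q, ψ (algebraMap (MvPolynomial s ℤ) W q) = φ q :=
    fun q => IsLocalization.lift_eq hunits q
  set O : Subring F := ψ.range with hOdef
  have hmem : ∀ z : F, z ∈ O ↔ ∃ a b : MvPolynomial s ℤ, ¬ Cp ∣ b ∧ z * φ b = φ a := by
    intro z
    constructor
    · rintro ⟨w, rfl⟩
      obtain ⟨⟨a, b⟩, hab⟩ := IsLocalization.mk'_surjective 𝔭.primeCompl w
      refine ⟨a, b, fun hdvd => b.2 (Ideal.mem_span_singleton.2 hdvd), ?_⟩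
      rw [← hab, ← hψa b, ← map_mul, IsLocalization.mk'_spec, hψa]
    · rintro ⟨a, b, hb, heq⟩
      have hbmem : b ∈ 𝔭.primeCompl := fun hmem => hb (Ideal.mem_span_singleton.1 hmem)
      refine ⟨IsLocalization.mk' W a ⟨b, hbmem⟩, ?_⟩
      have hb0 : φ b ≠ 0 := (hunits ⟨b, hbmem⟩).ne_zero
      apply mul_right_cancel₀ hb0
      rw [heq, ← hψa b, ← map_mul, IsLocalization.mk'_spec, hψa]
  have hIntO : ∀ k : ℤ, (k : F) ∈ O := by
    intro k
    rw [hmem]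
    exact ⟨MvPolynomial.C k, 1, fun h => hCpPrime.not_unit (isUnit_of_dvd_one h),
      by rw [map_one, mul_one, hφC]⟩
  have hnpowO : ∀ j : ℕ, ((n : F)) ^ j ∈ O := by
    intro j
    have hcast : ((n : F)) ^ j = (((n ^ j : ℕ) : ℤ) : F) := by push_cast; ring
    rw [hcast]; exact hIntO _
  have hxO : x ∉ O := by
    rw [hmem]
    rintro ⟨a, b, hb, heq⟩
    apply hb
    have h1 : φ b = φ (MvPolynomial.C (n : ℤ) * a) := by
      rw [map_mul, hφC]
      calc φ b = ((n : F) * x) * φ b := by rw [mul_comm (n : F) x, hx, one_mul]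
        _ = (n : F) * (x * φ b) := by ring
        _ = (n : F) * φ a := by rw [heq]
        _ = ((n : ℤ) : F) * φ a := by push_cast; ring
    have hba : b = MvPolynomial.C (n : ℤ) * a := hφ h1
    rw [hba, hCpdef]
    refine Dvd.dvd.mul_right ?_ a
    exact map_dvd MvPolynomial.C (by exact_mod_cast hpn)
  -- the subalgebra generated by the transcendence basis
  set A₁ := Algebra.adjoin ℚ (Set.range (Subtype.val : s → F)) with hA₁def
  haveI halg : Algebra.IsAlgebraic A₁ F := hs.isAlgebraic
  have hfrac : ∀ c : F, c ∈ A₁ → ∃ (a : MvPolynomial s ℤ) (d : ℤ), d ≠ 0 ∧ c * (d : F) = φ a := by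
    intro c hc
    induction hc using Algebra.adjoin_induction with
    | mem z hz =>
      obtain ⟨i, rfl⟩ := hz
      exact ⟨MvPolynomial.X i, 1, one_ne_zero, by rw [hφX]; push_cast; ring⟩
    | algebraMap q =>
      refine ⟨MvPolynomial.C q.num, (q.den : ℤ), by exact_mod_cast q.den_nz, ?_⟩
      rw [hφC]
      have hq : q * ((q.den : ℤ) : ℚ) = (q.num : ℚ) := by
        have hden : ((q.den : ℚ)) ≠ 0 := Nat.cast_ne_zero.2 q.den_nz
        have h2 : (q.num : ℚ) / (q.den : ℚ) * (q.den : ℚ) = (q.num : ℚ) :=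
          div_mul_cancel₀ _ hden
        rw [Rat.num_div_den q] at h2
        push_cast
        exact h2
      calc (algebraMap ℚ F q) * ((q.den : ℤ) : F)
          = (algebraMap ℚ F) (q * ((q.den : ℤ) : ℚ)) := by rw [map_mul, map_intCast]
        _ = (algebraMap ℚ F) ((q.num : ℚ)) := by rw [hq]
        _ = ((q.num : ℤ) : F) := by rw [map_intCast]
    | add u v hu hv hU hV =>
      obtain ⟨a₁, d₁, hd₁, h₁⟩ := hU
      obtain ⟨a₂, d₂, hd₂, h₂⟩ := hV
      refine ⟨MvPolynomial.C d₂ * a₁ + MvPolynomial.C d₁ * a₂, d₁ * d₂,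
        mul_ne_zero hd₁ hd₂, ?_⟩
      rw [map_add, map_mul, map_mul, hφC, hφC, ← h₁, ← h₂]
      push_cast
      ring
    | mul u v hu hv hU hV =>
      obtain ⟨a₁, d₁, hd₁, h₁⟩ := hU
      obtain ⟨a₂, d₂, hd₂, h₂⟩ := hV
      refine ⟨a₁ * a₂, d₁ * d₂, mul_ne_zero hd₁ hd₂, ?_⟩
      rw [map_mul, ← h₁, ← h₂]
      push_cast
      ring
  have hA1abs : ∀ c : F, c ∈ A₁ → ∃ k : ℕ, (n : F) ^ k * c ∈ O := by
    intro c hc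
    obtain ⟨a, d, hd, hcd⟩ := hfrac c hc
    obtain ⟨e, d₀, hd₀, rfl⟩ := int_pull_pow hp2 d hd
    refine ⟨e, ?_⟩
    rw [hmem]
    refine ⟨(MvPolynomial.C ((m₁ : ℤ))) ^ e * a, MvPolynomial.C d₀, ?_, ?_⟩
    · intro hdvd
      apply hd₀
      have hco := map_dvd (MvPolynomial.constantCoeff) hdvd
      simpa [hCpdef] using hco
    · rw [map_mul, map_pow, hφC, hφC, ← hcd]
      push_cast [hnm]
      ring
  have hOmono : ∀ (c : F) (k k' : ℕ), k ≤ k' → (n : F) ^ k * c ∈ O → (n : F) ^ k' * c ∈ O := by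
    intro c k k' hkk' hk
    have hsplit : (n : F) ^ k' * c = (n : F) ^ (k' - k) * ((n : F) ^ k * c) := by
      rw [← mul_assoc, ← pow_add]
      congr 2
      omega
    rw [hsplit]
    exact O.mul_mem (hnpowO _) hk
  -- every element of F is algebraic over O
  have halgO : ∀ z : F, IsAlgebraic O z := by
    intro z
    obtain ⟨f, hf0, hfz⟩ := halg.isAlgebraic z
    set d := f.natDegree with hddef
    have hcoeff : ∀ i : ℕ, ∃ k : ℕ, (n : F) ^ k * ((f.coeff i : A₁) : F) ∈ O :=
      fun i => hA1abs _ (f.coeff i).2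
    choose kk hkk using hcoeff
    set K := (Finset.range (d + 1)).sup kk with hKdef
    have hscale : ∀ i : ℕ, (n : F) ^ K * ((f.coeff i : A₁) : F) ∈ O := by
      intro i
      by_cases hi : i ≤ d
      · exact hOmono _ _ _ (Finset.le_sup (Finset.mem_range.2 (by omega))) (hkk i)
      · have hz : f.coeff i = 0 := Polynomial.coeff_eq_zero_of_natDegree_lt (by omega)
        rw [hz]
        simpa using O.zero_mem
    set g : Polynomial O :=
      ∑ i ∈ Finset.range (d + 1), Polynomial.C (⟨_, hscale i⟩ : O) * Polynomial.X ^ i with hgdef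
    have hgcoeff : ∀ j : ℕ, j ≤ d → ((g.coeff j : F)) = (n : F) ^ K * ((f.coeff j : A₁) : F) := by
      intro j hj
      rw [hgdef, Polynomial.finset_sum_coeff]
      have hterm : ∀ i ∈ Finset.range (d + 1),
          (Polynomial.C (⟨_, hscale i⟩ : O) * Polynomial.X ^ i).coeff j
            = if i = j then (⟨_, hscale i⟩ : O) else 0 := by
        intro i _
        rw [Polynomial.coeff_C_mul, Polynomial.coeff_X_pow]
        by_cases hij : i = j
        · subst hij; simp
        · rw [if_neg (fun h => hij h.symm), if_neg hij, mul_zero]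
      rw [Finset.sum_congr rfl hterm, Finset.sum_ite_eq' (Finset.range (d + 1)) j,
        if_pos (Finset.mem_range.2 (Nat.lt_succ_of_le hj))]
    refine ⟨g, ?_, ?_⟩
    · intro hg0
      have h1 : ((g.coeff d : F)) = 0 := by rw [hg0]; simp
      rw [hgcoeff d le_rfl] at h1
      have h2 : ((f.coeff d : A₁) : F) ≠ 0 := by
        intro hcc
        exact (Polynomial.leadingCoeff_ne_zero.2 hf0) (by
          have := (ZeroMemClass.coe_eq_zero).1 hcc
          exact this)
      exact (mul_ne_zero (pow_ne_zero _ hnF) h2) h1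
    · have haevalg : (Polynomial.aeval z) g = (n : F) ^ K * ((Polynomial.aeval z) f) := by
        rw [Polynomial.aeval_eq_sum_range (p := f) z, hgdef, map_sum, Finset.mul_sum]
        refine Finset.sum_congr rfl (fun i _ => ?_)
        rw [map_mul, Polynomial.aeval_C, map_pow, Polynomial.aeval_X, Algebra.smul_def]
        rw [show (algebraMap O F) (⟨_, hscale i⟩ : O) = (n : F) ^ K * ((f.coeff i : A₁) : F)
          from rfl]
        rw [show (algebraMap A₁ F) (f.coeff i) = ((f.coeff i : A₁) : F) from rfl]
        ring
      rw [haevalg, hfz, mul_zero]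
  -- the integral closure of O in F
  set IC : Subring F := (integralClosure O F).toSubring with hICdef
  have hICmem : ∀ z : F, z ∈ IC ↔ IsIntegral O z := fun z => Iff.rfl
  have hxIC : x ∉ IC := by
    intro hint
    rw [hICmem] at hint
    obtain ⟨g, hmon, hgz⟩ := hint
    set m := g.natDegree with hmdef
    have hm1 : 1 ≤ m := by
      by_contra h0
      have hm0 : m = 0 := by omega
      have hg1 : g = 1 := (Polynomial.Monic.natDegree_eq_zero hmon).1 hm0
      rw [hg1] at hgz
      simp at hgz
    have hsum := (Polynomial.aeval_eq_sum_range (p := g) x).symm.trans hgz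
    rw [← hmdef] at hsum
    rw [Finset.sum_range_succ] at hsum
    have hlead : g.coeff m = 1 := hmon.coeff_natDegree
    rw [hlead, one_smul] at hsum
    have hxm : x ^ m = -∑ i ∈ Finset.range m, ((g.coeff i : F)) * x ^ i := by
      have h1 := hsum
      rw [add_eq_zero_iff_eq_neg] at h1
      have h2 : ∑ i ∈ Finset.range m, ((g.coeff i : F)) * x ^ i = -x ^ m := by
        rw [← h1]
        refine Finset.sum_congr rfl (fun i _ => ?_)
        rw [Algebra.smul_def]
        rfl
      rw [h2, neg_neg]
    have hxpow : ∀ i : ℕ, i < m → x ^ i * (n : F) ^ (m - 1) = (n : F) ^ (m - 1 - i) := by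
      intro i hi
      obtain ⟨j, hj⟩ : ∃ j, m - 1 = i + j := ⟨m - 1 - i, by omega⟩
      rw [hj, Nat.add_sub_cancel_left, pow_add, ← mul_assoc, ← mul_pow, hx, one_pow, one_mul]
    have hxval : x = -∑ i ∈ Finset.range m, ((g.coeff i : F)) * (n : F) ^ (m - 1 - i) := by
      have hxmn : x = x ^ m * (n : F) ^ (m - 1) := by
        obtain ⟨j, hj⟩ : ∃ j, m = j + 1 := ⟨m - 1, by omega⟩
        rw [hj, Nat.add_sub_cancel, pow_succ, mul_comm (x ^ j) x, mul_assoc, ← mul_pow, hx,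
          one_pow, mul_one]
      rw [hxmn, hxm, neg_mul, Finset.sum_mul, neg_inj]
      refine Finset.sum_congr rfl (fun i hi => ?_)
      rw [mul_assoc, hxpow i (Finset.mem_range.1 hi)]
    apply hxO
    rw [hxval]
    refine O.neg_mem (Subring.sum_mem O (fun i _ => ?_))
    exact O.mul_mem (SetLike.coe_mem _) (hnpowO _)
  have habs : ∀ z : F, ∃ k : ℕ, (n : F) ^ k * z ∈ IC := by
    intro z
    obtain ⟨c, hc0, hcint⟩ := (halgO z).exists_integral_multiple
    obtain ⟨y, hyc⟩ : ∃ y : integralClosure O F, c • z = (y : F) := ⟨⟨c • z, hcint⟩, rfl⟩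
    have hcmem : (c : F) ∈ O := SetLike.coe_mem c
    obtain ⟨a, b, hb, hab⟩ := (hmem _).1 hcmem
    have hcne : (c : F) ≠ 0 := fun h0 => hc0 (Subtype.ext (by simpa using h0))
    have hbne : b ≠ 0 := fun h0 => hb (by rw [h0]; exact dvd_zero _)
    have hφb : φ b ≠ 0 := fun h0 => hbne (hφ (by simpa using h0))
    have haφ : φ a ≠ 0 := by
      rw [← hab]
      exact mul_ne_zero hcne hφb
    have hane : a ≠ 0 := fun h0 => haφ (by rw [h0, map_zero])
    obtain ⟨e, a₀, ha₀, rfl⟩ := mv_pull_pow hp2 a hane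
    have ha₀ne : a₀ ≠ 0 := fun h0 => hane (by rw [h0, mul_zero])
    have hφa₀ : φ a₀ ≠ 0 := fun h0 => ha₀ne (hφ (by simpa using h0))
    set o : F := φ ((MvPolynomial.C ((m₁ : ℤ))) ^ e * b) / φ a₀ with hodef
    have hoO : o ∈ O := by
      rw [hmem]
      exact ⟨(MvPolynomial.C ((m₁ : ℤ))) ^ e * b, a₀, ha₀, div_mul_cancel₀ _ hφa₀⟩
    have hoc : o * (c : F) = (n : F) ^ e := by
      have h1 : (c : F) * φ b = (p : F) ^ e * φ a₀ := by
        rw [hab, map_mul, map_pow, hφC]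
        push_cast
        ring
      rw [hodef, div_mul_eq_mul_div, div_eq_iff hφa₀, map_mul, map_pow, hφC]
      calc ((m₁ : ℤ) : F) ^ e * φ b * (c : F) = ((m₁ : F)) ^ e * ((c : F) * φ b) := by
            push_cast; ring
        _ = ((m₁ : F)) ^ e * ((p : F) ^ e * φ a₀) := by rw [h1]
        _ = (n : F) ^ e * φ a₀ := by
            rw [hnm]
            push_cast
            ring
    refine ⟨e, ?_⟩
    have hrw : (n : F) ^ e * z = o * ((c : F) * z) := by
      rw [← mul_assoc, hoc]
    rw [hICmem, hrw]
    have hcz : (c : F) * z ∈ integralClosure O F := by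
      have hcz' : (c : F) * z = (y : F) := by
        rw [← hyc]
        rfl
      rw [hcz']
      exact y.2
    have hoInt : o ∈ integralClosure O F := by
      have : o = algebraMap O F ⟨o, hoO⟩ := rfl
      rw [this]
      exact (integralClosure O F).algebraMap_mem _
    exact (integralClosure O F).mul_mem hoInt hcz
  exact ⟨IC, hxIC, habs⟩

theorem stmt3 {R : Type*} [CommRing R] [CharZero R]
    (h : ∃ n : ℕ, 1 < n ∧ IsUnit (n : R)) :
    Submaximal R := by
  obtain ⟨n, hn, hu⟩ := h
  set x : R := ↑hu.unit⁻¹ with hxdef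
  have hx : x * n = 1 := by
    have h1 := IsUnit.val_inv_mul hu
    exact h1
  -- the multiplicative set of nonzero integers in R
  set M : Submonoid R := Submonoid.map (Int.castRingHom R).toMonoidHom (nonZeroDivisors ℤ) with hM
  have hMmem : ∀ m : ℤ, m ≠ 0 → (m : R) ∈ M := by
    intro m hm
    exact ⟨m, mem_nonZeroDivisors_iff_ne_zero.2 hm, rfl⟩
  have hMne : ∀ y ∈ M, y ≠ 0 := by
    rintro y ⟨z, hz, rfl⟩ h
    refine mem_nonZeroDivisors_iff_ne_zero.1 hz (Int.cast_injective (α := R) ?_)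
    simpa using h
  haveI : Nontrivial (Localization M) := by
    refine nontrivial_of_ne 1 0 (fun h10 => ?_)
    have h1 : algebraMap R (Localization M) 1 = 0 := by simpa using h10
    rw [IsLocalization.map_eq_zero_iff M] at h1
    obtain ⟨m, hm⟩ := h1
    exact hMne m m.2 (by simpa using hm)
  obtain ⟨𝔪, h𝔪⟩ := Ideal.exists_maximal (Localization M)
  set P : Ideal R := 𝔪.comap (algebraMap R (Localization M)) with hPdef
  haveI hPprime : P.IsPrime := Ideal.IsPrime.comap _
  have hPdisj : ∀ m : ℤ, (m : R) ∈ P → m = 0 := by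
    intro m hm
    by_contra hm0
    have hunit : IsUnit (algebraMap R (Localization M) (m : R)) :=
      IsLocalization.map_units (Localization M) ⟨(m : R), hMmem m hm0⟩
    exact h𝔪.ne_top (Ideal.eq_top_of_isUnit_mem _ hm hunit)
  set D := R ⧸ P with hDdef
  haveI : IsDomain D := Ideal.Quotient.isDomain P
  haveI : CharZero D := by
    refine ⟨fun a b hab => ?_⟩
    have h2 : ((((a : ℤ) - b : ℤ) : D)) = 0 := by push_cast [hab]; ring
    rw [← map_intCast (Ideal.Quotient.mk P)] at h2
    have h1 : ((a : ℤ) - b : ℤ) = 0 := hPdisj _ (Ideal.Quotient.eq_zero_iff_mem.1 h2)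
    omega
  set F := FractionRing D with hF
  haveI : CharZero F := charZero_of_injective_algebraMap (IsFractionRing.injective D F)
  set τ : R →+* F := (algebraMap D F).comp (Ideal.Quotient.mk P) with hτ
  have hτx : τ x * (n : F) = 1 := by
    rw [show ((n : F)) = τ (n : R) by simp [hτ], ← map_mul, hx, map_one]
  obtain ⟨A, hxA, habs⟩ := good_field F hn (τ x) hτx
  obtain ⟨B, hxB, habsB⟩ := absorbing_comap τ x A hxA habs
  exact submaximal_of_absorbing x hx B hxB habsB
end

section
/- Let R be a commutative ring containing a unit x which is not algebraic over the prime subring of R (i.e., x satisfies no nonzero polynomial with coefficients in the image of ℤ in R). Then R has a maximal subring. -/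
open Polynomial

section Auxiliary

lemma submaximal_of_surjective {R S : Type*} [CommRing R] [CommRing S]
    (f : R →+* S) (hf : Function.Surjective f) (h : Submaximal S) : Submaximal R := by
  obtain ⟨M, hMne, hMmax⟩ := h
  refine ⟨M.comap f, ?_, ?_⟩
  · intro htop
    apply hMne
    rw [Subring.eq_top_iff']
    intro s
    obtain ⟨r, rfl⟩ := hf s
    have : r ∈ M.comap f := by rw [htop]; trivial
    exact this
  · intro T hT
    have hker : ∀ k : R, f k = 0 → k ∈ T := by
      intro k hk
      have : k ∈ M.comap f := by
        simp only [Subring.mem_comap, hk]; exact M.zero_mem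
      exact le_of_lt hT this
    have h1 : M ≤ T.map f := by
      intro m hm
      obtain ⟨r, rfl⟩ := hf m
      exact ⟨r, hT.le (by simpa [Subring.mem_comap] using hm), rfl⟩
    have h2 : M ≠ T.map f := by
      intro he
      rcases lt_iff_le_and_ne.1 hT with ⟨hle, hne⟩
      apply hne
      apply le_antisymm hle
      intro r hr
      have : f r ∈ M := he ▸ ⟨r, hr, rfl⟩
      exact this
    have h3 : T.map f = ⊤ := hMmax _ (lt_of_le_of_ne h1 h2)
    rw [Subring.eq_top_iff']
    intro r
    have : f r ∈ T.map f := by rw [h3]; trivial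
    obtain ⟨u, hu, huf⟩ := this
    have : r - u ∈ T := hker _ (by rw [map_sub, huf, sub_self])
    simpa using T.add_mem this hu

lemma submaximal_of_core {R : Type*} [CommRing R] (x t : R) (ht : t * x = 1) (W₀ : Subring R)
    (hx : x ∉ W₀) (hW : ∀ r : R, ∃ n : ℕ, t ^ n * r ∈ W₀) : Submaximal R := by
  obtain ⟨M, hle, hMmax⟩ := zorn_le_nonempty₀ {W : Subring R | x ∉ W}
    (fun c hc hchain y hy => ⟨sSup c, by
      intro hmem
      obtain ⟨L, hLc, hxL⟩ := (Subring.mem_sSup_of_directedOn ⟨y, hy⟩ hchain.directedOn).1 hmem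
      exact hc hLc hxL, fun z hz => le_sSup hz⟩) W₀ hx
  refine ⟨M, fun htop => hMmax.prop (htop ▸ trivial), fun T hT => ?_⟩
  have hxT : x ∈ T := by
    by_contra hxT
    exact (hMmax.not_prop_of_gt hT) hxT
  rw [Subring.eq_top_iff']
  intro r
  obtain ⟨n, hn⟩ := hW r
  have h1 : t ^ n * r ∈ T := hT.le (hle hn)
  have h2 : x ^ n ∈ T := T.pow_mem hxT n
  have h3 : x ^ n * (t ^ n * r) = r := by
    rw [← mul_assoc, ← mul_pow, mul_comm x t, ht, one_pow, one_mul]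
  rw [← h3]
  exact T.mul_mem h2 h1

lemma aeval_ringHom_comm {R S : Type*} [CommRing R] [CommRing S] (f : R →+* S) (x : R)
    (p : ℤ[X]) : aeval (f x) p = f (aeval x p) := by
  rw [aeval_def, aeval_def, hom_eval₂]
  congr 1
  exact RingHom.ext fun n => by simp

end Auxiliary
lemma exists_prime_transcendental {R : Type*} [CommRing R] [Nontrivial R] (x : R)
    (halg : ∀ p : ℤ[X], p.map (Int.castRingHom R) ≠ 0 → aeval x p ≠ 0) :
    ∃ P : Ideal R, P.IsPrime ∧
      ∀ p : ℤ[X], p.map (Int.castRingHom (R ⧸ P)) ≠ 0 →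
        aeval (Ideal.Quotient.mk P x) p ≠ 0 := by
  classical
  set m := ringChar R with hmdef
  haveI : CharP R m := ringChar.charP R
  let S : Submonoid R :=
  { carrier := {r | ∃ q : ℤ[X],
      q.map (Int.castRingHom (ZMod m)) ∈ nonZeroDivisors ((ZMod m)[X]) ∧ aeval x q = r}
    mul_mem' := by
      rintro a b ⟨qa, hqa, rfl⟩ ⟨qb, hqb, rfl⟩
      exact ⟨qa * qb, by rw [Polynomial.map_mul]; exact mul_mem hqa hqb, by rw [map_mul]⟩
    one_mem' := ⟨1, by rw [Polynomial.map_one]; exact one_mem _, map_one _⟩ }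
  have hSdisj : Disjoint ((⊥ : Ideal R) : Set R) (S : Set R) := by
    rw [Set.disjoint_left]
    rintro a ha ⟨q, hq, hqa⟩
    have ha0 : a = 0 := by simpa using ha
    subst ha0
    have hmapR : q.map (Int.castRingHom R) = 0 := by
      by_contra h'
      exact halg q h' hqa
    have hmapZ : q.map (Int.castRingHom (ZMod m)) = 0 := by
      ext i
      have hci : ((q.coeff i : ℤ) : R) = 0 := by
        have := congrArg (fun r => Polynomial.coeff r i) hmapR
        simpa [coeff_map] using this
      have : (m : ℤ) ∣ q.coeff i := (CharP.intCast_eq_zero_iff R m _).1 hci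
      simp only [coeff_map, coeff_zero, eq_intCast]
      rwa [ZMod.intCast_zmod_eq_zero_iff_dvd]
    rw [hmapZ] at hq
    have h10 : (1 : (ZMod m)[X]) = 0 := hq.2 1 (by rw [mul_zero])
    have h1 : (1 : ZMod m) = 0 := by
      have := congrArg (fun r => Polynomial.coeff r 0) h10
      simpa using this
    have := congrArg (ZMod.castHom (dvd_refl m) R) h1
    simp only [map_one, map_zero] at this
    exact one_ne_zero this
  obtain ⟨P, hP, -, hPdisj⟩ := Ideal.exists_le_prime_disjoint (I := ⊥) S hSdisj
  haveI := hP
  refine ⟨P, hP, ?_⟩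
  intro p hpmap hpeval0
  have heq : aeval (Ideal.Quotient.mk P x) p = Ideal.Quotient.mk P (aeval x p) :=
    aeval_ringHom_comm _ x p
  have hmem : aeval x p ∈ P := by rwa [heq, Ideal.Quotient.eq_zero_iff_mem] at hpeval0
  have hcoeff : ∃ j, ((p.coeff j : ℤ) : R ⧸ P) ≠ 0 := by
    by_contra h
    push_neg at h
    apply hpmap
    ext i
    simpa [coeff_map] using h i
  suffices hS : ∃ r ∈ S, r ∈ P by
    obtain ⟨r, hrS, hrP⟩ := hS
    exact Set.disjoint_left.mp hPdisj hrP hrS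
  by_cases hm0 : m = 0
  · refine ⟨aeval x p, ⟨p, ?_, rfl⟩, hmem⟩
    have hp0 : p ≠ 0 := by
      rintro rfl
      simp at hpmap
    rw [hm0]
    haveI : IsDomain (ZMod 0) := inferInstanceAs (IsDomain ℤ)
    refine mem_nonZeroDivisors_of_ne_zero ?_
    intro h
    exact hp0 (Polynomial.map_injective _ (fun a b hab => hab) (h.trans (Polynomial.map_zero _).symm))
  · set p₀ := ringChar (R ⧸ P) with hp₀def
    haveI : CharP (R ⧸ P) p₀ := ringChar.charP _
    have hdvd : p₀ ∣ m := by
      have hm1 : ((m : ℕ) : R ⧸ P) = 0 := by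
        have h2 : ((m : ℕ) : R) = 0 := CharP.cast_eq_zero R m
        rw [← map_natCast (Ideal.Quotient.mk P) m, h2, map_zero]
      exact (CharP.cast_eq_zero_iff (R ⧸ P) p₀ m).1 hm1
    have hp₀0 : p₀ ≠ 0 := by
      rintro h
      rw [h] at hdvd
      exact hm0 (zero_dvd_iff.mp hdvd)
    have hp₀ : p₀.Prime := (CharP.char_is_prime_or_zero (R ⧸ P) p₀).resolve_right hp₀0
    obtain ⟨j₀, hj₀⟩ := hcoeff
    have hj₀dvd : ¬ (p₀ : ℤ) ∣ p.coeff j₀ := fun hdvd' =>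
      hj₀ ((CharP.intCast_eq_zero_iff (R ⧸ P) p₀ _).2 hdvd')
    set e₀ := m.factorization p₀ with he₀def
    set A := p₀ ^ e₀ with hAdef
    set B := ordCompl[p₀] m with hBdef
    have hABm : A * B = m := Nat.ordProj_mul_ordCompl_eq_self m p₀
    have he₀pos : 0 < e₀ := hp₀.factorization_pos_of_dvd hm0 hdvd
    have hcopB : Nat.Coprime p₀ B := Nat.coprime_ordCompl hp₀ hm0
    have hcopAB : Nat.Coprime A B := Nat.Coprime.pow_left _ hcopB
    obtain ⟨ε, hε1, hε2⟩ : ∃ ε : ℤ, (A : ℤ) ∣ ε - 1 ∧ (B : ℤ) ∣ ε := by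
      refine ⟨B * Nat.gcdB A B, ⟨-(Nat.gcdA A B), ?_⟩, ⟨Nat.gcdB A B, rfl⟩⟩
      have h := Nat.gcd_eq_gcd_ab A B
      rw [Nat.Coprime.gcd_eq_one hcopAB] at h
      push_cast at h
      linear_combination -h
    set q1 := (C ε * p) ^ e₀ with hq1def
    have hq1map : q1.map (Int.castRingHom (ZMod p₀)) ≠ 0 := by
      haveI : Fact p₀.Prime := ⟨hp₀⟩
      have hεz : ((ε : ZMod p₀)) = 1 := by
        have hz : ((ε - 1 : ℤ) : ZMod p₀) = 0 := by
          rw [ZMod.intCast_zmod_eq_zero_iff_dvd]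
          refine dvd_trans ?_ hε1
          exact_mod_cast Nat.cast_dvd_cast (dvd_pow_self p₀ he₀pos.ne')
        push_cast at hz
        exact sub_eq_zero.mp hz
      have hpmapp : p.map (Int.castRingHom (ZMod p₀)) ≠ 0 := by
        intro h
        apply hj₀dvd
        rw [← ZMod.intCast_zmod_eq_zero_iff_dvd]
        have := congrArg (fun r => Polynomial.coeff r j₀) h
        simpa [coeff_map] using this
      rw [hq1def, Polynomial.map_pow, Polynomial.map_mul, map_C]
      rw [show ((Int.castRingHom (ZMod p₀)) ε) = (ε : ZMod p₀) from rfl, hεz, Polynomial.C_1,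
        one_mul]
      exact pow_ne_zero _ hpmapp
    have hq1coeff : ∃ j, ¬ (p₀ : ℤ) ∣ q1.coeff j := by
      by_contra h
      push_neg at h
      apply hq1map
      ext i
      simp only [coeff_map, coeff_zero, eq_intCast]
      rw [ZMod.intCast_zmod_eq_zero_iff_dvd]
      exact h i
    obtain ⟨j, hj⟩ := hq1coeff
    obtain ⟨c, k, hck⟩ : ∃ c k : ℤ, (p₀ : ℤ) * c - (1 - q1.coeff j) = (B : ℤ) * k := by
      refine ⟨Nat.gcdA p₀ B * (1 - q1.coeff j), -(Nat.gcdB p₀ B) * (1 - q1.coeff j), ?_⟩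
      have h := Nat.gcd_eq_gcd_ab p₀ B
      rw [Nat.Coprime.gcd_eq_one hcopB] at h
      push_cast at h
      linear_combination (q1.coeff j - 1) * h
    set qh := q1 + C ((p₀ : ℤ) * c) * X ^ j with hqhdef
    have hu : qh.coeff j = q1.coeff j + (p₀ : ℤ) * c := by
      rw [hqhdef, coeff_add, coeff_C_mul, coeff_X_pow, if_pos rfl, mul_one]
    have hucop : IsCoprime (qh.coeff j) (m : ℤ) := by
      have h1 : IsCoprime (qh.coeff j) ((p₀ : ℤ)) := by
        refine IsCoprime.symm ?_
        rw [Prime.coprime_iff_not_dvd (Nat.prime_iff_prime_int.mp hp₀)]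
        intro hd
        apply hj
        have h2 : (p₀ : ℤ) ∣ (p₀ : ℤ) * c := ⟨c, rfl⟩
        have h3 := dvd_sub hd h2
        rwa [hu, add_sub_cancel_right] at h3
      have h2 : IsCoprime (qh.coeff j) ((B : ℤ)) := by
        refine ⟨1, -k, ?_⟩
        rw [hu]
        linarith [hck]
      have h3 : IsCoprime (qh.coeff j) ((A : ℤ) * (B : ℤ)) := by
        refine IsCoprime.mul_right ?_ h2
        rw [hAdef]
        push_cast
        exact h1.pow_right
      rwa [← Nat.cast_mul, hABm] at h3
    have hqhnzd : qh.map (Int.castRingHom (ZMod m)) ∈ nonZeroDivisors ((ZMod m)[X]) := by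
      rw [Polynomial.mem_nonZeroDivisors_iff]
      intro a ha
      obtain ⟨d, rfl⟩ := ZMod.intCast_surjective a
      have hcj : ((d * qh.coeff j : ℤ) : ZMod m) = 0 := by
        have := congrArg (fun r => Polynomial.coeff r j) ha
        push_cast
        simpa [coeff_smul, coeff_map, smul_eq_mul] using this
      rw [ZMod.intCast_zmod_eq_zero_iff_dvd] at hcj
      have := hucop.symm.dvd_of_dvd_mul_right hcj
      rwa [ZMod.intCast_zmod_eq_zero_iff_dvd]
    have hqhP : aeval x qh ∈ P := by
      rw [hqhdef, map_add]
      refine P.add_mem ?_ ?_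
      · rw [hq1def, map_pow, map_mul, aeval_C]
        have h1 : aeval x p ^ e₀ ∈ P := by
          have h2 : aeval x p ^ e₀ = aeval x p ^ (e₀ - 1) * aeval x p := by
            rw [← pow_succ, Nat.sub_add_cancel he₀pos]
          rw [h2]
          exact P.mul_mem_left _ hmem
        rw [mul_pow]
        exact P.mul_mem_left _ h1
      · have hp₀P : ((p₀ : ℤ) : R) ∈ P := by
          have h4 : ((p₀ : ℤ) : R ⧸ P) = 0 := by
            push_cast
            exact CharP.cast_eq_zero _ p₀
          rwa [← map_intCast (Ideal.Quotient.mk P), Ideal.Quotient.eq_zero_iff_mem] at h4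
        have h5 : aeval x (C ((p₀ : ℤ) * c) * X ^ j) = ((p₀ : ℤ) : R) * (((c : ℤ) : R) * x ^ j) := by
          rw [map_mul, aeval_C, map_pow, aeval_X, algebraMap_int_eq, eq_intCast]
          push_cast
          ring
        rw [h5]
        exact P.mul_mem_right _ hp₀P
    exact ⟨aeval x qh, ⟨qh, hqhnzd, rfl⟩, hqhP⟩
section Helpers
variable {K : Type*} [CommRing K] (L : Subring K)

lemma memL_C {a : K} (ha : a ∈ L) : ∀ i, (C a).coeff i ∈ L := fun i => by
  rw [coeff_C]; split_ifs; exacts [ha, L.zero_mem]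

lemma memL_one : ∀ i, (1 : K[X]).coeff i ∈ L := by
  rw [← C_1]; exact memL_C L L.one_mem

lemma memL_zero : ∀ i, (0 : K[X]).coeff i ∈ L := fun i => by rw [coeff_zero]; exact L.zero_mem

lemma memL_add {f g : K[X]} (hf : ∀ i, f.coeff i ∈ L) (hg : ∀ i, g.coeff i ∈ L) :
    ∀ i, (f + g).coeff i ∈ L := fun i => by
  rw [coeff_add]; exact L.add_mem (hf i) (hg i)

lemma memL_neg {f : K[X]} (hf : ∀ i, f.coeff i ∈ L) : ∀ i, (-f).coeff i ∈ L := fun i => by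
  rw [coeff_neg]; exact L.neg_mem (hf i)

lemma memL_mul {f g : K[X]} (hf : ∀ i, f.coeff i ∈ L) (hg : ∀ i, g.coeff i ∈ L) :
    ∀ i, (f * g).coeff i ∈ L := fun i => by
  rw [coeff_mul]; exact Subring.sum_mem _ fun c _ => L.mul_mem (hf _) (hg _)

lemma memL_X : ∀ i, (X : K[X]).coeff i ∈ L := fun i => by
  rw [coeff_X]; split_ifs; exacts [L.one_mem, L.zero_mem]

lemma memL_Xpow (n : ℕ) : ∀ i, (X ^ n : K[X]).coeff i ∈ L := fun i => by
  rw [coeff_X_pow]; split_ifs; exacts [L.one_mem, L.zero_mem]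

lemma memL_sum {ι : Type*} (s : Finset ι) (F : ι → K[X])
    (h : ∀ j ∈ s, ∀ i, (F j).coeff i ∈ L) : ∀ i, (∑ j ∈ s, F j).coeff i ∈ L := fun i => by
  rw [finset_sum_coeff]; exact Subring.sum_mem _ fun c hc => h c hc i

lemma memL_prod {ι : Type*} (s : Finset ι) (F : ι → K[X])
    (h : ∀ j ∈ s, ∀ i, (F j).coeff i ∈ L) : ∀ i, (∏ j ∈ s, F j).coeff i ∈ L := by
  classical
  induction s using Finset.induction_on with
  | empty => simpa using memL_one L
  | @insert a s hj ih =>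
    rw [Finset.prod_insert hj]
    exact memL_mul L (h a (Finset.mem_insert_self a s))
      (ih fun j hjs => h j (Finset.mem_insert_of_mem hjs))

end Helpers

section DegRing
variable {K : Type*} [Field K] (y : K) (L : Subring K)

/-- The subring of "fractions of degree ≤ 0" in the variable `y` over `L`. -/
def degRing : Subring K where
  carrier := {k | ∃ f g : K[X], (∀ i, f.coeff i ∈ L) ∧ (∀ i, g.coeff i ∈ L) ∧ g ≠ 0 ∧
      f.natDegree ≤ g.natDegree ∧ k * g.eval y = f.eval y}
  zero_mem' := ⟨0, 1, memL_zero L, memL_one L, one_ne_zero, by simp, by simp⟩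
  one_mem' := ⟨1, 1, memL_one L, memL_one L, one_ne_zero, le_rfl, by simp⟩
  add_mem' := by
    rintro k₁ k₂ ⟨f₁, g₁, hf₁, hg₁, hg₁0, hd₁, he₁⟩ ⟨f₂, g₂, hf₂, hg₂, hg₂0, hd₂, he₂⟩
    refine ⟨f₁ * g₂ + f₂ * g₁, g₁ * g₂, memL_add L (memL_mul L hf₁ hg₂) (memL_mul L hf₂ hg₁),
      memL_mul L hg₁ hg₂, mul_ne_zero hg₁0 hg₂0, ?_, ?_⟩
    · refine le_trans (natDegree_add_le _ _) ?_
      rw [natDegree_mul hg₁0 hg₂0]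
      exact max_le (le_trans (natDegree_mul_le) (by omega))
        (le_trans (natDegree_mul_le) (by omega))
    · simp only [eval_add, eval_mul]
      linear_combination (eval y g₂) * he₁ + (eval y g₁) * he₂
  neg_mem' := by
    rintro k ⟨f, g, hf, hg, hg0, hd, he⟩
    exact ⟨-f, g, memL_neg L hf, hg, hg0, by rwa [natDegree_neg], by
      rw [eval_neg]; linear_combination -he⟩
  mul_mem' := by
    rintro k₁ k₂ ⟨f₁, g₁, hf₁, hg₁, hg₁0, hd₁, he₁⟩ ⟨f₂, g₂, hf₂, hg₂, hg₂0, hd₂, he₂⟩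
    refine ⟨f₁ * f₂, g₁ * g₂, memL_mul L hf₁ hf₂, memL_mul L hg₁ hg₂,
      mul_ne_zero hg₁0 hg₂0, ?_, ?_⟩
    · rw [natDegree_mul hg₁0 hg₂0]
      exact le_trans (natDegree_mul_le) (by omega)
    · simp only [eval_mul]
      linear_combination (k₂ * eval y g₂) * he₁ + (eval y f₁) * he₂

lemma mem_degRing_iff {k : K} : k ∈ degRing y L ↔ ∃ f g : K[X],
    (∀ i, f.coeff i ∈ L) ∧ (∀ i, g.coeff i ∈ L) ∧ g ≠ 0 ∧
    f.natDegree ≤ g.natDegree ∧ k * g.eval y = f.eval y := Iff.rfl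

end DegRing

section PolyRing
variable {K : Type*} [CommRing K] (r : K) (L : Subring K)

/-- The subring of values of `L`-polynomials at `r`. -/
def polyRing : Subring K where
  carrier := {k | ∃ f : K[X], (∀ i, f.coeff i ∈ L) ∧ f.eval r = k}
  zero_mem' := ⟨0, memL_zero L, by simp⟩
  one_mem' := ⟨1, memL_one L, by simp⟩
  add_mem' := by
    rintro a b ⟨f, hf, rfl⟩ ⟨g, hg, rfl⟩
    exact ⟨f + g, memL_add L hf hg, by simp⟩
  neg_mem' := by
    rintro a ⟨f, hf, rfl⟩
    exact ⟨-f, memL_neg L hf, by simp⟩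
  mul_mem' := by
    rintro a b ⟨f, hf, rfl⟩ ⟨g, hg, rfl⟩
    exact ⟨f * g, memL_mul L hf hg, by simp⟩

lemma mem_polyRing_iff {k : K} : k ∈ polyRing r L ↔
    ∃ f : K[X], (∀ i, f.coeff i ∈ L) ∧ f.eval r = k := Iff.rfl

lemma le_polyRing : L ≤ polyRing r L := fun a ha => ⟨C a, memL_C L ha, eval_C⟩

lemma self_mem_polyRing : r ∈ polyRing r L := ⟨X, memL_X L, eval_X⟩

end PolyRing

lemma no_monic_kill {K : Type*} [Field K] (y : K) (L : Subring K)
    (hL : ∀ p : K[X], (∀ i, p.coeff i ∈ L) → p.eval y = 0 → p = 0)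
    (N : ℕ) (k : ℕ → K) (f g : ℕ → K[X])
    (hf : ∀ i j, (f i).coeff j ∈ L) (hg : ∀ i j, (g i).coeff j ∈ L)
    (hg0 : ∀ i, g i ≠ 0) (hdeg : ∀ i, (f i).natDegree ≤ (g i).natDegree)
    (heq : ∀ i, k i * (g i).eval y = (f i).eval y)
    (hkill : y ^ N + ∑ i ∈ Finset.range N, k i * y ^ i = 0) : False := by
  classical
  set Q : K[X] := (∏ j ∈ Finset.range N, g j) * X ^ N +
    ∑ i ∈ Finset.range N, f i * (∏ j ∈ (Finset.range N).erase i, g j) * X ^ i with hQdef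
  have hQcoeff : ∀ i, Q.coeff i ∈ L := by
    refine memL_add L (memL_mul L (memL_prod L _ _ fun j _ => hg j) (memL_Xpow L N)) ?_
    exact memL_sum L _ _ fun i _ => memL_mul L
      (memL_mul L (hf i) (memL_prod L _ _ fun j _ => hg j)) (memL_Xpow L i)
  have hQeval : Q.eval y = 0 := by
    have hterm : ∀ i ∈ Finset.range N,
        (f i * (∏ j ∈ (Finset.range N).erase i, g j) * X ^ i).eval y
          = (∏ j ∈ Finset.range N, (g j).eval y) * (k i * y ^ i) := by
      intro i hi
      rw [eval_mul, eval_mul, eval_pow, eval_X, ← heq i, eval_prod,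
        ← Finset.mul_prod_erase _ _ hi]
      ring
    rw [hQdef, eval_add, eval_mul, eval_pow, eval_X, eval_finset_sum,
      Finset.sum_congr rfl hterm, ← Finset.mul_sum, eval_prod, ← mul_add, hkill, mul_zero]
  have hQ0 : Q = 0 := hL Q hQcoeff hQeval
  set D := ∑ j ∈ Finset.range N, (g j).natDegree with hDdef
  have hprodne : (∏ j ∈ Finset.range N, g j) ≠ 0 := Finset.prod_ne_zero_iff.2 fun j _ => hg0 j
  have hproddeg : (∏ j ∈ Finset.range N, g j).natDegree = D :=
    natDegree_prod _ _ fun j _ => hg0 j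
  have hc1 : ((∏ j ∈ Finset.range N, g j) * X ^ N).coeff (D + N)
      = (∏ j ∈ Finset.range N, g j).leadingCoeff := by
    rw [coeff_mul_X_pow, ← hproddeg]
    rfl
  have hc2 : (∑ i ∈ Finset.range N,
      f i * (∏ j ∈ (Finset.range N).erase i, g j) * X ^ i).coeff (D + N) = 0 := by
    rw [finset_sum_coeff]
    refine Finset.sum_eq_zero fun i hi => ?_
    refine coeff_eq_zero_of_natDegree_lt ?_
    have h1 : (g i).natDegree + ∑ j ∈ (Finset.range N).erase i, (g j).natDegree = D := by
      rw [hDdef]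
      exact Finset.add_sum_erase (Finset.range N) (fun j => (g j).natDegree) hi
    have h2 : (∏ j ∈ (Finset.range N).erase i, g j).natDegree
        ≤ ∑ j ∈ (Finset.range N).erase i, (g j).natDegree := natDegree_prod_le _ _
    have h3 : (f i * (∏ j ∈ (Finset.range N).erase i, g j) * X ^ i).natDegree
        ≤ (f i).natDegree + (∏ j ∈ (Finset.range N).erase i, g j).natDegree + i := by
      refine le_trans natDegree_mul_le ?_
      rw [natDegree_X_pow]
      exact Nat.add_le_add_right natDegree_mul_le i
    have h4 := hdeg i
    have h5 : i < N := Finset.mem_range.1 hi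
    omega
  have hne : Q.coeff (D + N) ≠ 0 := by
    rw [hQdef, coeff_add, hc1, hc2, add_zero]
    exact leadingCoeff_ne_zero.2 hprodne
  rw [hQ0] at hne
  simp at hne

set_option maxHeartbeats 1000000 in
lemma submaximal_of_domain {A : Type*} [CommRing A] [IsDomain A] (x t : A) (ht : t * x = 1)
    (halg : ∀ p : ℤ[X], p.map (Int.castRingHom A) ≠ 0 → aeval x p ≠ 0) :
    Submaximal A := by
  classical
  set K := FractionRing A with hKdef
  set φ := algebraMap A K with hφdef
  have hinj : Function.Injective φ := IsFractionRing.injective A K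
  set y := φ x with hydef
  set s := φ t with hsdef
  have hsy : s * y = 1 := by rw [hsdef, hydef, ← map_mul, ht, map_one]
  have halgK : ∀ q : ℤ[X], q.map (Int.castRingHom K) ≠ 0 →
      (q.map (Int.castRingHom K)).eval y ≠ 0 := by
    intro q hq h0
    have h1 : φ (aeval x q) = (q.map (Int.castRingHom K)).eval y := by
      rw [eval_map, aeval_def, algebraMap_int_eq, hom_eval₂]
      congr 1
      exact RingHom.ext fun z => by simp
    have h2 : aeval x q = 0 := by
      apply hinj
      rw [h1, h0, map_zero]
    refine halg q ?_ h2
    intro hqA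
    apply hq
    have h3 : q.map (Int.castRingHom K) = (q.map (Int.castRingHom A)).map (φ : A →+* K) := by
      rw [Polynomial.map_map]
      congr 1
      exact RingHom.ext fun z => by simp
    rw [h3, hqA, Polynomial.map_zero]
  have hTbot : ∀ p : K[X], (∀ i, p.coeff i ∈ (⊥ : Subring K)) → p.eval y = 0 → p = 0 := by
    intro p hp hev
    by_contra hp0
    choose n hn using fun i => Subring.mem_bot.mp (hp i)
    set pz : ℤ[X] := ∑ i ∈ p.support, C (n i) * X ^ i with hpzdef
    have hmapz : pz.map (Int.castRingHom K) = p := by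
      ext i
      rw [coeff_map, hpzdef, finset_sum_coeff]
      rw [Finset.sum_congr rfl (fun j _ => by rw [coeff_C_mul, coeff_X_pow])]
      simp_rw [mul_ite, mul_one, mul_zero]
      rw [Finset.sum_ite_eq p.support i n]
      by_cases hi : i ∈ p.support
      · rw [if_pos hi]
        exact_mod_cast hn i
      · rw [if_neg hi]
        rw [Polynomial.notMem_support_iff.1 hi]
        exact map_zero _
    apply halgK pz (by rw [hmapz]; exact hp0)
    rw [hmapz]
    exact hev
  -- Zorn for L
  obtain ⟨L, -, hLmax⟩ := zorn_le_nonempty₀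
    {L : Subring K | ∀ p : K[X], (∀ i, p.coeff i ∈ L) → p.eval y = 0 → p = 0}
    (fun c hc hchain w hw => by
      refine ⟨sSup c, ?_, fun z hz => le_sSup hz⟩
      intro p hp hev
      have key : ∀ fs : Finset ℕ, ∃ Lc ∈ c, ∀ i ∈ fs, p.coeff i ∈ Lc := by
        intro fs
        induction fs using Finset.induction_on with
        | empty => exact ⟨w, hw, by simp⟩
        | @insert a fs ha ih =>
          obtain ⟨Lc, hLc, hall⟩ := ih
          obtain ⟨La, hLa, hpa⟩ :=
            (Subring.mem_sSup_of_directedOn ⟨w, hw⟩ hchain.directedOn).1 (hp a)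
          rcases hchain.total hLc hLa with h | h
          · refine ⟨La, hLa, fun i hi => ?_⟩
            rcases Finset.mem_insert.1 hi with rfl | hi
            · exact hpa
            · exact h (hall i hi)
          · refine ⟨Lc, hLc, fun i hi => ?_⟩
            rcases Finset.mem_insert.1 hi with rfl | hi
            · exact h hpa
            · exact hall i hi
      obtain ⟨Lc, hLc, hall⟩ := key p.support
      refine hc hLc p (fun i => ?_) hev
      by_cases hi : i ∈ p.support
      · exact hall i hi
      · rw [Polynomial.notMem_support_iff.1 hi]
        exact Lc.zero_mem) ⊥ hTbot
  have hL := hLmax.prop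
  set O := degRing y L with hOdef
  set Wc := (integralClosure ↥O K).toSubring with hWdef
  have hyW : y ∉ Wc := by
    intro hy
    obtain ⟨P, hPmonic, hPev⟩ := hy
    set pk := P.map (algebraMap ↥O K) with hpkdef
    have hpkev : pk.eval y = 0 := by rw [hpkdef, eval_map]; exact hPev
    have hpkmonic : pk.Monic := hPmonic.map _
    set N := pk.natDegree with hNdef
    have hcoeffO : ∀ i, pk.coeff i ∈ O := fun i => by
      rw [hpkdef, coeff_map]
      exact SetLike.coe_mem _
    choose f g hf hg hg0 hdeg heq using fun i => (mem_degRing_iff y L).1 (hcoeffO i)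
    refine no_monic_kill y L hL N (fun i => pk.coeff i) f g hf hg hg0 hdeg heq ?_
    have he : pk.eval y = ∑ i ∈ Finset.range (N + 1), pk.coeff i * y ^ i := eval_eq_sum_range _
    rw [Finset.sum_range_succ, hpkmonic.coeff_natDegree, one_mul] at he
    rw [hpkev] at he
    linear_combination -he
  have hOle : O ≤ Wc := fun k hk => isIntegral_algebraMap (x := (⟨k, hk⟩ : ↥O))
  have hscale : ∀ r : K, ∃ n : ℕ, s ^ n * r ∈ Wc := by
    intro r
    by_cases hrL : r ∈ L
    · refine ⟨0, ?_⟩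
      rw [pow_zero, one_mul]
      exact hOle ((mem_degRing_iff y L).2 ⟨C r, 1, memL_C L hrL, memL_one L, one_ne_zero,
        by simp, by simp⟩)
    · have hlt : L < polyRing r L :=
        lt_of_le_of_ne (le_polyRing r L) fun he => hrL (he ▸ self_mem_polyRing r L)
      have hnotT := hLmax.not_prop_of_gt hlt
      simp only [Set.mem_setOf_eq] at hnotT
      push_neg at hnotT
      obtain ⟨p, hpco, hpev, hpne⟩ := hnotT
      choose F hF hFev using fun i => (mem_polyRing_iff r L).1 (hpco i)
      set M := p.support.sup (fun i => (F i).natDegree) with hMdef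
      set gco : ℕ → K := fun j => ∑ i ∈ p.support, (F i).coeff j * y ^ i with hgcodef
      set hh : ℕ → K[X] := fun j => ∑ i ∈ p.support, C ((F i).coeff j) * X ^ i with hhdef
      have hhco : ∀ j i', (hh j).coeff i' ∈ L := fun j =>
        memL_sum L _ _ fun i _ => memL_mul L (memL_C L (hF i j)) (memL_Xpow L i)
      have hhev : ∀ j, (hh j).eval y = gco j := by
        intro j
        rw [hhdef, eval_finset_sum, hgcodef]
        exact Finset.sum_congr rfl fun i _ => by rw [eval_mul, eval_C, eval_pow, eval_X]
      have hhcoeff : ∀ j i', (hh j).coeff i' = if i' ∈ p.support then (F i').coeff j else 0 := by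
        intro j i'
        rw [hhdef, finset_sum_coeff]
        rw [Finset.sum_congr rfl (fun i _ => by rw [coeff_C_mul, coeff_X_pow])]
        simp_rw [mul_ite, mul_one, mul_zero]
        rw [Finset.sum_ite_eq p.support i' (fun i => (F i).coeff j)]
      set G : K[X] := ∑ j ∈ Finset.range (M + 1), C (gco j) * X ^ j with hGdef
      have hGco : ∀ j', G.coeff j' = if j' ∈ Finset.range (M + 1) then gco j' else 0 := by
        intro j'
        rw [hGdef, finset_sum_coeff]
        rw [Finset.sum_congr rfl (fun j _ => by rw [coeff_C_mul, coeff_X_pow])]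
        simp_rw [mul_ite, mul_one, mul_zero]
        rw [Finset.sum_ite_eq (Finset.range (M + 1)) j' gco]
      have hGev : G.eval r = 0 := by
        have h1 : G.eval r = ∑ j ∈ Finset.range (M + 1), gco j * r ^ j := by
          rw [hGdef, eval_finset_sum]
          exact Finset.sum_congr rfl fun j _ => by rw [eval_mul, eval_C, eval_pow, eval_X]
        have h2 : ∀ i ∈ p.support, ∑ j ∈ Finset.range (M + 1), (F i).coeff j * r ^ j
            = p.coeff i := by
          intro i hi
          rw [← eval_eq_sum_range' (lt_of_le_of_lt (Finset.le_sup (f := fun i => (F i).natDegree) hi) (Nat.lt_succ_self M))]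
          exact hFev i
        calc G.eval r
            = ∑ j ∈ Finset.range (M + 1), ∑ i ∈ p.support, (F i).coeff j * y ^ i * r ^ j := by
              rw [h1, hgcodef]
              exact Finset.sum_congr rfl fun j _ => by rw [Finset.sum_mul]
          _ = ∑ i ∈ p.support, ∑ j ∈ Finset.range (M + 1), (F i).coeff j * y ^ i * r ^ j :=
              Finset.sum_comm
          _ = ∑ i ∈ p.support, y ^ i * p.coeff i := by
              refine Finset.sum_congr rfl fun i hi => ?_
              rw [← h2 i hi, Finset.mul_sum]
              exact Finset.sum_congr rfl fun j _ => by ring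
          _ = p.eval y := by
              rw [eval_eq_sum, sum_def]
              exact Finset.sum_congr rfl fun i _ => by ring
          _ = 0 := hpev
      have hGne : G ≠ 0 := by
        intro hG0
        obtain ⟨i₀, hi₀⟩ := Polynomial.support_nonempty.2 hpne
        have hF0 : F i₀ = 0 := by
          ext j
          rw [coeff_zero]
          rcases le_or_gt j M with hjM | hjM
          · have hg0 : gco j = 0 := by
              have h4 := hGco j
              rw [hG0, coeff_zero, if_pos (Finset.mem_range.2 (Nat.lt_succ_of_le hjM))] at h4
              exact h4.symm
            have hh0 : hh j = 0 := hL (hh j) (hhco j) (by rw [hhev j]; exact hg0)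
            have h5 := hhcoeff j i₀
            rw [hh0, coeff_zero, if_pos hi₀] at h5
            exact h5.symm
          · exact coeff_eq_zero_of_natDegree_lt (lt_of_le_of_lt (Finset.le_sup (f := fun i => (F i).natDegree) hi₀) hjM)
        apply Polynomial.mem_support_iff.1 hi₀
        rw [← hFev i₀, hF0, eval_zero]
      set D := G.natDegree with hDdef
      have haD : G.coeff D ≠ 0 := leadingCoeff_ne_zero.2 hGne
      have hD1 : 1 ≤ D := by
        by_contra hD0
        push_neg at hD0
        have hD0' : D = 0 := by omega
        have h6 := Polynomial.eq_C_of_natDegree_eq_zero hD0'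
        apply hGne
        rw [h6] at hGev ⊢
        rw [eval_C] at hGev
        rw [hGev, C_0]
      have hDM : D ≤ M := by
        refine natDegree_le_iff_coeff_eq_zero.2 fun m hm => ?_
        rw [hGco m, if_neg (by rw [Finset.mem_range]; omega)]
      have hgcoD : gco D = G.coeff D := by
        rw [hGco D, if_pos (Finset.mem_range.2 (Nat.lt_succ_of_le hDM))]
      have hhD : hh D ≠ 0 := by
        intro h0
        apply haD
        rw [← hgcoD, ← hhev D, h0, eval_zero]
      have hhdeg : ∀ j, (hh j).natDegree ≤ p.natDegree := by
        intro j
        refine natDegree_le_iff_coeff_eq_zero.2 fun i' hi' => ?_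
        rw [hhcoeff j i', if_neg]
        intro hmem
        exact absurd (le_natDegree_of_mem_supp _ hmem) (by omega)
      set nn := p.natDegree with hnndef
      have hcoefO : ∀ i, i < D → (G.coeff i / G.coeff D) * s ^ (nn * (D - i)) ∈ O := by
        intro i hiD
        refine (mem_degRing_iff y L).2 ⟨hh i, X ^ (nn * (D - i)) * hh D, hhco i,
          memL_mul L (memL_Xpow L _) (hhco D), mul_ne_zero (pow_ne_zero _ X_ne_zero) hhD,
          ?_, ?_⟩
        · rw [natDegree_mul (pow_ne_zero _ X_ne_zero) hhD, natDegree_X_pow]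
          have h7 := hhdeg i
          have h8 : 1 ≤ D - i := by omega
          have h9 : nn * 1 ≤ nn * (D - i) := Nat.mul_le_mul_left _ h8
          omega
        · rw [eval_mul, eval_pow, eval_X, hhev D, hhev i, hgcoD]
          have hgcoi : gco i = G.coeff i := by
            rw [hGco i, if_pos (Finset.mem_range.2 (by omega))]
          rw [hgcoi]
          have hyk : s ^ (nn * (D - i)) * y ^ (nn * (D - i)) = 1 := by
            rw [← mul_pow, hsy, one_pow]
          have hb : G.coeff D * (G.coeff i / G.coeff D) = G.coeff i := mul_div_cancel₀ _ haD
          linear_combination (s ^ (nn * (D - i)) * y ^ (nn * (D - i))) * hb + G.coeff i * hyk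
      refine ⟨nn, ?_⟩
      show IsIntegral ↥O (s ^ nn * r)
      set z := s ^ nn * r with hzdef
      set cK : ℕ → K := fun i => (G.coeff i / G.coeff D) * s ^ (nn * (D - i)) with hcKdef
      set cO : ℕ → ↥O := fun i => if hi : i < D then ⟨cK i, hcoefO i hi⟩ else 0 with hcOdef
      refine ⟨X ^ D + ∑ i ∈ Finset.range D, C (cO i) * X ^ i, ?_, ?_⟩
      · refine monic_X_pow_add (lt_of_le_of_lt (degree_sum_le _ _) ?_)
        refine (Finset.sup_lt_iff (WithBot.bot_lt_coe D)).2 ?_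
        intro i hi
        refine lt_of_le_of_lt (degree_mul_le _ _) ?_
        refine lt_of_le_of_lt (add_le_add degree_C_le (le_of_eq (degree_X_pow i))) ?_
        rw [zero_add]
        exact WithBot.coe_lt_coe.2 (Finset.mem_range.1 hi)
      · have hev : eval₂ (algebraMap ↥O K) z (X ^ D + ∑ i ∈ Finset.range D, C (cO i) * X ^ i)
            = z ^ D + ∑ i ∈ Finset.range D, cK i * z ^ i := by
          rw [eval₂_add, eval₂_X_pow, eval₂_finset_sum]
          congr 1
          refine Finset.sum_congr rfl fun i hi => ?_
          rw [eval₂_mul, eval₂_C, eval₂_X_pow]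
          congr 1
          show ((cO i : ↥O) : K) = cK i
          rw [hcOdef]
          simp only [dif_pos (Finset.mem_range.1 hi)]
        rw [hev]
        have hkey : G.coeff D * (z ^ D + ∑ i ∈ Finset.range D, cK i * z ^ i) = 0 := by
          have hterm : ∀ i ∈ Finset.range D,
              G.coeff D * (cK i * z ^ i) = G.coeff i * (s ^ (nn * D) * r ^ i) := by
            intro i hi
            have hiD := Finset.mem_range.1 hi
            rw [hcKdef, hzdef]
            rw [mul_pow, ← pow_mul]
            have hexp : nn * (D - i) + nn * i = nn * D := by
              rw [← Nat.mul_add, Nat.sub_add_cancel (le_of_lt hiD)]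
            field_simp
            rw [← hexp, pow_add]
            have hb : G.coeff D * (G.coeff i / G.coeff D) = G.coeff i := mul_div_cancel₀ _ haD
            linear_combination (s ^ (nn * (D - i)) * (s ^ (nn * i) * r ^ i)) * hb
          rw [mul_add, Finset.mul_sum, Finset.sum_congr rfl hterm]
          have hzD : G.coeff D * z ^ D = G.coeff D * (s ^ (nn * D) * r ^ D) := by
            rw [hzdef, mul_pow, ← pow_mul]
          rw [hzD]
          have : G.coeff D * (s ^ (nn * D) * r ^ D)
              + ∑ i ∈ Finset.range D, G.coeff i * (s ^ (nn * D) * r ^ i)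
              = s ^ (nn * D) * ∑ i ∈ Finset.range (D + 1), G.coeff i * r ^ i := by
            have e1 : ∀ i, G.coeff i * (s ^ (nn * D) * r ^ i)
                = s ^ (nn * D) * (G.coeff i * r ^ i) := fun i => by ring
            simp_rw [e1]
            rw [Finset.sum_range_succ, mul_add, Finset.mul_sum]
            ring
          rw [this, ← eval_eq_sum_range, hGev, mul_zero]
        rcases mul_eq_zero.1 hkey with h | h
        · exact absurd h haD
        · exact h
  refine submaximal_of_core x t ht (Wc.comap (algebraMap A K)) ?_ ?_
  · intro hx
    exact hyW (Subring.mem_comap.1 hx)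
  · intro r
    obtain ⟨n, hn⟩ := hscale (φ r)
    refine ⟨n, Subring.mem_comap.2 ?_⟩
    rw [map_mul, map_pow]
    exact hn

theorem stmt4 {R : Type*} [CommRing R] [Nontrivial R] (x : R) (hx : IsUnit x)
    (halg : ∀ p : Polynomial ℤ, p.map (Int.castRingHom R) ≠ 0 → Polynomial.aeval x p ≠ 0) :
    Submaximal R := by
  obtain ⟨P, hP, htrans⟩ := exists_prime_transcendental x halg
  haveI := hP
  obtain ⟨u, hu⟩ := hx
  have ht : (Ideal.Quotient.mk P ↑u⁻¹) * (Ideal.Quotient.mk P x) = 1 := by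
    rw [← map_mul, ← hu, ← map_one (Ideal.Quotient.mk P)]
    congr 1
    exact u.inv_mul
  have hsub : Submaximal (R ⧸ P) :=
    submaximal_of_domain (Ideal.Quotient.mk P x) (Ideal.Quotient.mk P ↑u⁻¹) ht htrans
  exact submaximal_of_surjective (Ideal.Quotient.mk P) Ideal.Quotient.mk_surjective hsub
end

section
/- Let R be a commutative ring of characteristic zero that is not submaximal. Then for every prime number q there exists a maximal ideal M of R such that the characteristic of R/M equals q. In particular R has infinitely many maximal ideals. -/
open Function Polynomial

section FdivVsub

variable {A K : Type*} [CommRing A] [Field K]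

/-- The subfield of quotients of elements in the image of `ι`. -/
def Fdiv (ι : A →+* K) : Subfield K where
  carrier := {x | ∃ f g : A, ι g ≠ 0 ∧ x * ι g = ι f}
  zero_mem' := ⟨0, 1, by simp, by simp⟩
  one_mem' := ⟨1, 1, by simp, by simp⟩
  add_mem' := by
    rintro x y ⟨f, g, hg, e⟩ ⟨f', g', hg', e'⟩
    exact ⟨f * g' + f' * g, g * g', by simp [hg, hg'], by
      simp only [map_mul, map_add]
      linear_combination (ι g') * e + (ι g) * e'⟩
  mul_mem' := by
    rintro x y ⟨f, g, hg, e⟩ ⟨f', g', hg', e'⟩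
    exact ⟨f * f', g * g', by simp [hg, hg'], by
      simp only [map_mul]
      linear_combination (y * ι g') * e + (ι f) * e'⟩
  neg_mem' := by
    rintro x ⟨f, g, hg, e⟩
    exact ⟨-f, g, hg, by simp [e]⟩
  inv_mem' := by
    rintro x ⟨f, g, hg, e⟩
    rcases eq_or_ne x 0 with rfl | hx
    · exact ⟨0, 1, by simp, by simp⟩
    · refine ⟨g, f, ?_, ?_⟩
      · rw [← e]; exact mul_ne_zero hx hg
      · rw [← e]; field_simp

theorem mem_Fdiv_iff {ι : A →+* K} {x : K} :
    x ∈ Fdiv ι ↔ ∃ f g : A, ι g ≠ 0 ∧ x * ι g = ι f := Iff.rfl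

/-- The subring of quotients `f/g` where `g` satisfies a primitivity predicate `P`. -/
def Vsub (ι : A →+* K) (P : A → Prop) (h1 : P 1)
    (hmul : ∀ g g', P g → P g' → P (g * g')) : Subring K where
  carrier := {x | ∃ f g : A, P g ∧ x * ι g = ι f}
  zero_mem' := ⟨0, 1, h1, by simp⟩
  one_mem' := ⟨1, 1, h1, by simp⟩
  add_mem' := by
    rintro x y ⟨f, g, hg, e⟩ ⟨f', g', hg', e'⟩
    exact ⟨f * g' + f' * g, g * g', hmul _ _ hg hg', by
      simp only [map_mul, map_add]
      linear_combination (ι g') * e + (ι g) * e'⟩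
  mul_mem' := by
    rintro x y ⟨f, g, hg, e⟩ ⟨f', g', hg', e'⟩
    exact ⟨f * f', g * g', hmul _ _ hg hg', by
      simp only [map_mul]
      linear_combination (y * ι g') * e + (ι f) * e'⟩
  neg_mem' := by
    rintro x ⟨f, g, hg, e⟩
    exact ⟨-f, g, hg, by simp [e]⟩

theorem mem_Vsub_iff {ι : A →+* K} {P : A → Prop} {h1 : P 1}
    {hmul : ∀ g g', P g → P g' → P (g * g')} {x : K} :
    x ∈ Vsub ι P h1 hmul ↔ ∃ f g : A, P g ∧ x * ι g = ι f := Iff.rfl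

variable {ι : A →+* K} {P : A → Prop} {h1 : P 1}
  {hmul : ∀ g g', P g → P g' → P (g * g')}

theorem natCast_mem_Vsub (n : ℕ) : (n : K) ∈ Vsub ι P h1 hmul :=
  ⟨(n : A), 1, h1, by simp⟩

theorem Vsub_le_Fdiv (hP0 : ∀ g, P g → ι g ≠ 0) {x : K}
    (hx : x ∈ Vsub ι P h1 hmul) : x ∈ Fdiv ι := by
  obtain ⟨f, g, hg, e⟩ := hx
  exact ⟨f, g, hP0 g hg, e⟩

theorem bound_of_mem_Fdiv (q : ℕ)
    (hfact : ∀ g : A, g ≠ 0 → ∃ (k : ℕ) (g₀ : A), P g₀ ∧ g = (q : A) ^ k * g₀)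
    {x : K} (hx : x ∈ Fdiv ι) : ∃ k : ℕ, (q : K) ^ k * x ∈ Vsub ι P h1 hmul := by
  obtain ⟨f, g, hg, e⟩ := hx
  have hg0 : g ≠ 0 := by rintro rfl; simp at hg
  obtain ⟨k, g₀, hP, rfl⟩ := hfact g hg0
  refine ⟨k, f, g₀, hP, ?_⟩
  have : ((q : K) ^ k * x) * ι g₀ = x * ι ((q : A) ^ k * g₀) := by
    simp only [map_mul, map_pow, map_natCast]; ring
  rw [this, e]

theorem inv_not_mem_Vsub (q : ℕ) (hι : Injective ι)
    (hPq : ∀ f g : A, P g → g ≠ (q : A) * f) :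
    ∀ w : K, (q : K) * w = 1 → w ∉ Vsub ι P h1 hmul := by
  rintro w hw ⟨f, g, hg, e⟩
  apply hPq f g hg
  apply hι
  have : ι g = (q : K) * (w * ι g) := by
    rw [← mul_assoc, hw, one_mul]
  rw [map_mul, map_natCast, this, e]

end FdivVsub

section Closure

variable {A K : Type*} [CommRing A] [Field K]

theorem exists_bounding_of_algebraic (ι : A →+* K) (hι : Injective ι)
    (P : A → Prop) (h1 : P 1) (hmul : ∀ g g', P g → P g' → P (g * g'))
    (hP0 : ∀ g, P g → ι g ≠ 0) (q : ℕ)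
    (hfact : ∀ g : A, g ≠ 0 → ∃ (k : ℕ) (g₀ : A), P g₀ ∧ g = (q : A) ^ k * g₀)
    (hPq : ∀ f g : A, P g → g ≠ (q : A) * f)
    (halg : ∀ x : K, IsIntegral (Fdiv ι) x) :
    ∃ V : Subring K, (∀ w : K, (q : K) * w = 1 → w ∉ V) ∧
      (∀ x : K, ∃ k : ℕ, (q : K) ^ k * x ∈ V) := by
  classical
  set V' : Subring K := Vsub ι P h1 hmul with hV'
  have hqV : (q : K) ∈ V' := natCast_mem_Vsub q
  refine ⟨(integralClosure V' K).toSubring, ?_, ?_⟩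
  · -- exclusion
    intro w hw hC'
    have hint : IsIntegral V' w := by
      rwa [Subalgebra.mem_toSubring, mem_integralClosure_iff] at hC'
    obtain ⟨p, pmonic, peval⟩ := hint
    set m := p.natDegree with hm
    have hm1 : 1 ≤ m := by
      by_contra hm0
      have hmz : m = 0 := by omega
      have : p = 1 := pmonic.natDegree_eq_zero.mp hmz
      rw [this] at peval; simp at peval
    have hwq : w * (q : K) = 1 := by rw [mul_comm]; exact hw
    have hsum : (∑ i ∈ Finset.range (m + 1), algebraMap V' K (p.coeff i) * w ^ i) = 0 := by
      rw [← Polynomial.eval₂_eq_sum_range]; exact peval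
    have hmul0 := congrArg (· * (q : K) ^ (m - 1)) hsum
    simp only [zero_mul, Finset.sum_mul] at hmul0
    rw [Finset.sum_range_succ] at hmul0
    have hlast : algebraMap V' K (p.coeff m) * w ^ m * (q : K) ^ (m - 1) = w := by
      have hc : p.coeff m = 1 := pmonic.coeff_natDegree
      have hwm : w ^ m = w * w ^ (m - 1) := by
        rw [← pow_succ']; congr 1; omega
      rw [hc, map_one, one_mul, hwm, mul_assoc, ← mul_pow, hwq, one_pow, mul_one]
    have hterm : ∀ i ∈ Finset.range m,
        algebraMap V' K (p.coeff i) * w ^ i * (q : K) ^ (m - 1)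
          = algebraMap V' K (p.coeff i) * (q : K) ^ (m - 1 - i) := by
      intro i hi
      rw [Finset.mem_range] at hi
      have h2 : (q : K) ^ (m - 1) = (q : K) ^ i * (q : K) ^ (m - 1 - i) := by
        rw [← pow_add]; congr 1; omega
      rw [h2, mul_assoc, ← mul_assoc (w ^ i), ← mul_pow, hwq, one_pow, one_mul]
    rw [Finset.sum_congr rfl hterm, hlast] at hmul0
    have hwV : w ∈ V' := by
      have : w = -∑ i ∈ Finset.range m,
          algebraMap V' K (p.coeff i) * (q : K) ^ (m - 1 - i) := by
        linear_combination hmul0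
      rw [this]
      refine V'.neg_mem (Subring.sum_mem _ fun i _ => V'.mul_mem ?_ (V'.pow_mem hqV _))
      exact SetLike.coe_mem (p.coeff i)
    exact inv_not_mem_Vsub q hι hPq w hw hwV
  · -- bounding
    intro x
    have hx := halg x
    set p := minpoly (Fdiv ι) x with hp
    have pmonic : p.Monic := minpoly.monic hx
    have hm1 : 1 ≤ p.natDegree := minpoly.natDegree_pos hx
    set m := p.natDegree with hm
    have hFb : ∀ y : ↥(Fdiv ι), ∃ k : ℕ, (q : K) ^ k * ↑y ∈ V' := fun y =>
      bound_of_mem_Fdiv q hfact y.2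
    choose kk hkk using hFb
    set N := (Finset.range (m + 1)).sup (fun i => kk (p.coeff i)) with hN
    have hqF : (q : K) ∈ Fdiv ι := Vsub_le_Fdiv hP0 hqV
    set s : ↥(Fdiv ι) := ⟨(q : K) ^ N, pow_mem hqF N⟩ with hs
    set p' := p.scaleRoots s with hp'
    have p'monic : p'.Monic := (Polynomial.monic_scaleRoots_iff s).mpr pmonic
    have hroot : Polynomial.eval₂ (algebraMap (Fdiv ι) K)
        ((algebraMap (Fdiv ι) K s) * x) p' = 0 :=
      Polynomial.scaleRoots_eval₂_eq_zero _ (by rw [← Polynomial.aeval_def]; exact minpoly.aeval _ _)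
    set z := (q : K) ^ N * x with hz
    set pK := p'.map (algebraMap (Fdiv ι) K) with hpK
    have hKmonic : pK.Monic := p'monic.map _
    have hKroot : pK.eval z = 0 := by
      rw [Polynomial.eval_map]
      exact hroot
    have hndp' : p'.natDegree = m := Polynomial.natDegree_scaleRoots p s
    have hKcoeff : ∀ n, pK.coeff n ∈ V' := by
      intro n
      rw [Polynomial.coeff_map]
      rcases lt_or_ge m n with hn | hn
      · rw [Polynomial.coeff_eq_zero_of_natDegree_lt (by rw [hndp']; exact hn), map_zero]
        exact V'.zero_mem
      · rw [Polynomial.coeff_scaleRoots]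
        rcases eq_or_lt_of_le hn with hEq | hn'
        · have hc1 : p.coeff n = 1 := by rw [hEq, hm]; exact pmonic.coeff_natDegree
          have hone : p.coeff n * s ^ (p.natDegree - n) = 1 := by
            rw [hc1, one_mul, ← hm, hEq, Nat.sub_self, pow_zero]
          rw [hone, map_one]
          exact V'.one_mem
        · have hle : kk (p.coeff n) ≤ N :=
            Finset.le_sup (f := fun i => kk (p.coeff i)) (by rw [Finset.mem_range]; omega)
          have hge : kk (p.coeff n) ≤ N * (m - n) :=
            le_trans hle (Nat.le_mul_of_pos_right N (by omega))
          push_cast [Subfield.coe_mul]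
          rw [← hm]
          show (↑(p.coeff n) : K) * ((q : K) ^ N) ^ (m - n) ∈ V'
          have hsv : ((q : K) ^ N) ^ (m - n) = (q : K) ^ (kk (p.coeff n)) * (q : K) ^ (N * (m - n) - kk (p.coeff n)) := by
            rw [← pow_mul, ← pow_add]; congr 1; omega
          rw [hsv]
          have hre : (↑(p.coeff n) : K) * ((q : K) ^ (kk (p.coeff n)) * (q : K) ^ (N * (m - n) - kk (p.coeff n)))
              = ((q : K) ^ (kk (p.coeff n)) * ↑(p.coeff n)) * (q : K) ^ (N * (m - n) - kk (p.coeff n)) := by ring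
          rw [hre]
          exact V'.mul_mem (hkk _) (V'.pow_mem hqV _)
    have hco : (↑pK.coeffs : Set K) ⊆ (V' : Set K) := by
      intro c hc
      obtain ⟨n, -, rfl⟩ := Polynomial.mem_coeffs_iff.mp hc
      exact hKcoeff n
    set pV := pK.toSubring V' hco with hpV
    have hnd : pV.natDegree = pK.natDegree := by
      unfold Polynomial.natDegree
      rw [Polynomial.degree_toSubring]
    have pVmonic : pV.Monic := by
      have : (↑pV.leadingCoeff : K) = 1 := by
        rw [Polynomial.leadingCoeff, Polynomial.coeff_toSubring', hnd]
        exact hKmonic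
      exact Subtype.ext this
    have hevalV : Polynomial.eval₂ (algebraMap V' K) z pV = 0 := by
      have hmapV : pV.map (algebraMap V' K) = pK := by
        ext n
        rw [Polynomial.coeff_map]
        exact Polynomial.coeff_toSubring pK V' hco
      rw [Polynomial.eval₂_eq_eval_map, hmapV]
      exact hKroot
    exact ⟨N, Subalgebra.mem_toSubring.mpr ((mem_integralClosure_iff _ _).mpr ⟨pV, pVmonic, hevalV⟩)⟩

end Closure

section MvFact

theorem mv_fact {σ : Type*} (q : ℕ) (hq : q.Prime) :
    ∀ g : MvPolynomial σ ℤ, g ≠ 0 → ∃ (k : ℕ) (g₀ : MvPolynomial σ ℤ),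
      (MvPolynomial.map (Int.castRingHom (ZMod q)) g₀ ≠ 0) ∧
        g = (q : MvPolynomial σ ℤ) ^ k * g₀ := by
  haveI := Fact.mk hq
  suffices H : ∀ (n : ℕ) (g : MvPolynomial σ ℤ) (m : σ →₀ ℕ), g.coeff m ≠ 0 →
      (g.coeff m).natAbs ≤ n → ∃ (k : ℕ) (g₀ : MvPolynomial σ ℤ),
      (MvPolynomial.map (Int.castRingHom (ZMod q)) g₀ ≠ 0) ∧
        g = (q : MvPolynomial σ ℤ) ^ k * g₀ by
    intro g hg
    obtain ⟨m, hm⟩ := MvPolynomial.ne_zero_iff.mp hg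
    exact H _ g m hm le_rfl
  intro n
  induction n using Nat.strong_induction_on with
  | _ n IH =>
    intro g m hm hn
    by_cases hmap : MvPolynomial.map (Int.castRingHom (ZMod q)) g ≠ 0
    · exact ⟨0, g, hmap, by simp⟩
    · push_neg at hmap
      have hdvd : (MvPolynomial.C (q : ℤ)) ∣ g := by
        rw [MvPolynomial.C_dvd_iff_dvd_coeff]
        intro i
        have h0 : ((g.coeff i : ℤ) : ZMod q) = 0 := by
          have := congrArg (fun p => MvPolynomial.coeff i p) hmap
          simpa [MvPolynomial.coeff_map] using this
        exact_mod_cast (ZMod.intCast_zmod_eq_zero_iff_dvd _ _).mp h0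
      obtain ⟨g₁, hg₁⟩ := hdvd
      have hco : ∀ i, g.coeff i = q * g₁.coeff i := by
        intro i; rw [hg₁, MvPolynomial.coeff_C_mul]
      have hm1 : g₁.coeff m ≠ 0 := by
        intro h0; exact hm (by rw [hco, h0, mul_zero])
      have hq2 : 2 ≤ q := hq.two_le
      have hlt : (g₁.coeff m).natAbs < (g.coeff m).natAbs := by
        have h1 : (g.coeff m).natAbs = q * (g₁.coeff m).natAbs := by
          rw [hco m, Int.natAbs_mul]
          simp
        have h2 : 1 ≤ (g₁.coeff m).natAbs := by
          rcases Nat.eq_zero_or_pos (g₁.coeff m).natAbs with h | h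
          · exact absurd (Int.natAbs_eq_zero.mp h) hm1
          · exact h
        nlinarith
      obtain ⟨k, g₀, hP, hE⟩ := IH (g₁.coeff m).natAbs (by omega) g₁ m hm1 le_rfl
      refine ⟨k + 1, g₀, hP, ?_⟩
      have hCq : (MvPolynomial.C ((q : ℕ) : ℤ) : MvPolynomial σ ℤ) = ((q : ℕ) : MvPolynomial σ ℤ) := by
        simp
      rw [hg₁, hE, hCq]
      ring

end MvFact

section FieldBounding

theorem field_bounding {K : Type*} [Field K] [CharZero K] (q : ℕ) (hq : q.Prime) :
    ∃ V : Subring K, (∀ w : K, (q : K) * w = 1 → w ∉ V) ∧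
      (∀ x : K, ∃ k : ℕ, (q : K) ^ k * x ∈ V) := by
  haveI := Fact.mk hq
  haveI : Fact (1 < q) := ⟨hq.one_lt⟩
  obtain ⟨B, hB⟩ := exists_isTranscendenceBasis ℚ K
  set ι : MvPolynomial B ℤ →+* K :=
    ((MvPolynomial.aeval fun b : B => (b : K) : MvPolynomial B ℤ →ₐ[ℤ] K) :
      MvPolynomial B ℤ →+* K) with hι_def
  have hι : Injective ι := by
    have h1 : Injective (MvPolynomial.map (Int.castRingHom ℚ) :
        MvPolynomial B ℤ → MvPolynomial B ℚ) :=
      MvPolynomial.map_injective _ Int.cast_injective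
    have h2 : Injective (MvPolynomial.aeval (R := ℚ) fun b : B => (b : K)) := hB.1
    intro a b hab
    apply h1
    apply h2
    have ha := MvPolynomial.aeval_map_algebraMap (A := ℚ) (fun b : B => (b : K)) a
    have hb := MvPolynomial.aeval_map_algebraMap (A := ℚ) (fun b : B => (b : K)) b
    rw [algebraMap_int_eq] at ha hb
    rw [ha, hb]
    exact hab
  set P : MvPolynomial B ℤ → Prop :=
    fun g => MvPolynomial.map (Int.castRingHom (ZMod q)) g ≠ 0 with hP_def
  have h1 : P 1 := by simp [hP_def]
  have hmul : ∀ g g', P g → P g' → P (g * g') := by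
    intro g g' hg hg'
    simp only [hP_def, map_mul]
    exact mul_ne_zero hg hg'
  have hP0 : ∀ g, P g → ι g ≠ 0 := by
    intro g hg h0
    have : g ≠ 0 := by rintro rfl; simp [hP_def] at hg
    exact this (hι (by rw [h0, map_zero]))
  have hPq : ∀ f g : MvPolynomial B ℤ, P g → g ≠ (q : MvPolynomial B ℤ) * f := by
    rintro f g hg rfl
    apply hg
    rw [map_mul, map_natCast]
    simp [ZMod.natCast_self]
  have hqK : ∀ a : ℤ, ι (MvPolynomial.C a) = (a : K) := by
    intro a; simp [hι_def]
  have hsub : ∀ y : K, y ∈ Algebra.adjoin ℚ (Set.range ((↑) : B → K)) → y ∈ Fdiv ι := by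
    intro y hy
    induction hy using Algebra.adjoin_induction with
    | mem z hz =>
      obtain ⟨b, rfl⟩ := hz
      exact ⟨MvPolynomial.X b, 1, by simp, by simp [hι_def]⟩
    | algebraMap r =>
      have hr : algebraMap ℚ K r = (r : K) := by
        rw [eq_ratCast]
      rw [hr]
      refine ⟨MvPolynomial.C r.num, MvPolynomial.C (r.den : ℤ), ?_, ?_⟩
      · rw [hqK]
        push_cast
        exact_mod_cast Nat.cast_ne_zero.mpr r.den_nz
      · rw [hqK, hqK]
        push_cast
        rw [Rat.cast_def]
        field_simp
    | add x y hx hy ihx ihy => exact (Fdiv ι).add_mem ihx ihy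
    | mul x y hx hy ihx ihy => exact (Fdiv ι).mul_mem ihx ihy
  have halg : ∀ x : K, IsIntegral (Fdiv ι) x := by
    haveI hBalg := hB.isAlgebraic
    intro x
    have hxalg : IsAlgebraic (Algebra.adjoin ℚ (Set.range ((↑) : B → K))) x :=
      Algebra.IsAlgebraic.isAlgebraic x
    obtain ⟨p₀, hp₀, he₀⟩ := hxalg
    let inc : (Algebra.adjoin ℚ (Set.range ((↑) : B → K))) →+* (Fdiv ι) :=
      { toFun := fun a => ⟨↑a, hsub _ a.2⟩
        map_one' := rfl
        map_mul' := fun _ _ => rfl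
        map_zero' := rfl
        map_add' := fun _ _ => rfl }
    have hinc : Injective inc := fun a b hab =>
      Subtype.ext (congrArg (fun z : (Fdiv ι) => z.val) hab)
    apply IsAlgebraic.isIntegral
    refine ⟨p₀.map inc, (Polynomial.map_ne_zero_iff hinc).mpr hp₀, ?_⟩
    rw [Polynomial.aeval_def, Polynomial.eval₂_map]
    have hcomp : (algebraMap (Fdiv ι) K).comp inc =
        algebraMap (Algebra.adjoin ℚ (Set.range ((↑) : B → K))) K := RingHom.ext fun a => rfl
    rw [hcomp, ← Polynomial.aeval_def]
    exact he₀
  exact exists_bounding_of_algebraic ι hι P h1 hmul hP0 q (mv_fact q hq) hPq halg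

end FieldBounding

section DomainAndMain

theorem domain_submax {D : Type*} [CommRing D] [IsDomain D] [CharZero D]
    (q : ℕ) (hq : q.Prime) {w : D} (hw : (q : D) * w = 1) : Submaximal D := by
  let K := FractionRing D
  haveI : CharZero K := charZero_of_injective_algebraMap (IsFractionRing.injective D K)
  obtain ⟨V, hVu, hVb⟩ := field_bounding (K := K) q hq
  set VD : Subring D := V.comap (algebraMap D K) with hVD
  have hwK : (q : K) * algebraMap D K w = 1 := by
    rw [← map_natCast (algebraMap D K), ← map_mul, hw, map_one]
  have hwVD : w ∉ VD := fun hmem => hVu _ hwK hmem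
  have hbD : ∀ d : D, ∃ k : ℕ, (q : D) ^ k * d ∈ VD := by
    intro d
    obtain ⟨k, hk⟩ := hVb (algebraMap D K d)
    refine ⟨k, ?_⟩
    show algebraMap D K ((q : D) ^ k * d) ∈ V
    rw [map_mul, map_pow, map_natCast]
    exact hk
  have hchainub : ∀ c ⊆ {W : Subring D | VD ≤ W ∧ w ∉ W}, IsChain (· ≤ ·) c →
      ∀ y ∈ c, ∃ ub ∈ {W : Subring D | VD ≤ W ∧ w ∉ W}, ∀ z ∈ c, z ≤ ub := by
    intro c hc hchain y hy
    refine ⟨sSup c, ⟨?_, ?_⟩, fun z hz => le_sSup hz⟩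
    · exact (hc hy).1.trans (le_sSup hy)
    · intro hmem
      obtain ⟨S, hS, hwS⟩ := (Subring.mem_sSup_of_directedOn ⟨y, hy⟩ hchain.directedOn).mp hmem
      exact (hc hS).2 hwS
  obtain ⟨W, hVW, hWmax⟩ := zorn_le_nonempty₀
    {W : Subring D | VD ≤ W ∧ w ∉ W} hchainub VD ⟨le_rfl, hwVD⟩
  · obtain ⟨⟨hVW', hwW⟩, hWmax'⟩ := hWmax
    refine ⟨W, ?_, ?_⟩
    · intro htop
      rw [htop] at hwW
      exact hwW trivial
    · intro T hWT
      by_cases hwT : w ∈ T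
      · rw [eq_top_iff]
        intro d _
        obtain ⟨k, hk⟩ := hbD d
        have h1 : ((q : D) ^ k * d) ∈ T := hWT.le (hVW' hk)
        have h2 : w ^ k * ((q : D) ^ k * d) = d := by
          rw [← mul_assoc, ← mul_pow, mul_comm w, hw, one_pow, one_mul]
        exact h2 ▸ T.mul_mem (T.pow_mem hwT k) h1
      · have hTs : T ∈ {W : Subring D | VD ≤ W ∧ w ∉ W} := ⟨hVW'.trans hWT.le, hwT⟩
        exact absurd (le_antisymm (hWmax' hTs hWT.le) hWT.le) hWT.ne'

theorem submax_of_quotient {R D : Type*} [CommRing R] [CommRing D] (π : R →+* D)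
    (hπ : Surjective π) (h : Submaximal D) : Submaximal R := by
  obtain ⟨W, hWne, hWmax⟩ := h
  refine ⟨W.comap π, ?_, ?_⟩
  · intro htop
    apply hWne
    rw [eq_top_iff]
    intro d _
    obtain ⟨r, rfl⟩ := hπ d
    have : r ∈ W.comap π := htop ▸ Subring.mem_top r
    exact this
  · intro T hT
    have hker : ∀ r : R, π r = 0 → r ∈ T := by
      intro r hr
      apply le_of_lt hT
      show π r ∈ W
      rw [hr]
      exact W.zero_mem
    have hmapT : W < T.map π := by
      constructor
      · intro d hd
        obtain ⟨r, rfl⟩ := hπ d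
        exact ⟨r, hT.le hd, rfl⟩
      · intro hle
        obtain ⟨t, htT, htW⟩ := SetLike.exists_of_lt hT
        exact htW (hle ⟨t, htT, rfl⟩)
    have htop := hWmax _ hmapT
    rw [eq_top_iff]
    intro r _
    have : π r ∈ T.map π := htop ▸ Subring.mem_top _
    obtain ⟨t, htT, hteq⟩ := this
    have : r - t ∈ T := hker _ (by rw [map_sub, hteq, sub_self])
    have := T.add_mem htT this
    simpa using this

theorem submax_of_unit {R : Type*} [CommRing R] [CharZero R]
    {q : ℕ} (hq : q.Prime) (hu : IsUnit (q : R)) : Submaximal R := by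
  -- find a prime disjoint from the nonzero integers
  set S₀ : Submonoid R := Submonoid.map (Int.castRingHom R).toMonoidHom (nonZeroDivisors ℤ)
    with hS₀
  have hdisj : Disjoint ((⊥ : Ideal R) : Set R) (S₀ : Set R) := by
    rw [Set.disjoint_left]
    rintro x hx ⟨n, hn, rfl⟩
    rw [SetLike.mem_coe, Ideal.mem_bot] at hx
    have : (n : R) = 0 := hx
    have hn0 : (n : ℤ) ≠ 0 := nonZeroDivisors.ne_zero hn
    exact hn0 (by simpa using this)
  obtain ⟨P, hPprime, -, hPdisj⟩ := Ideal.exists_le_prime_disjoint _ S₀ hdisj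
  haveI := hPprime
  set D := R ⧸ P with hD
  haveI : CharZero D := by
    constructor
    intro a b hab
    by_contra hne
    have hdiff : ((a : ℤ) - b : R) ∈ P := by
      rw [← Ideal.Quotient.eq_zero_iff_mem]
      push_cast
      rw [map_sub]
      simp only [map_natCast]
      rw [show ((a : ℕ) : D) = ((b : ℕ) : D) from hab]
      ring
    have hmem : ((a : ℤ) - b : R) ∈ S₀ := by
      refine ⟨(a : ℤ) - b, ?_, by simp⟩
      refine mem_nonZeroDivisors_iff_ne_zero.mpr ?_
      intro h0
      apply hne
      omega
    exact Set.disjoint_left.mp hPdisj hdiff hmem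
  have hqD : IsUnit ((q : ℕ) : D) := by
    have := hu.map (Ideal.Quotient.mk P)
    rwa [map_natCast] at this
  obtain ⟨v, hv⟩ := hqD.exists_right_inv
  exact submax_of_quotient (Ideal.Quotient.mk P) Ideal.Quotient.mk_surjective
    (domain_submax q hq hv)

end DomainAndMain

theorem stmt5 {R : Type*} [CommRing R] [CharZero R] (h : ¬ Submaximal R) :
    (∀ q : ℕ, q.Prime → ∃ M : Ideal R, M.IsMaximal ∧ ringChar (R ⧸ M) = q) ∧
      {M : Ideal R | M.IsMaximal}.Infinite := by
  have main : ∀ q : ℕ, q.Prime → ∃ M : Ideal R, M.IsMaximal ∧ ringChar (R ⧸ M) = q := by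
    intro q hq
    by_contra hno
    push_neg at hno
    have hqu : ¬ IsUnit ((q : ℕ) : R) := fun hu => h (submax_of_unit hq hu)
    have hspan : Ideal.span {((q : ℕ) : R)} ≠ ⊤ := by
      rw [Ne, Ideal.span_singleton_eq_top]
      exact hqu
    obtain ⟨M, hM, hle⟩ := Ideal.exists_le_maximal _ hspan
    haveI := hM
    haveI : Nontrivial (R ⧸ M) := Ideal.Quotient.nontrivial_iff.mpr hM.ne_top
    have hqM : ((q : ℕ) : R ⧸ M) = 0 := by
      have hmem : ((q : ℕ) : R) ∈ M := hle (Ideal.subset_span rfl)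
      rw [← map_natCast (Ideal.Quotient.mk M)]
      exact Ideal.Quotient.eq_zero_iff_mem.mpr hmem
    have hdvd : ringChar (R ⧸ M) ∣ q := ringChar.dvd hqM
    rcases Nat.Prime.eq_one_or_self_of_dvd hq _ hdvd with h1 | hqq
    · exact absurd h1 CharP.ringChar_ne_one
    · exact hno M hM hqq
  refine ⟨main, ?_⟩
  have hch : ∀ p : {p : ℕ // p.Prime}, ∃ M : Ideal R, M.IsMaximal ∧ ringChar (R ⧸ M) = ↑p :=
    fun p => main p p.2
  choose f hf using hch
  haveI : Infinite {p : ℕ // p.Prime} := Nat.infinite_setOf_prime.to_subtype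
  apply Set.infinite_of_injective_forall_mem (f := f)
  · intro p p' hpp
    apply Subtype.ext
    have h1 := (hf p).2
    have h2 := (hf p').2
    rw [← h1, ← h2, hpp]
  · exact fun p => (hf p).1
end

section
/- Let R be a commutative ring and x ∈ R an element not algebraic over the prime subring of R. If R has characteristic zero, then there exists a prime ideal Q of R such that R/Q contains a subring isomorphic to ℤ[x] (the polynomial ring over ℤ); if R has characteristic n > 0 and p is a prime divisor of n, then there exists a prime ideal Q of R such that R/Q contains a subring isomorphic to a polynomial ring in one variable over 𝔽_p. -/
theorem stmt6 {R : Type*} [CommRing R] [Nontrivial R] (x : R)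
    (halg : ∀ p : Polynomial ℤ, p.map (Int.castRingHom R) ≠ 0 → Polynomial.aeval x p ≠ 0) :
    (CharZero R →
      ∃ Q : Ideal R, Q.IsPrime ∧ ∃ f : Polynomial ℤ →+* R ⧸ Q, Function.Injective f) ∧
    (∀ n : ℕ, 0 < n → CharP R n → ∀ p : ℕ, p.Prime → p ∣ n →
      ∃ Q : Ideal R, Q.IsPrime ∧ ∃ f : Polynomial (ZMod p) →+* R ⧸ Q, Function.Injective f) := by
  constructor
  · intro hchar
    -- multiplicative set of values of nonzero integer polynomials at x
    set S : Submonoid R :=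
      { carrier := {r | ∃ f : Polynomial ℤ, f ≠ 0 ∧ Polynomial.aeval x f = r}
        one_mem' := ⟨1, one_ne_zero, by simp⟩
        mul_mem' := by
          rintro a b ⟨f, hf, rfl⟩ ⟨g, hg, rfl⟩
          exact ⟨f * g, mul_ne_zero hf hg, by simp⟩ } with hS
    have hdisj : Disjoint ((⊥ : Ideal R) : Set R) (S : Set R) := by
      rw [Set.disjoint_left]
      rintro r hr ⟨f, hf, rfl⟩
      simp only [SetLike.mem_coe, Ideal.mem_bot] at hr
      refine halg f ?_ hr
      have : Function.Injective (Int.castRingHom R) := Int.cast_injective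
      exact fun h => hf (Polynomial.map_injective _ this (by simpa using h))
    obtain ⟨Q, hQ, -, hQdisj⟩ := Ideal.exists_le_prime_disjoint ⊥ S hdisj
    refine ⟨Q, hQ, (Ideal.Quotient.mk Q).comp (Polynomial.aeval x).toRingHom, ?_⟩
    rw [injective_iff_map_eq_zero]
    intro g hg
    by_contra hgne
    have hmem : Polynomial.aeval x g ∈ S := ⟨g, hgne, rfl⟩
    have hQmem : Polynomial.aeval x g ∈ Q := by
      simpa [Ideal.Quotient.eq_zero_iff_mem] using hg
    exact Set.disjoint_left.mp hQdisj hQmem hmem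
  · intro n hn hcharn p hp hpn
    haveI : Fact p.Prime := ⟨hp⟩
    obtain ⟨q, hq⟩ := hpn
    have hq0 : 0 < q := Nat.pos_of_ne_zero (by rintro rfl; simp at hq; omega)
    set S : Submonoid R :=
      { carrier := {r | ∃ f : Polynomial ℤ,
          f.map (Int.castRingHom (ZMod p)) ≠ 0 ∧ Polynomial.aeval x f = r}
        one_mem' := ⟨1, by simp, by simp⟩
        mul_mem' := by
          rintro a b ⟨f, hf, rfl⟩ ⟨g, hg, rfl⟩
          refine ⟨f * g, ?_, by simp⟩
          rw [Polynomial.map_mul]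
          exact mul_ne_zero hf hg } with hS
    have hdisj : Disjoint ((Ideal.span {(p : R)} : Ideal R) : Set R) (S : Set R) := by
      rw [Set.disjoint_left]
      rintro r hr ⟨f, hf, rfl⟩
      rw [SetLike.mem_coe, Ideal.mem_span_singleton] at hr
      obtain ⟨c, hc⟩ := hr
      -- q * (aeval x f) = q * p * c = n * c = 0
      have hzero : Polynomial.aeval x (Polynomial.C (q : ℤ) * f) = 0 := by
        have hn0 : ((n : ℕ) : R) = 0 := CharP.cast_eq_zero R n
        rw [map_mul, Polynomial.aeval_C, hc]
        have : (algebraMap ℤ R) (q : ℤ) * ((p : R) * c) = ((n : ℕ) : R) * c := by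
          rw [hq]; push_cast; ring
        rw [this, hn0, zero_mul]
      have hmap : (Polynomial.C (q : ℤ) * f).map (Int.castRingHom R) = 0 := by
        by_contra h
        exact halg _ h hzero
      -- conclude p divides all coefficients of f
      apply hf
      ext i
      simp only [Polynomial.coeff_map, Polynomial.coeff_zero]
      have hci : ((Polynomial.C (q : ℤ) * f).coeff i : ℤ) = (q : ℤ) * f.coeff i := by
        simp [Polynomial.coeff_C_mul]
      have : (((q : ℤ) * f.coeff i : ℤ) : R) = 0 := by
        have := congrArg (fun P => Polynomial.coeff P i) hmap
        simpa [Polynomial.coeff_map, hci] using this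
      rw [CharP.intCast_eq_zero_iff R n] at this
      obtain ⟨k, hk⟩ := this
      have hpk : f.coeff i = (p : ℤ) * k := by
        have hq0' : (q : ℤ) ≠ 0 := by exact_mod_cast hq0.ne'
        have : (q : ℤ) * f.coeff i = (q : ℤ) * ((p : ℤ) * k) := by
          rw [hk, hq]; push_cast; ring
        exact mul_left_cancel₀ hq0' this
      rw [hpk]
      simp [ZMod.natCast_self]
    obtain ⟨Q, hQ, hle, hQdisj⟩ := Ideal.exists_le_prime_disjoint (Ideal.span {(p : R)}) S hdisj
    haveI := hQ
    have hpQ : ((p : ℕ) : R ⧸ Q) = 0 := by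
      rw [← map_natCast (Ideal.Quotient.mk Q), Ideal.Quotient.eq_zero_iff_mem]
      exact hle (Ideal.subset_span rfl)
    haveI : CharP (R ⧸ Q) p := by
      have h1 := ringChar.dvd hpQ
      have hne1 : ringChar (R ⧸ Q) ≠ 1 := CharP.char_ne_one (R ⧸ Q) _
      have h : ringChar (R ⧸ Q) = p :=
        (Nat.Prime.eq_one_or_self_of_dvd hp _ h1).resolve_left hne1
      exact h ▸ ringChar.charP _
    set g : ZMod p →+* R ⧸ Q := ZMod.castHom dvd_rfl (R ⧸ Q)
    refine ⟨Q, hQ, Polynomial.eval₂RingHom g (Ideal.Quotient.mk Q x), ?_⟩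
    rw [injective_iff_map_eq_zero]
    intro a ha
    by_contra hane
    obtain ⟨f, hfmap⟩ := Polynomial.map_surjective (Int.castRingHom (ZMod p))
      ZMod.intCast_surjective a
    have hcomp : g.comp (Int.castRingHom (ZMod p)) = Int.castRingHom (R ⧸ Q) := by
      ext1; simp
    have hval : Polynomial.eval₂ g (Ideal.Quotient.mk Q x) a
        = Ideal.Quotient.mk Q (Polynomial.aeval x f) := by
      rw [← hfmap, Polynomial.eval₂_map, hcomp, Polynomial.aeval_def,
        Polynomial.hom_eval₂]
      congr 1
    have hmem : Polynomial.aeval x f ∈ S := ⟨f, by rw [hfmap]; exact hane, rfl⟩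
    have hQmem : Polynomial.aeval x f ∈ Q := by
      rw [← Ideal.Quotient.eq_zero_iff_mem, ← hval]
      simpa using ha
    exact Set.disjoint_left.mp hQdisj hQmem hmem
end

section
/- Let D be a principal ideal domain and R ⊇ D an integral domain such that D is integrally closed in R and U(R) ≠ U(D). Then R has a maximal subring. -/
open scoped NNReal Polynomial Multiplicative
open Classical

namespace SubmaxProof

variable {F : Type*} [Field F]

structure PV (F : Type*) [Field F] where
  v : F → ℝ≥0
  zero' : v 0 = 0
  one' : v 1 = 1
  neg' : ∀ a, v (-a) = v a
  mul' : ∀ a b, v a ≠ 0 → v b ≠ 0 → v (a * b) = v a * v b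
  addne' : ∀ a b, v a ≠ 0 → v b ≠ 0 → a + b ≠ 0 → v (a + b) ≠ 0
  addle' : ∀ a b, v a ≠ 0 → v b ≠ 0 → v (a + b) ≤ max (v a) (v b)

namespace PV

def Ok (w : PV F) (a : F) : Prop := w.v a ≠ 0 ∨ a = 0

lemma ok_zero (w : PV F) : w.Ok 0 := Or.inr rfl

lemma ok_of_ne (w : PV F) {a : F} (h : w.v a ≠ 0) : w.Ok a := Or.inl h

lemma ne_zero_of_v_ne (w : PV F) {a : F} (h : w.v a ≠ 0) : a ≠ 0 := by
  rintro rfl; exact h w.zero'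

lemma ok_one (w : PV F) : w.Ok 1 := Or.inl (by rw [w.one']; exact one_ne_zero)

lemma v_ne_of_ok (w : PV F) {a : F} (h : w.Ok a) (ha : a ≠ 0) : w.v a ≠ 0 := by
  rcases h with h | rfl
  · exact h
  · exact absurd rfl ha

lemma ok_neg (w : PV F) {a : F} (h : w.Ok a) : w.Ok (-a) := by
  rcases h with h | rfl
  · exact Or.inl (by rwa [w.neg'])
  · exact Or.inr (by simp)

lemma ok_add (w : PV F) {a b : F} (ha : w.Ok a) (hb : w.Ok b) : w.Ok (a + b) := by
  rcases ha with ha | rfl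
  · rcases hb with hb | rfl
    · by_cases h : a + b = 0
      · exact Or.inr h
      · exact Or.inl (w.addne' a b ha hb h)
    · exact Or.inl (by simpa using ha)
  · rcases hb with hb | rfl
    · exact Or.inl (by simpa using hb)
    · exact Or.inr (by simp)

lemma ok_mul (w : PV F) {a b : F} (ha : w.Ok a) (hb : w.Ok b) : w.Ok (a * b) := by
  rcases ha with ha | rfl
  · rcases hb with hb | rfl
    · exact Or.inl (by rw [w.mul' a b ha hb]; exact mul_ne_zero ha hb)
    · exact Or.inr (mul_zero a)
  · exact Or.inr (zero_mul b)

lemma v_mul_eq (w : PV F) {a b : F} (ha : w.Ok a) (hb : w.Ok b) :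
    w.v (a * b) = w.v a * w.v b := by
  rcases ha with ha | rfl
  · rcases hb with hb | rfl
    · exact w.mul' a b ha hb
    · rw [mul_zero, w.zero', mul_zero]
  · rw [zero_mul, w.zero', zero_mul]

lemma v_add_le (w : PV F) {a b : F} (ha : w.Ok a) (hb : w.Ok b) :
    w.v (a + b) ≤ max (w.v a) (w.v b) := by
  rcases ha with ha | rfl
  · rcases hb with hb | rfl
    · exact w.addle' a b ha hb
    · simp
  · simp [w.zero']

lemma ok_sum (w : PV F) {ι : Type*} (s : Finset ι) (f : ι → F)
    (h : ∀ i ∈ s, w.Ok (f i)) : w.Ok (∑ i ∈ s, f i) := by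
  classical
  induction s using Finset.induction_on with
  | empty => simpa using w.ok_zero
  | @insert a s ha ih =>
      rw [Finset.sum_insert ha]
      exact w.ok_add (h a (Finset.mem_insert_self a s))
        (ih fun i hi => h i (Finset.mem_insert_of_mem hi))

lemma v_sum_le (w : PV F) {ι : Type*} (s : Finset ι) (f : ι → F) (M : ℝ≥0)
    (hok : ∀ i ∈ s, w.Ok (f i)) (hle : ∀ i ∈ s, w.v (f i) ≤ M) :
    w.v (∑ i ∈ s, f i) ≤ M := by
  classical
  induction s using Finset.induction_on with
  | empty => simp [w.zero']
  | @insert a s ha ih =>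
      rw [Finset.sum_insert ha]
      refine (w.v_add_le (hok a (Finset.mem_insert_self a s))
        (w.ok_sum s f fun i hi => hok i (Finset.mem_insert_of_mem hi))).trans ?_
      exact max_le (hle a (Finset.mem_insert_self a s))
        (ih (fun i hi => hok i (Finset.mem_insert_of_mem hi))
            (fun i hi => hle i (Finset.mem_insert_of_mem hi)))

lemma v_pow (w : PV F) {a : F} (ha : w.v a ≠ 0) : ∀ n : ℕ, w.v (a ^ n) = (w.v a) ^ n
  | 0 => by simpa using w.one'
  | (n+1) => by
      have ih := w.v_pow ha n
      have hne : w.v (a ^ n) ≠ 0 := by rw [ih]; exact pow_ne_zero n ha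
      rw [pow_succ, pow_succ, w.mul' _ _ hne ha, ih]

lemma v_add_eq_left (w : PV F) {a b : F} (ha : w.v a ≠ 0) (hb : w.Ok b)
    (hlt : w.v b < w.v a) : w.v (a + b) = w.v a := by
  have hok : w.Ok (a + b) := w.ok_add (w.ok_of_ne ha) hb
  have h1 : w.v (a + b) ≤ w.v a :=
    (w.v_add_le (w.ok_of_ne ha) hb).trans (max_le le_rfl hlt.le)
  refine le_antisymm h1 ?_
  have heq : a = (a + b) + (-b) := by ring
  have h2 : w.v a ≤ max (w.v (a + b)) (w.v (-b)) := by
    conv_lhs => rw [heq]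
    exact w.v_add_le hok (w.ok_neg hb)
  rcases le_max_iff.mp h2 with h | h
  · exact h
  · rw [w.neg'] at h
    exact absurd (h.trans_lt hlt) (lt_irrefl _)

instance : PartialOrder (PV F) where
  le u w := ∀ a, u.v a ≠ 0 → w.v a = u.v a
  le_refl u a _ := rfl
  le_trans u v w huv hvw a ha := by
    have h1 : v.v a = u.v a := huv a ha
    have h2 : v.v a ≠ 0 := by rw [h1]; exact ha
    rw [hvw a h2, h1]
  le_antisymm u v h1 h2 := by
    have : u.v = v.v := by
      funext a
      by_cases ha : u.v a = 0
      · by_cases hb : v.v a = 0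
        · rw [ha, hb]
        · exact absurd (by rw [h2 a hb]; exact hb : u.v a ≠ 0) (not_not.mpr ha)
      · exact (h1 a ha).symm
    cases u; cases v; simpa using this

lemma le_def {u w : PV F} : u ≤ w ↔ ∀ a, u.v a ≠ 0 → w.v a = u.v a := Iff.rfl

lemma v_eq_of_le {u w : PV F} (h : u ≤ w) {a : F} (ha : u.v a ≠ 0) : w.v a = u.v a := h a ha

lemma v_ne_of_le {u w : PV F} (h : u ≤ w) {a : F} (ha : u.v a ≠ 0) : w.v a ≠ 0 := by
  rw [v_eq_of_le h ha]; exact ha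

lemma exists_maximal (v₀ : PV F) : ∃ m : PV F, v₀ ≤ m ∧ ∀ w, m ≤ w → w = m := by
  classical
  have ih : ∀ c ⊆ Set.Ici v₀, IsChain (· ≤ ·) c → ∀ y ∈ c, ∃ ub, ∀ z ∈ c, z ≤ ub := by
    intro c _hsub hchain y hy
    have key : ∀ (a : F) (w w' : PV F), w ∈ c → w' ∈ c → w.v a ≠ 0 → w'.v a ≠ 0 →
        w.v a = w'.v a := by
      intro a w w' hw hw' h h'
      rcases hchain.total hw hw' with hle | hle
      · exact (v_eq_of_le hle h).symm
      · exact v_eq_of_le hle h'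
    set u : F → ℝ≥0 := fun a => if h : ∃ w : PV F, w ∈ c ∧ w.v a ≠ 0 then h.choose.v a else 0
      with hu
    have hu_eq : ∀ (a : F) (w : PV F), w ∈ c → w.v a ≠ 0 → u a = w.v a := by
      intro a w hw hva
      have hex : ∃ w : PV F, w ∈ c ∧ w.v a ≠ 0 := ⟨w, hw, hva⟩
      rw [hu]; dsimp only; rw [dif_pos hex]
      exact key a _ w hex.choose_spec.1 hw hex.choose_spec.2 hva
    have hu_wit : ∀ a : F, u a ≠ 0 → ∃ w : PV F, w ∈ c ∧ w.v a ≠ 0 := by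
      intro a ha
      by_contra h
      rw [hu] at ha; dsimp only at ha; rw [dif_neg h] at ha; exact ha rfl
    have pair : ∀ a b : F, u a ≠ 0 → u b ≠ 0 →
        ∃ w : PV F, w ∈ c ∧ w.v a ≠ 0 ∧ w.v b ≠ 0 := by
      intro a b ha hb
      obtain ⟨w1, h1, hva⟩ := hu_wit a ha
      obtain ⟨w2, h2, hvb⟩ := hu_wit b hb
      rcases hchain.total h1 h2 with h | h
      · exact ⟨w2, h2, v_ne_of_le h hva, hvb⟩
      · exact ⟨w1, h1, hva, v_ne_of_le h hvb⟩
    refine ⟨⟨u, ?_, ?_, ?_, ?_, ?_, ?_⟩, ?_⟩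
    · -- zero
      have : ¬∃ w : PV F, w ∈ c ∧ w.v 0 ≠ 0 := by
        rintro ⟨w, _, hw⟩; exact hw w.zero'
      rw [hu]; dsimp only; rw [dif_neg this]
    · -- one
      have h1 : y.v 1 ≠ 0 := by rw [y.one']; exact one_ne_zero
      rw [hu_eq 1 y hy h1, y.one']
    · -- neg
      intro a
      by_cases ha : u a = 0
      · by_cases hn : u (-a) = 0
        · rw [ha, hn]
        · obtain ⟨w, hw, hva⟩ := hu_wit _ hn
          have : w.v a ≠ 0 := by rwa [← w.neg' a]
          exact absurd (by rw [hu_eq a w hw this]; exact this : u a ≠ 0) (not_not.mpr ha)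
      · obtain ⟨w, hw, hva⟩ := hu_wit _ ha
        have hvn : w.v (-a) ≠ 0 := by rwa [w.neg']
        rw [hu_eq (-a) w hw hvn, hu_eq a w hw hva, w.neg']
    · -- mul
      intro a b ha hb
      obtain ⟨w, hw, hva, hvb⟩ := pair a b ha hb
      have hvab : w.v (a * b) ≠ 0 := by
        rw [w.mul' a b hva hvb]; exact mul_ne_zero hva hvb
      rw [hu_eq _ w hw hvab, hu_eq a w hw hva, hu_eq b w hw hvb, w.mul' a b hva hvb]
    · -- addne
      intro a b ha hb hab
      obtain ⟨w, hw, hva, hvb⟩ := pair a b ha hb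
      have h := w.addne' a b hva hvb hab
      rw [hu_eq _ w hw h]; exact h
    · -- addle
      intro a b ha hb
      obtain ⟨w, hw, hva, hvb⟩ := pair a b ha hb
      rw [hu_eq a w hw hva, hu_eq b w hw hvb]
      by_cases hz : u (a + b) = 0
      · rw [hz]; exact zero_le
      · obtain ⟨w', hw', hvab'⟩ := hu_wit _ hz
        -- align w and w'
        rcases hchain.total hw hw' with h | h
        · have hva' := PV.v_ne_of_le h hva
          have hvb' := PV.v_ne_of_le h hvb
          rw [hu_eq _ w' hw' hvab', ← PV.v_eq_of_le h hva, ← PV.v_eq_of_le h hvb]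
          exact w'.addle' a b hva' hvb'
        · have hvab : w.v (a+b) ≠ 0 := PV.v_ne_of_le h hvab'
          rw [hu_eq _ w hw hvab]
          exact w.addle' a b hva hvb
    · -- upper bound
      intro z hz a ha
      exact hu_eq a z hz ha
  obtain ⟨m, hm₀, hmax⟩ := zorn_le_nonempty_Ici₀ v₀ ih v₀ le_rfl
  exact ⟨m, hm₀, fun w hw => le_antisymm (hmax hw) hw⟩


section Frac

variable (w : PV F) (b : F)

noncomputable def fracV : F → ℝ≥0 := fun a =>
  if h : ∃ n : ℕ, w.v (a * b ^ n) ≠ 0 then w.v (a * b ^ h.choose) / (w.v b) ^ h.choose else 0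

variable {w b}

lemma frac_aux (hb : w.v b ≠ 0) {a : F} {n m : ℕ} (hnm : n ≤ m)
    (hn : w.v (a * b ^ n) ≠ 0) :
    w.v (a * b ^ m) = w.v (a * b ^ n) * (w.v b) ^ (m - n) := by
  have hsplit : a * b ^ m = a * b ^ n * b ^ (m - n) := by
    rw [mul_assoc, ← pow_add, Nat.add_sub_cancel' hnm]
  have hbn : w.v (b ^ (m - n)) ≠ 0 := by
    rw [w.v_pow hb]; exact pow_ne_zero _ hb
  rw [hsplit, w.mul' _ _ hn hbn, w.v_pow hb]

lemma frac_consistent (hb : w.v b ≠ 0) {a : F} {n m : ℕ}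
    (hn : w.v (a * b ^ n) ≠ 0) (hm : w.v (a * b ^ m) ≠ 0) :
    w.v (a * b ^ n) / (w.v b) ^ n = w.v (a * b ^ m) / (w.v b) ^ m := by
  have base : ∀ {n m : ℕ}, n ≤ m → w.v (a * b ^ n) ≠ 0 → w.v (a * b ^ m) ≠ 0 →
      w.v (a * b ^ n) / (w.v b) ^ n = w.v (a * b ^ m) / (w.v b) ^ m := by
    intro n m hnm hn hm
    rw [div_eq_div_iff (pow_ne_zero _ hb) (pow_ne_zero _ hb), frac_aux hb hnm hn,
      mul_assoc, ← pow_add, Nat.sub_add_cancel hnm]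
  rcases le_total n m with h | h
  · exact base h hn hm
  · exact (base h hm hn).symm

lemma fracV_eq (hb : w.v b ≠ 0) {a : F} {n : ℕ} (hn : w.v (a * b ^ n) ≠ 0) :
    fracV w b a = w.v (a * b ^ n) / (w.v b) ^ n := by
  have hex : ∃ k : ℕ, w.v (a * b ^ k) ≠ 0 := ⟨n, hn⟩
  rw [fracV, dif_pos hex]
  exact frac_consistent hb hex.choose_spec hn

lemma fracV_ne (hb : w.v b ≠ 0) {a : F} {n : ℕ} (hn : w.v (a * b ^ n) ≠ 0) :
    fracV w b a ≠ 0 := by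
  rw [fracV_eq hb hn]
  exact div_ne_zero hn (pow_ne_zero _ hb)

lemma fracV_wit {a : F} (h : fracV w b a ≠ 0) : ∃ n : ℕ, w.v (a * b ^ n) ≠ 0 := by
  by_contra hc
  rw [fracV, dif_neg hc] at h
  exact h rfl

noncomputable def fracExt (w : PV F) (b : F) (hb : w.v b ≠ 0) : PV F where
  v := fracV w b
  zero' := by
    have : ¬∃ n : ℕ, w.v ((0:F) * b ^ n) ≠ 0 := by
      rintro ⟨n, hn⟩; rw [zero_mul] at hn; exact hn w.zero'
    rw [fracV, dif_neg this]
  one' := by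
    have h1 : w.v ((1:F) * b ^ 0) ≠ 0 := by
      rw [pow_zero, mul_one, w.one']; exact one_ne_zero
    rw [fracV_eq hb h1, pow_zero, mul_one, w.one', pow_zero, div_one]
  neg' := by
    intro a
    by_cases hex : ∃ n : ℕ, w.v (a * b ^ n) ≠ 0
    · obtain ⟨n, hn⟩ := hex
      have hneg : w.v (-a * b ^ n) ≠ 0 := by
        rw [neg_mul, w.neg']; exact hn
      rw [fracV_eq hb hneg, fracV_eq hb hn, neg_mul, w.neg']
    · have hnex : ¬∃ n : ℕ, w.v (-a * b ^ n) ≠ 0 := by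
        rintro ⟨n, hn⟩
        rw [neg_mul, w.neg'] at hn
        exact hex ⟨n, hn⟩
      rw [fracV, dif_neg hnex, fracV, dif_neg hex]
  mul' := by
    intro x y hx hy
    obtain ⟨n, hn⟩ := fracV_wit hx
    obtain ⟨m, hm⟩ := fracV_wit hy
    have hsplit : x * y * b ^ (n + m) = (x * b ^ n) * (y * b ^ m) := by ring
    have hxy : w.v (x * y * b ^ (n + m)) ≠ 0 := by
      rw [hsplit, w.mul' _ _ hn hm]; exact mul_ne_zero hn hm
    rw [fracV_eq hb hxy, fracV_eq hb hn, fracV_eq hb hm, hsplit, w.mul' _ _ hn hm,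
      div_mul_div_comm, ← pow_add]
  addne' := by
    intro x y hx hy hxy
    obtain ⟨n, hn⟩ := fracV_wit hx
    obtain ⟨m, hm⟩ := fracV_wit hy
    have hb0 : b ≠ 0 := w.ne_zero_of_v_ne hb
    have hxk : w.v (x * b ^ (n + m)) ≠ 0 := by
      rw [frac_aux hb (Nat.le_add_right n m) hn]
      exact mul_ne_zero hn (pow_ne_zero _ hb)
    have hyk : w.v (y * b ^ (n + m)) ≠ 0 := by
      rw [frac_aux hb (Nat.le_add_left m n) hm]
      exact mul_ne_zero hm (pow_ne_zero _ hb)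
    have hsum : x * b ^ (n + m) + y * b ^ (n + m) ≠ 0 := by
      rw [← add_mul]
      exact mul_ne_zero hxy (pow_ne_zero _ hb0)
    have := w.addne' _ _ hxk hyk hsum
    rw [← add_mul] at this
    exact fracV_ne hb this
  addle' := by
    intro x y hx hy
    obtain ⟨n, hn⟩ := fracV_wit hx
    obtain ⟨m, hm⟩ := fracV_wit hy
    set k := n + m with hk
    have hxk : w.v (x * b ^ k) ≠ 0 := by
      rw [frac_aux hb (Nat.le_add_right n m) hn]
      exact mul_ne_zero hn (pow_ne_zero _ hb)
    have hyk : w.v (y * b ^ k) ≠ 0 := by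
      rw [frac_aux hb (Nat.le_add_left m n) hm]
      exact mul_ne_zero hm (pow_ne_zero _ hb)
    by_cases hz : fracV w b (x + y) = 0
    · rw [hz]; exact zero_le
    · obtain ⟨j, hj⟩ := fracV_wit hz
      have hsumj : w.v ((x + y) * b ^ k) ≠ 0 ∨ (x + y) * b ^ k = 0 := by
        have : (x + y) * b ^ k = x * b ^ k + y * b ^ k := by ring
        rw [this]
        exact w.ok_add (w.ok_of_ne hxk) (w.ok_of_ne hyk)
      rcases hsumj with hsumk | hsumk
      · rw [fracV_eq hb hsumk, fracV_eq hb hxk, fracV_eq hb hyk]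
        have hle : w.v ((x + y) * b ^ k) ≤ max (w.v (x * b ^ k)) (w.v (y * b ^ k)) := by
          have : (x + y) * b ^ k = x * b ^ k + y * b ^ k := by ring
          rw [this]
          exact w.addle' _ _ hxk hyk
        rcases le_total (w.v (x * b ^ k)) (w.v (y * b ^ k)) with hc | hc
        · refine le_max_of_le_right ?_
          exact (div_le_div_iff_of_pos_right (pos_iff_ne_zero.mpr (pow_ne_zero _ hb))).mpr
            (hle.trans (max_le hc le_rfl))
        · refine le_max_of_le_left ?_
          exact (div_le_div_iff_of_pos_right (pos_iff_ne_zero.mpr (pow_ne_zero _ hb))).mpr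
            (hle.trans (max_le le_rfl hc))
      · -- (x+y) * b^k = 0 : then x + y = 0, contradicting hz (fracV of 0 is 0)? x+y=0 possible
        -- x + y = 0 → fracV (x+y) = 0
        have hb0 : b ≠ 0 := w.ne_zero_of_v_ne hb
        have hxy0 : x + y = 0 := by
          rcases mul_eq_zero.mp hsumk with h | h
          · exact h
          · exact absurd h (pow_ne_zero _ hb0)
        exfalso
        apply hz
        rw [hxy0]
        have : ¬∃ n : ℕ, w.v ((0:F) * b ^ n) ≠ 0 := by
          rintro ⟨n, hn⟩; rw [zero_mul] at hn; exact hn w.zero'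
        rw [fracV, dif_neg this]

lemma le_fracExt (w : PV F) (b : F) (hb : w.v b ≠ 0) : w ≤ fracExt w b hb := by
  intro a ha
  show fracV w b a = w.v a
  have h0 : w.v (a * b ^ 0) ≠ 0 := by rwa [pow_zero, mul_one]
  rw [fracV_eq hb h0, pow_zero, mul_one, pow_zero, div_one]

lemma fracExt_inv (w : PV F) (b : F) (hb : w.v b ≠ 0) : (fracExt w b hb).v b⁻¹ ≠ 0 := by
  have hb0 : b ≠ 0 := w.ne_zero_of_v_ne hb
  have h1 : w.v (b⁻¹ * b ^ 1) ≠ 0 := by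
    rw [pow_one, inv_mul_cancel₀ hb0, w.one']; exact one_ne_zero
  show fracV w b b⁻¹ ≠ 0
  exact fracV_ne hb h1

lemma maximal_inv {m : PV F} (hmax : ∀ w, m ≤ w → w = m) {b : F} (hb : m.v b ≠ 0) :
    m.v b⁻¹ ≠ 0 := by
  by_contra h
  have hle := le_fracExt m b hb
  have heq := hmax _ hle
  have := fracExt_inv m b hb
  rw [heq] at this
  exact this h

end Frac


section Gauss

open Polynomial

def CoeffsOk (w : PV F) (P : Polynomial F) : Prop := ∀ i, w.Ok (P.coeff i)

lemma coeffsOk_zero (w : PV F) : CoeffsOk w 0 := fun i => by simp [Ok, w.zero']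

lemma coeffsOk_C (w : PV F) {a : F} (h : w.Ok a) : CoeffsOk w (C a) := by
  intro i
  rw [coeff_C]
  split
  · exact h
  · exact w.ok_zero

lemma coeffsOk_X (w : PV F) : CoeffsOk w X := by
  intro i
  rw [coeff_X]
  split
  · exact w.ok_one
  · exact w.ok_zero

lemma coeffsOk_neg (w : PV F) {P : Polynomial F} (h : CoeffsOk w P) : CoeffsOk w (-P) := by
  intro i
  rw [coeff_neg]
  exact w.ok_neg (h i)

lemma coeffsOk_add (w : PV F) {P Q : Polynomial F} (hP : CoeffsOk w P) (hQ : CoeffsOk w Q) :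
    CoeffsOk w (P + Q) := by
  intro i
  rw [coeff_add]
  exact w.ok_add (hP i) (hQ i)

lemma coeffsOk_sub (w : PV F) {P Q : Polynomial F} (hP : CoeffsOk w P) (hQ : CoeffsOk w Q) :
    CoeffsOk w (P - Q) := by
  rw [sub_eq_add_neg]
  exact w.coeffsOk_add hP (w.coeffsOk_neg hQ)

lemma coeffsOk_mul (w : PV F) {P Q : Polynomial F} (hP : CoeffsOk w P) (hQ : CoeffsOk w Q) :
    CoeffsOk w (P * Q) := by
  intro k
  rw [coeff_mul]
  exact w.ok_sum _ _ fun x _ => w.ok_mul (hP x.1) (hQ x.2)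

noncomputable def gaussV (w : PV F) (c : ℝ≥0) (P : Polynomial F) : ℝ≥0 :=
  P.support.sup fun i => w.v (P.coeff i) * c ^ i

lemma g_term_le (w : PV F) (c : ℝ≥0) (P : Polynomial F) (i : ℕ) :
    w.v (P.coeff i) * c ^ i ≤ gaussV w c P := by
  rw [gaussV]
  by_cases h : i ∈ P.support
  · exact Finset.le_sup (f := fun j => w.v (P.coeff j) * c ^ j) h
  · rw [notMem_support_iff.mp h, w.zero', zero_mul]
    exact zero_le

lemma g_zero (w : PV F) (c : ℝ≥0) : gaussV w c 0 = 0 := by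
  simp [gaussV]

lemma g_ne_zero (w : PV F) {c : ℝ≥0} (hc : c ≠ 0) {P : Polynomial F}
    (hP : CoeffsOk w P) (h : P ≠ 0) : gaussV w c P ≠ 0 := by
  have hmem := natDegree_mem_support_of_nonzero h
  have hterm : w.v (P.coeff P.natDegree) * c ^ P.natDegree ≠ 0 := by
    refine mul_ne_zero ?_ (pow_ne_zero _ hc)
    exact w.v_ne_of_ok (hP _) (mem_support_iff.mp hmem)
  intro hsup
  have hle := w.g_term_le c P P.natDegree
  rw [hsup] at hle
  exact hterm (le_antisymm hle zero_le)

lemma g_C (w : PV F) (c : ℝ≥0) (a : F) : gaussV w c (C a) = w.v a := by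
  by_cases ha : a = 0
  · rw [ha, map_zero, g_zero, w.zero']
  · rw [gaussV, support_C ha, Finset.sup_singleton, coeff_C_zero, pow_zero, mul_one]

lemma g_X (w : PV F) (c : ℝ≥0) : gaussV w c (X : Polynomial F) = c := by
  rw [gaussV, support_X, Finset.sup_singleton, coeff_X_one, w.one', pow_one, one_mul]

lemma g_neg (w : PV F) (c : ℝ≥0) (P : Polynomial F) : gaussV w c (-P) = gaussV w c P := by
  rw [gaussV, gaussV, support_neg]
  exact Finset.sup_congr rfl fun i _ => by rw [coeff_neg, w.neg']

lemma g_add_le (w : PV F) (c : ℝ≥0) {P Q : Polynomial F}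
    (hP : CoeffsOk w P) (hQ : CoeffsOk w Q) :
    gaussV w c (P + Q) ≤ max (gaussV w c P) (gaussV w c Q) := by
  refine Finset.sup_le fun i _ => ?_
  rw [coeff_add]
  have h1 : w.v (P.coeff i + Q.coeff i) ≤ max (w.v (P.coeff i)) (w.v (Q.coeff i)) :=
    w.v_add_le (hP i) (hQ i)
  rcases le_total (w.v (P.coeff i)) (w.v (Q.coeff i)) with h | h
  · refine le_max_of_le_right ?_
    exact (mul_le_mul_left (h1.trans (max_le h le_rfl)) _).trans (w.g_term_le c Q i)
  · refine le_max_of_le_left ?_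
    exact (mul_le_mul_left (h1.trans (max_le le_rfl h)) _).trans (w.g_term_le c P i)

lemma g_mul (w : PV F) {c : ℝ≥0} (hc : c ≠ 0) {P Q : Polynomial F}
    (hP : CoeffsOk w P) (hQ : CoeffsOk w Q) (hP0 : P ≠ 0) (hQ0 : Q ≠ 0) :
    gaussV w c (P * Q) = gaussV w c P * gaussV w c Q := by
  classical
  set A := gaussV w c P with hA
  set B := gaussV w c Q with hB
  have hApos : A ≠ 0 := w.g_ne_zero hc hP hP0
  have hBpos : B ≠ 0 := w.g_ne_zero hc hQ hQ0
  have term_eq : ∀ (x : ℕ × ℕ), w.v (P.coeff x.1 * Q.coeff x.2) * c ^ (x.1 + x.2) =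
      (w.v (P.coeff x.1) * c ^ x.1) * (w.v (Q.coeff x.2) * c ^ x.2) := by
    intro x
    rw [w.v_mul_eq (hP x.1) (hQ x.2), pow_add]
    ring
  -- upper bound
  have hub : gaussV w c (P * Q) ≤ A * B := by
    refine Finset.sup_le fun k _ => ?_
    rw [coeff_mul, ← le_div_iff₀ (pos_iff_ne_zero.mpr (pow_ne_zero _ hc))]
    refine w.v_sum_le _ _ _ (fun x _ => w.ok_mul (hP x.1) (hQ x.2)) ?_
    intro x hx
    rw [le_div_iff₀ (pos_iff_ne_zero.mpr (pow_ne_zero _ hc)),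
      ← Finset.HasAntidiagonal.mem_antidiagonal.mp hx, term_eq x]
    exact mul_le_mul' (w.g_term_le c P x.1) (w.g_term_le c Q x.2)
  -- lower bound : find minimal attaining indices
  obtain ⟨iA, hiA, hiAeq⟩ :=
    Finset.exists_mem_eq_sup P.support (support_nonempty.mpr hP0)
      (fun i => w.v (P.coeff i) * c ^ i)
  obtain ⟨jB, hjB, hjBeq⟩ :=
    Finset.exists_mem_eq_sup Q.support (support_nonempty.mpr hQ0)
      (fun j => w.v (Q.coeff j) * c ^ j)
  set sP := P.support.filter (fun i => w.v (P.coeff i) * c ^ i = A) with hsP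
  set sQ := Q.support.filter (fun j => w.v (Q.coeff j) * c ^ j = B) with hsQ
  have hsPne : sP.Nonempty := ⟨iA, Finset.mem_filter.mpr ⟨hiA, hiAeq.symm⟩⟩
  have hsQne : sQ.Nonempty := ⟨jB, Finset.mem_filter.mpr ⟨hjB, hjBeq.symm⟩⟩
  set i₀ := sP.min' hsPne with hi₀
  set j₀ := sQ.min' hsQne with hj₀
  have hi₀mem := Finset.mem_filter.mp (sP.min'_mem hsPne)
  have hj₀mem := Finset.mem_filter.mp (sQ.min'_mem hsQne)
  have hi₀eq : w.v (P.coeff i₀) * c ^ i₀ = A := hi₀mem.2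
  have hj₀eq : w.v (Q.coeff j₀) * c ^ j₀ = B := hj₀mem.2
  have hPlt : ∀ i < i₀, w.v (P.coeff i) * c ^ i < A := by
    intro i hi
    rcases eq_or_ne (w.v (P.coeff i) * c ^ i) A with heq | hne
    · exfalso
      have hmem : i ∈ P.support := by
        rw [mem_support_iff]
        intro h0
        rw [h0, w.zero', zero_mul] at heq
        exact hApos heq.symm
      have : i₀ ≤ i := Finset.min'_le _ _ (Finset.mem_filter.mpr ⟨hmem, heq⟩)
      omega
    · exact lt_of_le_of_ne (w.g_term_le c P i) hne
  have hQlt : ∀ j < j₀, w.v (Q.coeff j) * c ^ j < B := by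
    intro j hj
    rcases eq_or_ne (w.v (Q.coeff j) * c ^ j) B with heq | hne
    · exfalso
      have hmem : j ∈ Q.support := by
        rw [mem_support_iff]
        intro h0
        rw [h0, w.zero', zero_mul] at heq
        exact hBpos heq.symm
      have : j₀ ≤ j := Finset.min'_le _ _ (Finset.mem_filter.mpr ⟨hmem, heq⟩)
      omega
    · exact lt_of_le_of_ne (w.g_term_le c Q j) hne
  set k₀ := i₀ + j₀ with hk₀
  have hpair : ((i₀, j₀) : ℕ × ℕ) ∈ Finset.HasAntidiagonal.antidiagonal k₀ :=
    Finset.HasAntidiagonal.mem_antidiagonal.mpr rfl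
  set main := P.coeff i₀ * Q.coeff j₀ with hmainDef
  have hvmainc : w.v main * c ^ k₀ = A * B := by
    rw [hmainDef, term_eq (i₀, j₀)]
    dsimp only
    rw [hi₀eq, hj₀eq]
  have hvmain : w.v main ≠ 0 := by
    intro h0
    rw [h0, zero_mul] at hvmainc
    exact mul_ne_zero hApos hBpos hvmainc.symm
  -- each other term is strictly smaller
  have hterm_lt : ∀ x ∈ (Finset.HasAntidiagonal.antidiagonal k₀).erase (i₀, j₀),
      w.v (P.coeff x.1 * Q.coeff x.2) < w.v main := by
    intro x hx
    obtain ⟨hxne, hxmem⟩ := Finset.mem_erase.mp hx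
    have hxsum : x.1 + x.2 = k₀ := Finset.HasAntidiagonal.mem_antidiagonal.mp hxmem
    have hcase : x.1 < i₀ ∨ x.2 < j₀ := by
      by_contra hcon
      push_neg at hcon
      have h1 : x.1 = i₀ := by omega
      have h2 : x.2 = j₀ := by omega
      exact hxne (Prod.ext h1 h2)
    have hscaled : w.v (P.coeff x.1 * Q.coeff x.2) * c ^ k₀ < w.v main * c ^ k₀ := by
      rw [hvmainc, ← hxsum, term_eq x]
      rcases hcase with h | h
      · calc w.v (P.coeff x.1) * c ^ x.1 * (w.v (Q.coeff x.2) * c ^ x.2)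
            ≤ w.v (P.coeff x.1) * c ^ x.1 * B := mul_le_mul_right (w.g_term_le c Q x.2) _
          _ < A * B := mul_lt_mul_of_pos_right (hPlt x.1 h) (pos_iff_ne_zero.mpr hBpos)
      · calc w.v (P.coeff x.1) * c ^ x.1 * (w.v (Q.coeff x.2) * c ^ x.2)
            ≤ A * (w.v (Q.coeff x.2) * c ^ x.2) := mul_le_mul_left (w.g_term_le c P x.1) _
          _ < A * B := mul_lt_mul_of_pos_left (hQlt x.2 h) (pos_iff_ne_zero.mpr hApos)
    exact lt_of_mul_lt_mul_right hscaled zero_le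
  -- the k₀ coefficient has value exactly A*B / c^k₀
  set rest := ∑ x ∈ (Finset.HasAntidiagonal.antidiagonal k₀).erase (i₀, j₀), P.coeff x.1 * Q.coeff x.2
    with hrest
  have hcoeff : (P * Q).coeff k₀ = main + rest := by
    rw [coeff_mul, hrest, hmainDef]
    exact (Finset.add_sum_erase _ _ hpair).symm
  have hrestok : w.Ok rest :=
    w.ok_sum _ _ fun x _ => w.ok_mul (hP x.1) (hQ x.2)
  have hrestlt : w.v rest < w.v main := by
    rcases ((Finset.HasAntidiagonal.antidiagonal k₀).erase (i₀, j₀)).eq_empty_or_nonempty with hemp | hne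
    · rw [hrest, hemp, Finset.sum_empty, w.zero']
      exact pos_iff_ne_zero.mpr hvmain
    · obtain ⟨x', hx', hx'eq⟩ := Finset.exists_mem_eq_sup _ hne
        (fun x : ℕ × ℕ => w.v (P.coeff x.1 * Q.coeff x.2))
      refine lt_of_le_of_lt ?_ (hterm_lt x' hx')
      rw [← hx'eq]
      exact w.v_sum_le _ _ _ (fun x _ => w.ok_mul (hP x.1) (hQ x.2))
        (fun x hx => hx'eq ▸ Finset.le_sup (f := fun x : ℕ × ℕ => w.v (P.coeff x.1 * Q.coeff x.2)) hx)
  have hvcoeff : w.v ((P * Q).coeff k₀) = w.v main := by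
    rw [hcoeff]
    exact w.v_add_eq_left hvmain hrestok hrestlt
  refine le_antisymm hub ?_
  calc A * B = w.v ((P * Q).coeff k₀) * c ^ k₀ := by rw [hvcoeff, hvmainc]
    _ ≤ gaussV w c (P * Q) := w.g_term_le c (P * Q) k₀

def GoodT (w : PV F) (t : F) : Prop :=
  ∀ P : Polynomial F, CoeffsOk w P → Polynomial.eval t P = 0 → P = 0

noncomputable def gaussFn (w : PV F) (t : F) (c : ℝ≥0) : F → ℝ≥0 := fun a =>
  if h : ∃ P : Polynomial F, CoeffsOk w P ∧ Polynomial.eval t P = a then gaussV w c h.choose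
  else 0

lemma rep_unique {w : PV F} {t : F} (hT : GoodT w t) {P Q : Polynomial F}
    (hP : CoeffsOk w P) (hQ : CoeffsOk w Q) (he : Polynomial.eval t P = Polynomial.eval t Q) :
    P = Q := by
  have h := hT (P - Q) (w.coeffsOk_sub hP hQ) (by rw [eval_sub, he, sub_self])
  exact sub_eq_zero.mp h

lemma gaussFn_eq {w : PV F} {t : F} (c : ℝ≥0) (hT : GoodT w t) {P : Polynomial F} {a : F}
    (hP : CoeffsOk w P) (he : Polynomial.eval t P = a) :
    gaussFn w t c a = gaussV w c P := by
  have hex : ∃ P : Polynomial F, CoeffsOk w P ∧ Polynomial.eval t P = a := ⟨P, hP, he⟩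
  rw [gaussFn, dif_pos hex]
  congr 1
  exact rep_unique hT hex.choose_spec.1 hP (by rw [hex.choose_spec.2, he])

lemma gaussFn_wit {w : PV F} {t : F} {c : ℝ≥0} {a : F} (h : gaussFn w t c a ≠ 0) :
    ∃ P : Polynomial F, CoeffsOk w P ∧ Polynomial.eval t P = a ∧ P ≠ 0 := by
  by_cases hex : ∃ P : Polynomial F, CoeffsOk w P ∧ Polynomial.eval t P = a
  · refine ⟨hex.choose, hex.choose_spec.1, hex.choose_spec.2, ?_⟩
    intro h0
    rw [gaussFn, dif_pos hex, h0, g_zero] at h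
    exact h rfl
  · rw [gaussFn, dif_neg hex] at h
    exact absurd rfl h

noncomputable def gaussExt (w : PV F) (t : F) (c : ℝ≥0) (hc : c ≠ 0) (hT : GoodT w t) :
    PV F where
  v := gaussFn w t c
  zero' := by
    rw [gaussFn_eq c hT (w.coeffsOk_zero) (by rw [eval_zero]), g_zero]
  one' := by
    rw [gaussFn_eq c hT (w.coeffsOk_C w.ok_one) (by rw [eval_C]), g_C, w.one']
  neg' := by
    intro a
    by_cases hex : ∃ P : Polynomial F, CoeffsOk w P ∧ Polynomial.eval t P = a
    · obtain ⟨P, hP, he⟩ := hex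
      rw [gaussFn_eq c hT hP he,
        gaussFn_eq c hT (w.coeffsOk_neg hP) (by rw [eval_neg, he]), g_neg]
    · have hnex : ¬∃ P : Polynomial F, CoeffsOk w P ∧ Polynomial.eval t P = -a := by
        rintro ⟨P, hP, he⟩
        exact hex ⟨-P, w.coeffsOk_neg hP, by rw [eval_neg, he, neg_neg]⟩
      rw [gaussFn, dif_neg hnex, gaussFn, dif_neg hex]
  mul' := by
    intro x y hx hy
    obtain ⟨P, hP, heP, hP0⟩ := gaussFn_wit hx
    obtain ⟨Q, hQ, heQ, hQ0⟩ := gaussFn_wit hy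
    rw [gaussFn_eq c hT hP heP, gaussFn_eq c hT hQ heQ,
      gaussFn_eq c hT (w.coeffsOk_mul hP hQ) (by rw [eval_mul, heP, heQ]),
      w.g_mul hc hP hQ hP0 hQ0]
  addne' := by
    intro x y hx hy hxy
    obtain ⟨P, hP, heP, hP0⟩ := gaussFn_wit hx
    obtain ⟨Q, hQ, heQ, hQ0⟩ := gaussFn_wit hy
    have hePQ : Polynomial.eval t (P + Q) = x + y := by rw [eval_add, heP, heQ]
    rw [gaussFn_eq c hT (w.coeffsOk_add hP hQ) hePQ]
    refine w.g_ne_zero hc (w.coeffsOk_add hP hQ) ?_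
    intro h0
    rw [h0, eval_zero] at hePQ
    exact hxy hePQ.symm
  addle' := by
    intro x y hx hy
    obtain ⟨P, hP, heP, hP0⟩ := gaussFn_wit hx
    obtain ⟨Q, hQ, heQ, hQ0⟩ := gaussFn_wit hy
    rw [gaussFn_eq c hT hP heP, gaussFn_eq c hT hQ heQ,
      gaussFn_eq c hT (w.coeffsOk_add hP hQ) (by rw [eval_add, heP, heQ])]
    exact w.g_add_le c hP hQ

lemma le_gaussExt (w : PV F) (t : F) (c : ℝ≥0) (hc : c ≠ 0) (hT : GoodT w t) :
    w ≤ gaussExt w t c hc hT := by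
  intro a ha
  show gaussFn w t c a = w.v a
  rw [gaussFn_eq c hT (w.coeffsOk_C (w.ok_of_ne ha)) (by rw [eval_C]), g_C]

lemma gaussExt_t (w : PV F) (t : F) (c : ℝ≥0) (hc : c ≠ 0) (hT : GoodT w t) :
    (gaussExt w t c hc hT).v t = c := by
  show gaussFn w t c t = c
  rw [gaussFn_eq c hT w.coeffsOk_X (by rw [eval_X]), g_X]

lemma maximal_alg {m : PV F} (hmax : ∀ w, m ≤ w → w = m) {t : F} (h0 : m.v t = 0) :
    ∃ P : Polynomial F, CoeffsOk m P ∧ Polynomial.eval t P = 0 ∧ P ≠ 0 := by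
  by_contra h
  push_neg at h
  have hT : GoodT m t := fun P hP he => by
    by_contra hne
    exact hne (h P hP he)
  have heq := hmax _ (le_gaussExt m t 1 one_ne_zero hT)
  have hval := gaussExt_t m t 1 one_ne_zero hT
  rw [heq] at hval
  rw [hval] at h0
  exact one_ne_zero h0

end Gauss




end PV

def Submaximal' (R : Type*) [CommRing R] : Prop :=
  ∃ S : Subring R, S ≠ ⊤ ∧ ∀ T : Subring R, S < T → T = ⊤

theorem criterion {R : Type*} [CommRing R] (T : Subring R) (x : R) (hx : x ∉ T)
    (hgen : ∀ r : R, r ∈ Subring.closure (↑T ∪ {x})) : Submaximal' R := by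
  classical
  set s : Set (Subring R) := {W | T ≤ W ∧ x ∉ W} with hs
  have hTs : T ∈ s := ⟨le_rfl, hx⟩
  have ih : ∀ c ⊆ s, IsChain (· ≤ ·) c → ∀ y ∈ c, ∃ ub ∈ s, ∀ z ∈ c, z ≤ ub := by
    intro c hcs hchain y hy
    refine ⟨sSup c, ⟨?_, ?_⟩, fun z hz => le_sSup hz⟩
    · exact (hcs hy).1.trans (le_sSup hy)
    · intro hmem
      rw [Subring.mem_sSup_of_directedOn ⟨y, hy⟩ hchain.directedOn] at hmem
      obtain ⟨W, hW, hxW⟩ := hmem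
      exact (hcs hW).2 hxW
  obtain ⟨M, hTM, hMmax⟩ := zorn_le_nonempty₀ s ih T hTs
  refine ⟨M, ?_, ?_⟩
  · intro htop
    exact hMmax.1.2 (htop ▸ Subring.mem_top x)
  · intro W hMW
    have hxW : x ∈ W := by
      by_contra hxW
      have hWs : W ∈ s := ⟨hMmax.1.1.trans hMW.le, hxW⟩
      exact absurd (le_antisymm (hMmax.2 hWs hMW.le) hMW.le) hMW.ne'
    rw [eq_top_iff]
    intro r _
    have hsub : Subring.closure (↑T ∪ {x}) ≤ W := by
      rw [Subring.closure_le]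
      rintro y (hy | hy)
      · exact hMW.le (hMmax.1.1 hy)
      · rw [Set.mem_singleton_iff] at hy
        exact hy ▸ hxW
    exact hsub (hgen r)

namespace PV

def ringO (m : PV F) : Subring F where
  carrier := {a : F | m.Ok a ∧ m.v a ≤ 1}
  zero_mem' := ⟨m.ok_zero, by rw [m.zero']; exact zero_le⟩
  one_mem' := ⟨m.ok_one, by rw [m.one']⟩
  add_mem' := fun {a b} ha hb =>
    ⟨m.ok_add ha.1 hb.1, (m.v_add_le ha.1 hb.1).trans (max_le ha.2 hb.2)⟩
  mul_mem' := fun {a b} ha hb =>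
    ⟨m.ok_mul ha.1 hb.1, by rw [m.v_mul_eq ha.1 hb.1]; exact mul_le_one' ha.2 hb.2⟩
  neg_mem' := fun {a} ha => ⟨m.ok_neg ha.1, by rw [m.neg']; exact ha.2⟩

lemma mem_ringO {m : PV F} {a : F} : a ∈ m.ringO ↔ m.Ok a ∧ m.v a ≤ 1 := Iff.rfl

end PV

open PV Polynomial in
theorem core {R : Type*} [CommRing R] [IsDomain R] {F : Type*} [Field F] [Algebra R F]
    [IsFractionRing R F] (ξ η : R) (hinv : ξ * η = 1)
    (v₀ : PV F)
    (hv : 1 < v₀.v (algebraMap R F ξ)) :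
    Submaximal' R := by
  classical
  set φ := algebraMap R F with hφ
  have hφinj : Function.Injective φ := IsFractionRing.injective R F
  obtain ⟨m, hm₀, hmax⟩ := PV.exists_maximal v₀
  have hX0 : v₀.v (φ ξ) ≠ 0 := (lt_of_le_of_lt zero_le_one hv).ne'
  set X := m.v (φ ξ) with hXdef
  have hXv : X = v₀.v (φ ξ) := hm₀ _ hX0
  have hX1 : 1 < X := hXv ▸ hv
  have hXne : X ≠ 0 := (lt_of_le_of_lt zero_le_one hX1).ne'
  have hφinv : φ ξ * φ η = 1 := by rw [← map_mul, hinv, map_one]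
  have hξinv : (φ ξ)⁻¹ = φ η := inv_eq_of_mul_eq_one_right hφinv
  have hηv : m.v (φ η) ≠ 0 := by
    rw [← hξinv]
    exact PV.maximal_inv hmax hXne
  have hηX : X * m.v (φ η) = 1 := by
    rw [← m.mul' _ _ hXne hηv, hφinv, m.one']
  set O : Subring F := m.ringO with hO
  letI : Algebra ↥O F := O.subtype.toAlgebra
  have halgmap : ∀ a : ↥O, algebraMap ↥O F a = (a : F) := fun a => rfl
  have hcoeffO : ∀ (P : Polynomial ↥O) (i : ℕ),
      m.Ok ((P.coeff i : F)) ∧ m.v ((P.coeff i : F)) ≤ 1 := by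
    intro P i
    exact PV.mem_ringO.mp (P.coeff i).2
  -- ξ is not integral over O
  have hξnotint : ¬ IsIntegral ↥O (φ ξ) := by
    rintro ⟨P, hPmonic, hPeval⟩
    set n := P.natDegree with hn
    have hXpowok : ∀ i : ℕ, m.Ok (φ ξ ^ i) := fun i =>
      m.ok_of_ne (by rw [m.v_pow hXne]; exact pow_ne_zero _ hXne)
    rcases Nat.eq_zero_or_pos n with hn0 | hn1
    · rw [Polynomial.eval₂_eq_sum_range, ← hn, hn0] at hPeval
      rw [Finset.sum_range_succ, Finset.sum_range_zero, zero_add, pow_zero, mul_one] at hPeval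
      have hc1 : P.coeff 0 = 1 := by
        have := hPmonic.coeff_natDegree
        rwa [← hn, hn0] at this
      rw [hc1, map_one] at hPeval
      exact one_ne_zero hPeval
    · rw [Polynomial.eval₂_eq_sum_range, ← hn, Finset.sum_range_succ,
        hPmonic.coeff_natDegree] at hPeval
      rw [map_one, one_mul] at hPeval
      have hrel : (φ ξ) ^ n = - ∑ i ∈ Finset.range n, ((P.coeff i : F)) * φ ξ ^ i := by
        have := eq_neg_of_add_eq_zero_right hPeval
        simpa only [halgmap] using this
      have hlhs : m.v ((φ ξ) ^ n) = X ^ n := m.v_pow hXne n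
      have hrhs : m.v ((φ ξ) ^ n) ≤ X ^ (n - 1) := by
        rw [hrel, m.neg']
        refine m.v_sum_le _ _ _ ?_ ?_
        · intro i _
          exact m.ok_mul (hcoeffO P i).1 (hXpowok i)
        · intro i hi
          rw [m.v_mul_eq (hcoeffO P i).1 (hXpowok i), m.v_pow hXne]
          calc m.v ((P.coeff i : F)) * X ^ i ≤ 1 * X ^ i :=
                mul_le_mul_left (hcoeffO P i).2 _
            _ = X ^ i := one_mul _
            _ ≤ X ^ (n - 1) := pow_le_pow_right₀ hX1.le
                (by have := Finset.mem_range.mp hi; omega)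
      rw [hlhs] at hrhs
      have hsplit : X ^ (n - 1) * X ≤ X ^ (n - 1) * 1 := by
        rw [mul_one, ← pow_succ, Nat.sub_add_cancel hn1]
        exact hrhs
      have := le_of_mul_le_mul_left hsplit
        (pos_iff_ne_zero.mpr (pow_ne_zero _ hXne))
      exact absurd (lt_of_lt_of_le hX1 this) (lt_irrefl _)
  set T : Subring R := Subring.comap (algebraMap R F) (Subalgebra.toSubring (integralClosure ↥O F))
    with hT
  have hxT : ξ ∉ T := by
    intro h
    rw [hT, Subring.mem_comap] at h
    exact hξnotint h
  refine criterion T ξ hxT ?_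
  intro r
  suffices h : ∃ k : ℕ, IsIntegral ↥O (φ (r * η ^ k)) by
    obtain ⟨k, hk⟩ := h
    have hmemT : r * η ^ k ∈ T := by
      rw [hT, Subring.mem_comap]
      exact hk
    have hr : r = (r * η ^ k) * ξ ^ k := by
      rw [mul_assoc, ← mul_pow, mul_comm η ξ, hinv, one_pow, mul_one]
    rw [hr]
    have h1 : (r * η ^ k : R) ∈ Subring.closure (↑T ∪ {ξ}) :=
      Subring.subset_closure (Set.mem_union_left _ hmemT)
    have h2 : (ξ : R) ∈ Subring.closure (↑T ∪ {ξ}) :=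
      Subring.subset_closure (Set.mem_union_right _ (Set.mem_singleton ξ))
    exact Subring.mul_mem _ h1 (Subring.pow_mem _ h2 k)
  have hηpow : ∀ k : ℕ, m.v ((φ η) ^ k) ≠ 0 := fun k => by
    rw [m.v_pow hηv]; exact pow_ne_zero _ hηv
  by_cases hr0 : m.v (φ r) ≠ 0
  · -- r has nonzero value : scale it into O
    obtain ⟨k, hk⟩ := pow_unbounded_of_one_lt (m.v (φ r)) hX1
    refine ⟨k, ?_⟩
    have hmem : φ r * (φ η) ^ k ∈ O := by
      rw [hO, PV.mem_ringO]
      constructor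
      · exact m.ok_mul (m.ok_of_ne hr0) (m.ok_of_ne (hηpow k))
      · rw [m.v_mul_eq (m.ok_of_ne hr0) (m.ok_of_ne (hηpow k)), m.v_pow hηv]
        calc m.v (φ r) * m.v (φ η) ^ k ≤ X ^ k * m.v (φ η) ^ k :=
              mul_le_mul_left hk.le _
          _ = (X * m.v (φ η)) ^ k := (mul_pow _ _ _).symm
          _ = 1 := by rw [hηX, one_pow]
    have heq : φ (r * η ^ k) = algebraMap ↥O F ⟨φ r * (φ η) ^ k, hmem⟩ := by
      rw [halgmap, map_mul, map_pow]
    rw [heq]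
    exact isIntegral_algebraMap
  · push_neg at hr0
    by_cases hrz : φ r = 0
    · refine ⟨0, ?_⟩
      have h0 : φ (r * η ^ 0) = 0 := by rw [pow_zero, mul_one, hrz]
      rw [h0]
      exact isIntegral_zero
    · -- r is algebraic over the support of m
      obtain ⟨P, hPok, hPeval, hP0⟩ := PV.maximal_alg hmax hr0
      have hlead : m.v P.leadingCoeff ≠ 0 :=
        m.v_ne_of_ok (hPok P.natDegree) (leadingCoeff_ne_zero.mpr hP0)
      have hleadinv : m.v (P.leadingCoeff)⁻¹ ≠ 0 := PV.maximal_inv hmax hlead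
      set G := P * C (P.leadingCoeff)⁻¹ with hG
      have hGmonic : G.Monic := monic_mul_leadingCoeff_inv hP0
      have hGok : PV.CoeffsOk m G := by
        intro i
        rw [hG, coeff_mul_C]
        exact m.ok_mul (hPok i) (m.ok_of_ne hleadinv)
      have hGeval : Polynomial.eval (φ r) G = 0 := by
        rw [hG, eval_mul, hPeval, zero_mul]
      set N := G.natDegree with hN
      have hN1 : 1 ≤ N := by
        rcases Nat.eq_zero_or_pos N with h0 | h1
        · exfalso
          have hG1 : G = 1 := hGmonic.natDegree_eq_zero.mp h0
          rw [hG1, eval_one] at hGeval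
          exact one_ne_zero hGeval
        · exact h1
      -- choose k large enough
      obtain ⟨k, hk⟩ := pow_unbounded_of_one_lt
        ((Finset.range N).sup fun i => m.v (G.coeff i)) hX1
      have hcoeffb : ∀ i, i < N → m.v (G.coeff i) ≤ X ^ k := fun i hi =>
        ((Finset.le_sup (f := fun i => m.v (G.coeff i)) (Finset.mem_range.mpr hi)).trans hk.le)
      set y := φ r * (φ η) ^ k with hy
      set b : ℕ → F := fun i => G.coeff i * (φ η) ^ (k * (N - i)) with hb
      have hbO : ∀ i, i < N → b i ∈ O := by
        intro i hi
        rw [hO, PV.mem_ringO]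
        refine ⟨m.ok_mul (hGok i) (m.ok_of_ne (hηpow _)), ?_⟩
        rw [hb]
        rw [m.v_mul_eq (hGok i) (m.ok_of_ne (hηpow _)), m.v_pow hηv]
        by_cases h0 : m.v (G.coeff i) = 0
        · rw [h0, zero_mul]
          exact zero_le
        · have h1 : m.v (G.coeff i) ≤ X ^ (k * (N - i)) := by
            refine (hcoeffb i hi).trans (pow_le_pow_right₀ hX1.le ?_)
            have : 1 ≤ N - i := by omega
            calc k = k * 1 := (mul_one k).symm
              _ ≤ k * (N - i) := Nat.mul_le_mul_left k this
          calc m.v (G.coeff i) * m.v (φ η) ^ (k * (N - i))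
              ≤ X ^ (k * (N - i)) * m.v (φ η) ^ (k * (N - i)) := mul_le_mul_left h1 _
            _ = (X * m.v (φ η)) ^ (k * (N - i)) := (mul_pow _ _ _).symm
            _ = 1 := by rw [hηX, one_pow]
      set bO : ℕ → ↥O := fun i => if h : i < N then ⟨b i, hbO i h⟩ else 0 with hbOdef
      have hbOcoe : ∀ i, i < N → (bO i : F) = b i := by
        intro i hi
        rw [hbOdef]
        simp only [dif_pos hi]
      set Q : Polynomial ↥O :=
        Polynomial.X ^ N + ∑ i ∈ Finset.range N, C (bO i) * Polynomial.X ^ i with hQ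
      have hQmonic : Q.Monic := by
        rw [hQ]
        refine monic_X_pow_add ?_
        refine lt_of_le_of_lt (degree_sum_le _ _) ?_
        rw [Finset.sup_lt_iff (by exact WithBot.bot_lt_coe N)]
        intro i hi
        exact lt_of_le_of_lt (degree_C_mul_X_pow_le i (bO i))
          (WithBot.coe_lt_coe.mpr (Finset.mem_range.mp hi))
      have hGrel : (φ r) ^ N + ∑ i ∈ Finset.range N, G.coeff i * (φ r) ^ i = 0 := by
        have := hGeval
        rw [Polynomial.eval_eq_sum_range, ← hN, Finset.sum_range_succ] at this
        rw [hGmonic.coeff_natDegree, one_mul] at this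
        rw [add_comm]
        exact this
      have hterm : ∀ i ∈ Finset.range N, (bO i : F) * y ^ i
          = G.coeff i * (φ r) ^ i * (φ η) ^ (k * N) := by
        intro i hi
        have hiN := Finset.mem_range.mp hi
        have hexp : k * (N - i) + k * i = k * N := by
          rw [← Nat.mul_add, Nat.sub_add_cancel hiN.le]
        rw [hbOcoe i hiN]
        calc b i * y ^ i
            = G.coeff i * (φ r) ^ i * ((φ η) ^ (k * (N - i)) * (φ η) ^ (k * i)) := by
              rw [hb, hy, mul_pow, ← pow_mul]
              ring
          _ = G.coeff i * (φ r) ^ i * (φ η) ^ (k * N) := by rw [← pow_add, hexp]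
      have htop : y ^ N = (φ r) ^ N * (φ η) ^ (k * N) := by
        rw [hy, mul_pow, ← pow_mul]
      have hsum0 : y ^ N + ∑ i ∈ Finset.range N, (bO i : F) * y ^ i = 0 := by
        calc y ^ N + ∑ i ∈ Finset.range N, (bO i : F) * y ^ i
            = ((φ r) ^ N + ∑ i ∈ Finset.range N, G.coeff i * (φ r) ^ i) * (φ η) ^ (k * N) := by
              rw [htop, Finset.sum_congr rfl hterm, ← Finset.sum_mul, ← add_mul]
          _ = 0 := by rw [hGrel, zero_mul]
      have heval : Polynomial.eval₂ (algebraMap ↥O F) y Q = 0 := by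
        rw [hQ, eval₂_add, eval₂_X_pow, eval₂_finset_sum]
        have : ∀ i ∈ Finset.range N,
            Polynomial.eval₂ (algebraMap ↥O F) y (C (bO i) * Polynomial.X ^ i) = (bO i : F) * y ^ i := by
          intro i _
          rw [eval₂_mul, eval₂_C, eval₂_X_pow, halgmap]
        rw [Finset.sum_congr rfl this]
        exact hsum0
      refine ⟨k, ?_⟩
      have hyeq : φ (r * η ^ k) = y := by rw [map_mul, map_pow, hy]
      rw [hyeq]
      exact ⟨Q, hQmonic, heval⟩




section OfField

variable {F : Type*} [Field F] {K : Type*} [Field K]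

variable (j : K →+* F) (ν : K → ℝ≥0)

noncomputable def ofFieldFn : F → ℝ≥0 := fun a => if h : ∃ b : K, j b = a then ν h.choose else 0

variable {j ν}

lemma ofFieldFn_eq (b : K) : ofFieldFn j ν (j b) = ν b := by
  have hex : ∃ b' : K, j b' = j b := ⟨b, rfl⟩
  rw [ofFieldFn, dif_pos hex]
  congr 1
  exact j.injective hex.choose_spec

lemma ofFieldFn_wit {a : F} (h : ofFieldFn j ν a ≠ 0) : ∃ b : K, j b = a := by
  by_contra hc
  rw [ofFieldFn, dif_neg hc] at h
  exact h rfl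

noncomputable def PV.ofFieldHom
    (h0 : ν 0 = 0) (h1 : ν 1 = 1)
    (hmul : ∀ a b : K, ν (a * b) = ν a * ν b)
    (hadd : ∀ a b : K, ν (a + b) ≤ max (ν a) (ν b))
    (hne : ∀ a : K, a ≠ 0 → ν a ≠ 0)
    (hneg : ∀ a : K, ν (-a) = ν a) : PV F where
  v := ofFieldFn j ν
  zero' := by rw [← map_zero j, ofFieldFn_eq, h0]
  one' := by rw [← map_one j, ofFieldFn_eq, h1]
  neg' := by
    intro a
    by_cases hex : ∃ b : K, j b = a
    · obtain ⟨b, rfl⟩ := hex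
      rw [← map_neg, ofFieldFn_eq, ofFieldFn_eq, hneg]
    · have hnex : ¬∃ b : K, j b = -a := by
        rintro ⟨b, hb⟩
        exact hex ⟨-b, by rw [map_neg, hb, neg_neg]⟩
      rw [ofFieldFn, dif_neg hnex, ofFieldFn, dif_neg hex]
  mul' := by
    intro x y hx hy
    obtain ⟨bx, rfl⟩ := ofFieldFn_wit hx
    obtain ⟨by', rfl⟩ := ofFieldFn_wit hy
    rw [← map_mul, ofFieldFn_eq, ofFieldFn_eq, ofFieldFn_eq, hmul]
  addne' := by
    intro x y hx hy hxy
    obtain ⟨bx, rfl⟩ := ofFieldFn_wit hx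
    obtain ⟨by', rfl⟩ := ofFieldFn_wit hy
    rw [← map_add j bx by', ofFieldFn_eq]
    refine hne _ fun h0' => hxy ?_
    rw [← map_add j bx by', h0', map_zero]
  addle' := by
    intro x y hx hy
    obtain ⟨bx, rfl⟩ := ofFieldFn_wit hx
    obtain ⟨by', rfl⟩ := ofFieldFn_wit hy
    rw [← map_add j bx by', ofFieldFn_eq, ofFieldFn_eq, ofFieldFn_eq]
    exact hadd _ _

lemma PV.ofFieldHom_eq (h0 : ν 0 = 0) (h1 : ν 1 = 1)
    (hmul : ∀ a b : K, ν (a * b) = ν a * ν b)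
    (hadd : ∀ a b : K, ν (a + b) ≤ max (ν a) (ν b))
    (hne : ∀ a : K, a ≠ 0 → ν a ≠ 0)
    (hneg : ∀ a : K, ν (-a) = ν a) (b : K) :
    (PV.ofFieldHom (j := j) h0 h1 hmul hadd hne hneg).v (j b) = ν b :=
  ofFieldFn_eq b

end OfField

section Trivial

variable {F : Type*} [Field F]

noncomputable def trivFn (S : Subring F) : F → ℝ≥0 := fun a => if a ∈ S ∧ a ≠ 0 then 1 else 0

lemma trivFn_wit {S : Subring F} {a : F} (h : trivFn S a ≠ 0) : a ∈ S ∧ a ≠ 0 := by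
  by_contra hc
  rw [trivFn, if_neg hc] at h
  exact h rfl

lemma trivFn_pos {S : Subring F} {a : F} (h : a ∈ S ∧ a ≠ 0) : trivFn S a = 1 := if_pos h

lemma trivFn_neg {S : Subring F} {a : F} (h : ¬(a ∈ S ∧ a ≠ 0)) : trivFn S a = 0 := if_neg h

noncomputable def PV.trivial (S : Subring F) : PV F where
  v := trivFn S
  zero' := trivFn_neg (by simp)
  one' := trivFn_pos ⟨S.one_mem, one_ne_zero⟩
  neg' := by
    intro a
    by_cases h : a ∈ S ∧ a ≠ 0
    · rw [trivFn_pos h, trivFn_pos ⟨S.neg_mem h.1, neg_ne_zero.mpr h.2⟩]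
    · rw [trivFn_neg h, trivFn_neg ?_]
      intro hc
      exact h ⟨by simpa using S.neg_mem hc.1, by simpa using neg_ne_zero.mp hc.2⟩
  mul' := by
    intro a b ha hb
    have ha' := trivFn_wit ha
    have hb' := trivFn_wit hb
    rw [trivFn_pos ha', trivFn_pos hb',
      trivFn_pos ⟨S.mul_mem ha'.1 hb'.1, mul_ne_zero ha'.2 hb'.2⟩, mul_one]
  addne' := by
    intro a b ha hb hab
    have ha' := trivFn_wit ha
    have hb' := trivFn_wit hb
    rw [trivFn_pos ⟨S.add_mem ha'.1 hb'.1, hab⟩]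
    exact one_ne_zero
  addle' := by
    intro a b ha hb
    have ha' := trivFn_wit ha
    rw [trivFn_pos ha']
    by_cases h : a + b ∈ S ∧ a + b ≠ 0
    · rw [trivFn_pos h]
      exact le_max_left _ _
    · rw [trivFn_neg h]
      exact zero_le

lemma PV.trivial_v_ne {S : Subring F} {a : F} :
    (PV.trivial S).v a ≠ 0 ↔ a ∈ S ∧ a ≠ 0 := by
  constructor
  · exact trivFn_wit
  · intro h
    show trivFn S a ≠ 0
    rw [trivFn_pos h]
    exact one_ne_zero

end Trivial

section Seeds

open IsDedekindDomain IsDedekindDomain.HeightOneSpectrum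

theorem seedI {R : Type*} [CommRing R] [IsDomain R] {F : Type*} [Field F] [Algebra R F]
    [IsFractionRing R F]
    (D : Subring R) [IsDomain ↥D] [IsPrincipalIdealRing ↥D]
    (p : ↥D) (hp : Prime p) (ξ : R) (hinv : ξ * (p : R) = 1) : Submaximal' R := by
  classical
  set K₀ := FractionRing ↥D with hK₀
  have hDinj : Function.Injective ((algebraMap R F).comp D.subtype) :=
    (IsFractionRing.injective R F).comp Subtype.coe_injective
  set j : K₀ →+* F := IsFractionRing.lift (g := (algebraMap R F).comp D.subtype) hDinj with hj
  set v : HeightOneSpectrum ↥D :=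
    ⟨Ideal.span {p}, (Ideal.span_singleton_prime hp.ne_zero).mpr hp,
      by simp [Ne, Ideal.span_singleton_eq_bot, hp.ne_zero]⟩ with hv
  have h2 : (1 : ℝ≥0) < 2 := one_lt_two
  have h2' : (2 : ℝ≥0) ≠ 0 := two_ne_zero
  set ν : K₀ → ℝ≥0 := fun b => WithZeroMulInt.toNNReal h2' ((v.valuation K₀ : Valuation K₀ (WithZero (Multiplicative ℤ))) b)
    with hν
  have hν0 : ν 0 = 0 := by rw [hν]; simp
  have hν1 : ν 1 = 1 := by rw [hν]; simp
  have hνmul : ∀ a b : K₀, ν (a * b) = ν a * ν b := by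
    intro a b; rw [hν]; simp only [map_mul]
  have hνadd : ∀ a b : K₀, ν (a + b) ≤ max (ν a) (ν b) := by
    intro a b
    rw [hν]
    dsimp only
    calc WithZeroMulInt.toNNReal h2' ((v.valuation K₀ : Valuation K₀ (WithZero (Multiplicative ℤ))) (a + b))
        ≤ WithZeroMulInt.toNNReal h2'
          (max ((v.valuation K₀ : Valuation K₀ (WithZero (Multiplicative ℤ))) a) ((v.valuation K₀ : Valuation K₀ (WithZero (Multiplicative ℤ))) b)) :=
          (WithZeroMulInt.toNNReal_strictMono h2).monotone (Valuation.map_add _ _ _)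
      _ = _ := (WithZeroMulInt.toNNReal_strictMono h2).monotone.map_max
  have hνne : ∀ a : K₀, a ≠ 0 → ν a ≠ 0 := by
    intro a ha
    rw [hν]
    exact WithZeroMulInt.toNNReal_ne_zero h2' ((Valuation.ne_zero_iff _).mpr ha)
  have hνneg : ∀ a : K₀, ν (-a) = ν a := by
    intro a; rw [hν]; simp only [Valuation.map_neg]
  set v₀ : PV F := PV.ofFieldHom (j := j) hν0 hν1 hνmul hνadd hνne hνneg with hv₀
  -- compute the value at ξ
  set π : K₀ := algebraMap ↥D K₀ p with hπ
  have hπ0 : π ≠ 0 := by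
    rw [hπ]
    intro h
    exact hp.ne_zero ((IsFractionRing.injective ↥D K₀) (by rw [h, map_zero]))
  have hjπ : j π = algebraMap R F (p : R) := by
    rw [hπ, hj, IsFractionRing.lift_algebraMap]
    rfl
  have hjπ0 : j π ≠ 0 := fun h => hπ0 (j.injective (by rw [h, map_zero]))
  have hφξ : algebraMap R F ξ = j π⁻¹ := by
    have h1 : algebraMap R F ξ * j π = 1 := by
      rw [hjπ, ← map_mul, hinv, map_one]
    have h2'' : j π⁻¹ * j π = 1 := by
      rw [← map_mul, inv_mul_cancel₀ hπ0, map_one]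
    exact mul_right_cancel₀ hjπ0 (by rw [h1, h2''])
  have hπval : (v.valuation K₀ : Valuation K₀ (WithZero (Multiplicative ℤ))) π = v.intValuation p := by
    rw [hπ]
    exact valuation_of_algebraMap v p
  have hintval : v.intValuation p = Multiplicative.ofAdd (-1 : ℤ) :=
    intValuation_singleton v hp.ne_zero rfl
  have hνπ : ν π < 1 ∧ ν π ≠ 0 := by
    constructor
    · rw [hν]
      dsimp only
      rw [← map_one (WithZeroMulInt.toNNReal h2')]
      refine (WithZeroMulInt.toNNReal_strictMono h2) ?_
      rw [hπval, hintval]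
      rw [← WithZero.coe_one, WithZero.coe_lt_coe]
      exact Multiplicative.ofAdd_lt.mpr (by norm_num)
    · exact hνne π hπ0
  have hval : 1 < v₀.v (algebraMap R F ξ) := by
    rw [hφξ, hv₀, PV.ofFieldHom_eq]
    have hνinv : ν π⁻¹ * ν π = 1 := by
      rw [← hνmul, inv_mul_cancel₀ hπ0, hν1]
    have : ν π⁻¹ = (ν π)⁻¹ := eq_inv_of_mul_eq_one_left hνinv
    rw [this]
    exact one_lt_inv_iff₀.mpr ⟨pos_iff_ne_zero.mpr hνπ.2, hνπ.1⟩
  exact core ξ (p : R) hinv v₀ hval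

end Seeds


section SeedII

theorem seedII {R : Type*} [CommRing R] [IsDomain R] {F : Type*} [Field F] [Algebra R F]
    [IsFractionRing R F] (D : Subring R) (x y : R) (hinv : x * y = 1)
    (htr : ¬∃ P : Polynomial R, P ≠ 0 ∧ (∀ i, P.coeff i ∈ D) ∧ P.eval x = 0) :
    Submaximal' R := by
  classical
  set φ := algebraMap R F with hφ
  set SD := D.map φ with hSD
  have hGood : PV.GoodT (PV.trivial SD) (φ x) := by
    intro P hPok hPeval
    by_contra hP0
    have hmem : ∀ i, P.coeff i ∈ SD := by
      intro i
      rcases hPok i with h | h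
      · exact (PV.trivial_v_ne.mp h).1
      · rw [h]; exact SD.zero_mem
    choose cfun hcfunD hcfun using fun i => Subring.mem_map.mp (hmem i)
    set Pr : Polynomial R := ∑ i ∈ P.support, Polynomial.monomial i (cfun i) with hPr
    have hPrmap : Pr.map φ = P := by
      rw [hPr, Polynomial.map_sum]
      conv_rhs => rw [P.as_sum_support]
      refine Finset.sum_congr rfl fun i _ => ?_
      rw [Polynomial.map_monomial, hcfun i]
    have hPr0 : Pr ≠ 0 := by
      intro h
      rw [h, Polynomial.map_zero] at hPrmap
      exact hP0 hPrmap.symm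
    have hPrcoeff : ∀ j, Pr.coeff j ∈ D := by
      intro j
      rw [hPr, Polynomial.finset_sum_coeff]
      refine Subring.sum_mem _ fun i _ => ?_
      rw [Polynomial.coeff_monomial]
      split
      · exact hcfunD i
      · exact D.zero_mem
    have hPreval : Pr.eval x = 0 := by
      have h1 : φ (Pr.eval x) = 0 := by
        calc φ (Pr.eval x) = Polynomial.eval₂ φ (φ x) Pr := (Polynomial.eval₂_at_apply φ x).symm
          _ = (Pr.map φ).eval (φ x) := (Polynomial.eval_map φ (φ x)).symm
          _ = 0 := by rw [hPrmap]; exact hPeval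
      have hφinj : Function.Injective φ := IsFractionRing.injective R F
      exact hφinj (by rw [h1, map_zero])
    exact htr ⟨Pr, hPr0, hPrcoeff, hPreval⟩
  set v₀ := PV.gaussExt (PV.trivial SD) (φ x) 2 two_ne_zero hGood with hv₀
  have hval : 1 < v₀.v (φ x) := by
    rw [hv₀, PV.gaussExt_t]
    exact one_lt_two
  exact core x y hinv v₀ hval

end SeedII

lemma exists_prime_dvd {A : Type*} [CommRing A] [IsDomain A] [UniqueFactorizationMonoid A]
    {a : A} (ha : a ≠ 0) (hu : ¬IsUnit a) : ∃ p q : A, Prime p ∧ p * q = a := by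
  obtain ⟨f, hf, hassoc⟩ := UniqueFactorizationMonoid.exists_prime_factors a ha
  rcases Multiset.empty_or_exists_mem f with h | ⟨p, hp⟩
  · exfalso
    rw [h] at hassoc
    rw [Multiset.prod_zero] at hassoc
    exact hu (associated_one_iff_isUnit.mp hassoc.symm)
  · obtain ⟨f', rfl⟩ := Multiset.exists_cons_of_mem hp
    obtain ⟨u, hu'⟩ := hassoc
    refine ⟨p, f'.prod * u, hf p hp, ?_⟩
    rw [← hu', Multiset.prod_cons, mul_assoc]

theorem mainThm {R : Type*} [CommRing R] [IsDomain R] (D : Subring R)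
    [IsDomain ↥D] [IsPrincipalIdealRing ↥D]
    (hic : ∀ x : R, (∃ p : Polynomial R, p.Monic ∧ (∀ i, p.coeff i ∈ D) ∧ p.eval x = 0) → x ∈ D)
    (hU : ∃ x : R, IsUnit x ∧ ¬ (x ∈ D ∧ ∃ y ∈ D, x * y = 1)) :
    Submaximal' R := by
  classical
  obtain ⟨x, hxu, hxbad⟩ := hU
  obtain ⟨y, hxy⟩ := hxu.exists_right_inv
  have hcoe_ne : ∀ g : ↥D, g ≠ 0 → (g : R) ≠ 0 := by
    intro g hg h
    exact hg (Subtype.ext h)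
  by_cases hxD : x ∈ D
  · -- x lies in D, so it is a nonunit of D whose inverse exists in R
    have hnoinv : ¬∃ y' ∈ D, x * y' = 1 := fun h => hxbad ⟨hxD, h⟩
    set d : ↥D := ⟨x, hxD⟩ with hd
    have hx0 : x ≠ 0 := hxu.ne_zero
    have hd0 : d ≠ 0 := fun h => hx0 (by rw [hd] at h; exact congrArg Subtype.val h)
    have hdnu : ¬IsUnit d := by
      intro h
      obtain ⟨d', hd'⟩ := isUnit_iff_exists_inv.mp h
      refine hnoinv ⟨(d' : R), d'.2, ?_⟩
      have := congrArg (Subtype.val) hd'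
      exact this
    obtain ⟨p, q, hp, hpq⟩ := exists_prime_dvd hd0 hdnu
    letI : Algebra R (FractionRing R) := inferInstance
    refine seedI (F := FractionRing R) D p hp (y * (q : R)) ?_
    have hpq' : ((p : R)) * ((q : R)) = x := by
      have := congrArg (Subtype.val) hpq
      exact this
    calc y * (q : R) * (p : R) = y * ((p : R) * (q : R)) := by ring
      _ = y * x := by rw [hpq']
      _ = 1 := by rw [mul_comm]; exact hxy
  · by_cases halg : ∃ P : Polynomial R, P ≠ 0 ∧ (∀ i, P.coeff i ∈ D) ∧ P.eval x = 0
    · -- x is algebraic over D : produce a prime with inverse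
      obtain ⟨P, hP0, hPD, hPeval⟩ := halg
      have heval₂ : ∀ (q : Polynomial R) (z : R), Polynomial.eval₂ (RingHom.id R) z q = q.eval z :=
        fun q z => rfl
      set a := P.leadingCoeff with ha
      have haD : a ∈ D := hPD _
      have ha0 : a ≠ 0 := Polynomial.leadingCoeff_ne_zero.mpr hP0
      have hev2 : Polynomial.eval₂ (RingHom.id R) x P = 0 := by rw [heval₂]; exact hPeval
      have hintev := Polynomial.integralNormalization_eval₂_eq_zero (RingHom.id R) hev2
        (fun z hz => hz)
      rw [heval₂] at hintev
      have hmonic := Polynomial.monic_integralNormalization hP0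
      have hcoeffs : ∀ i, (Polynomial.integralNormalization P).coeff i ∈ D := by
        intro i
        rw [Polynomial.integralNormalization_coeff]
        split
        · exact D.one_mem
        · exact D.mul_mem (hPD i) (D.pow_mem haD _)
      have hax : a * x ∈ D := hic _ ⟨_, hmonic, hcoeffs, hintev⟩
      set e : ↥D := ⟨a * x, hax⟩ with he
      set da : ↥D := ⟨a, haD⟩ with hda
      have hda0 : da ≠ 0 := fun h => ha0 (congrArg Subtype.val h)
      set I : Ideal ↥D := Ideal.span {e, da} with hI
      haveI hprinc : I.IsPrincipal := IsPrincipalIdealRing.principal I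
      set g := Submodule.IsPrincipal.generator I with hg
      have hspan : Ideal.span {g} = I := Ideal.span_singleton_generator I
      have hge : g ∣ e := by
        rw [← Ideal.mem_span_singleton, hspan]
        exact Ideal.subset_span (by simp)
      have hgda : g ∣ da := by
        rw [← Ideal.mem_span_singleton, hspan]
        exact Ideal.subset_span (by simp)
      obtain ⟨e', he'⟩ := hge
      obtain ⟨d', hd'⟩ := hgda
      have hgmem : g ∈ I := hspan ▸ Ideal.subset_span (by simp)
      obtain ⟨α, β, hαβ⟩ := Ideal.mem_span_pair.mp (hI ▸ hgmem)
      have hg0 : g ≠ 0 := fun h => hda0 (by rw [hd', h, zero_mul])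
      have hcoe : (da : R) * x = (e : R) := rfl
      have hcancel : (d' : R) * x = (e' : R) := by
        have h1 : (g : R) * ((d' : R) * x) = (g : R) * (e' : R) := by
          have hda' : (da : R) = (g : R) * (d' : R) := congrArg Subtype.val hd'
          have he'' : (e : R) = (g : R) * (e' : R) := congrArg Subtype.val he'
          rw [← mul_assoc, ← hda', hcoe, he'']
        exact mul_left_cancel₀ (hcoe_ne g hg0) h1
      have hbezout : α * e' + β * d' = 1 := by
        have h1 : α * e + β * da = g * (α * e' + β * d') := by
          rw [he', hd']
          ring
        have h2 : g * (α * e' + β * d') = g * 1 := by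
          rw [mul_one, ← h1, hαβ]
        exact mul_left_cancel₀ hg0 h2
      have hd'0 : d' ≠ 0 := fun h => hda0 (by rw [hd', h, mul_zero])
      have hd'nu : ¬IsUnit d' := by
        intro hu'
        obtain ⟨d'', hd''⟩ := isUnit_iff_exists_inv.mp hu'
        apply hxD
        have hx' : x = ((e' * d'' : ↥D) : R) := by
          have hcoe2 : ((e' * d'' : ↥D) : R) = (e' : R) * (d'' : R) := rfl
          have hdd : (d' : R) * (d'' : R) = 1 := congrArg Subtype.val hd''
          rw [hcoe2, ← hcancel]
          calc x = x * ((d' : R) * (d'' : R)) := by rw [hdd, mul_one]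
            _ = (d' : R) * x * (d'' : R) := by ring
        rw [hx']
        exact (e' * d'').2
      obtain ⟨p, q, hp, hpq⟩ := exists_prime_dvd hd'0 hd'nu
      set ζ : R := (α : R) * x + (β : R) with hζ
      have hζd' : ζ * (d' : R) = 1 := by
        have hcoe3 : ((α * e' + β * d' : ↥D) : R) = (α : R) * (e' : R) + (β : R) * (d' : R) := rfl
        calc ζ * (d' : R) = (α : R) * ((d' : R) * x) + (β : R) * (d' : R) := by rw [hζ]; ring
          _ = (α : R) * (e' : R) + (β : R) * (d' : R) := by rw [hcancel]
          _ = ((α * e' + β * d' : ↥D) : R) := hcoe3.symm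
          _ = 1 := by rw [hbezout]; rfl
      refine seedI (F := FractionRing R) D p hp (ζ * (q : R)) ?_
      have hpq' : ((p : R)) * ((q : R)) = (d' : R) := congrArg Subtype.val hpq
      calc ζ * (q : R) * (p : R) = ζ * ((p : R) * (q : R)) := by ring
        _ = ζ * (d' : R) := by rw [hpq']
        _ = 1 := hζd'
    · exact seedII (F := FractionRing R) D x y hxy halg

end SubmaxProof

theorem stmt7 {R : Type*} [CommRing R] [IsDomain R] (D : Subring R)
    [IsDomain D] [IsPrincipalIdealRing D]
    (hic : ∀ x : R, (∃ p : Polynomial R, p.Monic ∧ (∀ i, p.coeff i ∈ D) ∧ p.eval x = 0) → x ∈ D)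
    (hU : ∃ x : R, IsUnit x ∧ ¬ (x ∈ D ∧ ∃ y ∈ D, x * y = 1)) :
    Submaximal R := by
  obtain ⟨S, h1, h2⟩ := SubmaxProof.mainThm D hic hU
  exact ⟨S, h1, h2⟩
end
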